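/- arXiv:1701.07639 — 5 statements merged into one kernel-verified Lean document; each statement's English description precedes it below -/
import Mathlib

section
/- Let t ≥ 2 be an even integer and let ℓ ≥ 3 be an odd integer. Then there exist real constants c, C > 0 and an integer d₀ ≥ 1 such that for every integer d ≥ d₀: (a) every C_ℓ-free simple graph G with Δ(G) ≤ d satisfies χ_t(G) ≤ C · d^t, and (b) there exists a C_ℓ-free simple graph G with Δ(G) ≤ d and χ_t(G) ≥ c · d^t. (That is, the supremum of the distance-t chromatic number over C_ℓ-free graphs of maximum degree at most d is Θ(d^t) as d → ∞.) -/
/-- The `t`-th power of a simple graph `G`: two distinct vertices are adjacent iff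
there is a path with at most `t` edges between them in `G`. -/
def SimpleGraph.power {V : Type*} (G : SimpleGraph V) (t : ℕ) : SimpleGraph V where
  Adj u v := u ≠ v ∧ ∃ p : G.Walk u v, p.IsPath ∧ p.length ≤ t
  symm := by
    constructor
    rintro u v ⟨h, p, hp, hl⟩
    exact ⟨h.symm, p.reverse, hp.reverse, by simpa using hl⟩
  loopless := by constructor; rintro v ⟨h, -⟩; exact h rfl

/-- The distance-`t` chromatic number `χ_t(G)`. -/
noncomputable def distChromNum {V : Type*} (G : SimpleGraph V) (t : ℕ) : ℕ∞ :=
  (G.power t).chromaticNumber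

/-- The distance-`t` chromatic index `χ'_t(G)`. -/
noncomputable def distChromIndex {V : Type*} (G : SimpleGraph V) (t : ℕ) : ℕ∞ :=
  ((G.lineGraph).power t).chromaticNumber

/-- `G` contains no cycle of length `ℓ` as a subgraph. -/
def CycleFree {V : Type*} (G : SimpleGraph V) (ℓ : ℕ) : Prop :=
  ∀ (v : V) (p : G.Walk v v), p.IsCycle → p.length ≠ ℓ

/-- `G` is bipartite: the vertex set can be partitioned into two independent sets. -/
def BipartiteGraph {V : Type*} (G : SimpleGraph V) : Prop :=
  ∃ s : Set V, ∀ u v : V, G.Adj u v → (u ∈ s ↔ v ∉ s)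

open SimpleGraph

/-! ### Auxiliary results: greedy colouring -/

/-- Greedy colouring: a finite graph with all degrees at most `D` is `(D+1)`-colourable. -/
theorem aux_colorable_of_ncard_neighbor_le {V : Type*} [Fintype V] (H : SimpleGraph V) (D : ℕ)
    (hD : ∀ v, (H.neighborSet v).ncard ≤ D) : H.Colorable (D + 1) := by
  classical
  have key : ∀ s : Finset V, ∃ f : V → Fin (D + 1),
      ∀ u ∈ s, ∀ v ∈ s, H.Adj u v → f u ≠ f v := by
    intro s
    induction s using Finset.induction_on with
    | empty => exact ⟨fun _ => ⟨0, Nat.succ_pos D⟩, by simp⟩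
    | @insert a s ha ih =>
      obtain ⟨f, hf⟩ := ih
      set N : Finset V := s.filter (fun x => H.Adj a x) with hN
      have hNsub : (N : Set V) ⊆ H.neighborSet a := by
        intro x hx
        simp only [hN, Finset.coe_filter, Set.mem_setOf_eq] at hx
        exact hx.2
      have hNcard : N.card ≤ D := by
        have h1 : (N : Set V).ncard ≤ (H.neighborSet a).ncard :=
          Set.ncard_le_ncard hNsub (Set.toFinite _)
        rw [Set.ncard_coe_finset] at h1
        exact h1.trans (hD a)
      have hused : (N.image f).card ≤ D := (Finset.card_image_le).trans hNcard
      have hcompl : ((N.image f)ᶜ : Finset (Fin (D + 1))).Nonempty := by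
        rw [← Finset.card_pos, Finset.card_compl]
        have : Fintype.card (Fin (D + 1)) = D + 1 := Fintype.card_fin _
        omega
      obtain ⟨c, hc⟩ := hcompl
      rw [Finset.mem_compl] at hc
      refine ⟨Function.update f a c, ?_⟩
      intro u hu v hv hadj
      rcases Finset.mem_insert.mp hu with rfl | hu' <;>
        rcases Finset.mem_insert.mp hv with rfl | hv'
      · exact absurd hadj (H.loopless.irrefl _)
      · have hva : v ≠ u := fun h => ha (h ▸ hv')
        rw [Function.update_self, Function.update_of_ne hva]
        intro h
        exact hc (Finset.mem_image.mpr ⟨v, Finset.mem_filter.mpr ⟨hv', hadj⟩, h.symm⟩)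
      · have hua : u ≠ v := fun h => ha (h ▸ hu')
        rw [Function.update_self, Function.update_of_ne hua]
        intro h
        exact hc (Finset.mem_image.mpr ⟨u, Finset.mem_filter.mpr ⟨hu', hadj.symm⟩, h⟩)
      · have h1 : u ≠ a := fun h => ha (h ▸ hu')
        have h2 : v ≠ a := fun h => ha (h ▸ hv')
        rw [Function.update_of_ne h1, Function.update_of_ne h2]
        exact hf u hu' v hv' hadj
  obtain ⟨f, hf⟩ := key Finset.univ
  exact ⟨Coloring.mk f fun {u v} h => hf u (Finset.mem_univ u) v (Finset.mem_univ v) h⟩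

/-! ### Auxiliary results: degrees of graph powers -/

theorem aux_power_ncard_neighbor_le {V : Type*} [Fintype V] (G : SimpleGraph V) (t d : ℕ)
    (hd : 1 ≤ d) (hdeg : ∀ v, (G.neighborSet v).ncard ≤ d) (v : V) :
    ((G.power t).neighborSet v).ncard ≤ (t + 1) * d ^ t := by
  classical
  have hE : ∀ x : V, ∃ e : V → Fin d, ∀ u₁ ∈ G.neighborSet x, ∀ u₂ ∈ G.neighborSet x,
      e u₁ = e u₂ → u₁ = u₂ := by
    intro x
    have hcard : Fintype.card (G.neighborSet x) ≤ Fintype.card (Fin d) := by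
      rw [Fintype.card_fin, ← Nat.card_eq_fintype_card, Nat.card_coe_set_eq]
      exact hdeg x
    obtain ⟨e⟩ := Function.Embedding.nonempty_of_card_le hcard
    refine ⟨fun u => if h : u ∈ G.neighborSet x then e ⟨u, h⟩ else ⟨0, hd⟩, ?_⟩
    intro u₁ h₁ u₂ h₂ h
    simp only [dif_pos h₁, dif_pos h₂] at h
    exact Subtype.mk_eq_mk.mp (e.injective h)
  choose E hEinj using hE
  have hP : ∀ u : ((G.power t).neighborSet v), ∃ p : G.Walk v u, p.length ≤ t := by
    rintro ⟨u, hu⟩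
    obtain ⟨-, p, -, hl⟩ := hu
    exact ⟨p, hl⟩
  choose P hP using hP
  set F : ((G.power t).neighborSet v) → Fin (t + 1) × (Fin t → Fin d) :=
    fun u => (⟨(P u).length, by have := hP u; omega⟩,
      fun i => E ((P u).getVert i) ((P u).getVert (i + 1))) with hF
  have hFinj : Function.Injective F := by
    intro u₁ u₂ h
    rw [Prod.ext_iff] at h
    obtain ⟨hlen, hcode⟩ := h
    have hlen' : (P u₁).length = (P u₂).length := by
      simpa [hF] using congrArg Fin.val hlen
    have hvert : ∀ i, i ≤ (P u₁).length → (P u₁).getVert i = (P u₂).getVert i := by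
      intro i
      induction i with
      | zero => intro _; simp [Walk.getVert_zero]
      | succ i ih =>
        intro hi
        have hi' : i < (P u₁).length := by omega
        have hbase := ih (by omega)
        have hc := congrFun hcode ⟨i, by have := hP u₁; omega⟩
        simp only [hF] at hc
        rw [← hbase] at hc
        exact hEinj ((P u₁).getVert i) _
          ((P u₁).adj_getVert_succ hi') _
          (hbase ▸ (P u₂).adj_getVert_succ (by omega)) hc
    have hfin : ((P u₁).getVert (P u₁).length) = ((P u₂).getVert (P u₂).length) := by
      rw [← hlen']; exact hvert _ le_rfl
    rw [Walk.getVert_length, Walk.getVert_length] at hfin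
    exact Subtype.ext hfin
  have h1 : ((G.power t).neighborSet v).ncard = Nat.card ((G.power t).neighborSet v) :=
    (Nat.card_coe_set_eq _).symm
  rw [h1]
  calc Nat.card ((G.power t).neighborSet v)
      ≤ Nat.card (Fin (t + 1) × (Fin t → Fin d)) := Nat.card_le_card_of_injective F hFinj
    _ = (t + 1) * d ^ t := by
        simp [Nat.card_eq_fintype_card, Fintype.card_fun]

/-! ### Auxiliary results: the bipartite shift graph -/

def shiftW (t k : ℕ) (w : Fin t → Fin k) (c : Fin k) : Fin t → Fin k :=
  fun j => if h : (j : ℕ) + 1 < t then w ⟨(j : ℕ) + 1, h⟩ else c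

def BGraph (t k : ℕ) : SimpleGraph ((Fin t → Fin k) × Fin 2) where
  Adj x y := x.2 ≠ y.2 ∧ ∃ c, y.1 = shiftW t k x.1 c ∨ x.1 = shiftW t k y.1 c
  symm := by
    constructor
    rintro x y ⟨h, c, hc⟩
    exact ⟨h.symm, c, hc.symm⟩
  loopless := by constructor; rintro x ⟨h, -⟩; exact h rfl

lemma BGraph_walk_even {t k : ℕ} {x y : (Fin t → Fin k) × Fin 2}
    (p : (BGraph t k).Walk x y) : (p.length + (x.2 : ℕ) + (y.2 : ℕ)) % 2 = 0 := by
  induction p with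
  | nil => simp only [Walk.length_nil]; omega
  | @cons a b c hab p ih =>
    have hne : (a.2 : ℕ) ≠ (b.2 : ℕ) := fun h => hab.1 (Fin.ext h)
    have h1 := a.2.isLt
    have h2 := b.2.isLt
    simp only [SimpleGraph.Walk.length_cons]
    omega

lemma BGraph_cycleFree (t k ℓ : ℕ) (hℓ : Odd ℓ) : CycleFree (BGraph t k) ℓ := by
  intro v p _ hlen
  have := BGraph_walk_even p
  obtain ⟨m, hm⟩ := hℓ
  omega

lemma shiftW_eval {t k : ℕ} (x y : Fin t → Fin k) (c : Fin k) (h : x = shiftW t k y c)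
    (j : Fin t) (hj : 0 < (j : ℕ)) :
    y j = x ⟨(j : ℕ) - 1, Nat.lt_of_le_of_lt (Nat.sub_le _ _) j.isLt⟩ := by
  have hjt : (j : ℕ) - 1 + 1 < t := by have := j.isLt; omega
  have e1 := congrFun h ⟨(j : ℕ) - 1, Nat.lt_of_le_of_lt (Nat.sub_le _ _) j.isLt⟩
  rw [show shiftW t k y c ⟨(j : ℕ) - 1, Nat.lt_of_le_of_lt (Nat.sub_le _ _) j.isLt⟩
      = y ⟨(j : ℕ) - 1 + 1, hjt⟩ from dif_pos hjt] at e1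
  have hjj : (⟨(j : ℕ) - 1 + 1, hjt⟩ : Fin t) = j :=
    Fin.ext (show (j : ℕ) - 1 + 1 = (j : ℕ) by omega)
  rw [hjj] at e1
  exact e1.symm

lemma BGraph_deg (t k : ℕ) (ht : 1 ≤ t) (x : (Fin t → Fin k) × Fin 2) :
    ((BGraph t k).neighborSet x).ncard ≤ 2 * k := by
  classical
  set F : ((BGraph t k).neighborSet x) → Fin k ⊕ Fin k := fun a =>
    if h : ∃ c, a.1.1 = shiftW t k x.1 c then Sum.inl h.choose
    else Sum.inr (a.1.1 ⟨0, by omega⟩) with hF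
  have hFinj : Function.Injective F := by
    intro a b h
    have hy : (BGraph t k).Adj x a.1 := a.2
    have hz : (BGraph t k).Adj x b.1 := b.2
    have h2 : a.1.2 = b.1.2 := by
      have := a.1.2.isLt; have := b.1.2.isLt; have := x.2.isLt
      have e1 : (a.1.2 : ℕ) ≠ (x.2 : ℕ) := fun hh => hy.1 (Fin.ext hh.symm)
      have e2 : (b.1.2 : ℕ) ≠ (x.2 : ℕ) := fun hh => hz.1 (Fin.ext hh.symm)
      exact Fin.ext (by omega)
    simp only [hF] at h
    by_cases hy' : ∃ c, a.1.1 = shiftW t k x.1 c <;>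
      by_cases hz' : ∃ c, b.1.1 = shiftW t k x.1 c
    · rw [dif_pos hy', dif_pos hz'] at h
      have hcc := Sum.inl.inj h
      refine Subtype.ext (Prod.ext ?_ h2)
      rw [hy'.choose_spec, hz'.choose_spec, hcc]
    · rw [dif_pos hy', dif_neg hz'] at h
      exact absurd h (by simp)
    · rw [dif_neg hy', dif_pos hz'] at h
      exact absurd h (by simp)
    · rw [dif_neg hy', dif_neg hz'] at h
      obtain ⟨c₁, hc₁⟩ := hy.2
      obtain ⟨c₂, hc₂⟩ := hz.2
      have hy1 : x.1 = shiftW t k a.1.1 c₁ := by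
        rcases hc₁ with h' | h'
        · exact absurd ⟨c₁, h'⟩ hy'
        · exact h'
      have hz1 : x.1 = shiftW t k b.1.1 c₂ := by
        rcases hc₂ with h' | h'
        · exact absurd ⟨c₂, h'⟩ hz'
        · exact h'
      have h0 : a.1.1 ⟨0, by omega⟩ = b.1.1 ⟨0, by omega⟩ := Sum.inr.inj h
      have h1 : a.1.1 = b.1.1 := by
        funext j
        rcases Nat.eq_zero_or_pos (j : ℕ) with hj | hj
        · have hj0 : j = ⟨0, by omega⟩ := Fin.ext hj
          rw [hj0]; exact h0
        · have e1 := shiftW_eval x.1 a.1.1 c₁ hy1 j hj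
          have e2 := shiftW_eval x.1 b.1.1 c₂ hz1 j hj
          rw [e1, e2]
      exact Subtype.ext (Prod.ext h1 h2)
  have h1 : ((BGraph t k).neighborSet x).ncard = Nat.card ((BGraph t k).neighborSet x) :=
    (Nat.card_coe_set_eq _).symm
  rw [h1]
  calc Nat.card ((BGraph t k).neighborSet x)
      ≤ Nat.card (Fin k ⊕ Fin k) := Nat.card_le_card_of_injective F hFinj
    _ = 2 * k := by simp [Nat.card_eq_fintype_card]; omega

lemma aux_walk_of_chain {V : Type*} (B : SimpleGraph V) :
    ∀ (n : ℕ) (f : ℕ → V), (∀ i < n, B.Adj (f i) (f (i + 1))) →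
      ∃ p : B.Walk (f 0) (f n), p.length = n := by
  intro n
  induction n with
  | zero => intro f _; exact ⟨.nil, rfl⟩
  | succ n ih =>
    intro f h
    obtain ⟨p, hp⟩ := ih f (fun i hi => h i (by omega))
    exact ⟨p.concat (h n (by omega)), by simp [Walk.length_concat, hp]⟩

lemma BGraph_clique_adj (t k : ℕ) (ht : 2 ≤ t) (htEven : Even t)
    (w w' : Fin t → Fin k) (hne : w ≠ w') :
    ((BGraph t k).power t).Adj (w, (0 : Fin 2)) (w', (0 : Fin 2)) := by
  refine ⟨by simp [hne], ?_⟩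
  set f : ℕ → (Fin t → Fin k) × Fin 2 := fun i =>
    (fun j : Fin t => if h : (j : ℕ) + i < t then w ⟨(j : ℕ) + i, h⟩
      else w' ⟨((j : ℕ) + i - t) % t, Nat.mod_lt _ (by omega)⟩,
     (⟨i % 2, by omega⟩ : Fin 2)) with hf
  have h0 : f 0 = (w, (0 : Fin 2)) := by
    refine Prod.ext ?_ (Fin.ext (show 0 % 2 = 0 by omega))
    funext j
    simp only [hf]
    rw [dif_pos (show (j : ℕ) + 0 < t by have := j.isLt; omega)]
    exact congrArg w (Fin.ext (show (j : ℕ) + 0 = (j : ℕ) by omega))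
  have hT : f t = (w', (0 : Fin 2)) := by
    obtain ⟨m, hm⟩ := htEven
    refine Prod.ext ?_ (Fin.ext (show t % 2 = 0 by omega))
    funext j
    simp only [hf]
    rw [dif_neg (show ¬ ((j : ℕ) + t < t) by omega)]
    refine congrArg w' (Fin.ext ?_)
    show ((j : ℕ) + t - t) % t = (j : ℕ)
    have hjl := j.isLt
    rw [show (j : ℕ) + t - t = (j : ℕ) by omega, Nat.mod_eq_of_lt hjl]
  have hadj : ∀ i < t, (BGraph t k).Adj (f i) (f (i + 1)) := by
    intro i hi
    constructor
    · intro hcc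
      have hval : ((f i).2 : ℕ) = ((f (i + 1)).2 : ℕ) := by rw [hcc]
      simp only [hf] at hval
      omega
    · refine ⟨w' ⟨i, hi⟩, Or.inl ?_⟩
      funext j
      have hjl := j.isLt
      simp only [hf, shiftW]
      by_cases h2 : (j : ℕ) + 1 < t
      · rw [dif_pos h2]
        by_cases h3 : (j : ℕ) + 1 + i < t
        · rw [dif_pos (show ((⟨(j : ℕ) + 1, h2⟩ : Fin t) : ℕ) + i < t from h3),
            dif_pos (show (j : ℕ) + (i + 1) < t by omega)]
          exact congrArg w (Fin.ext (show (j : ℕ) + (i + 1) = (j : ℕ) + 1 + i by omega))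
        · rw [dif_neg (show ¬ (((⟨(j : ℕ) + 1, h2⟩ : Fin t) : ℕ) + i < t) from h3),
            dif_neg (show ¬ ((j : ℕ) + (i + 1) < t) by omega)]
          refine congrArg w' (Fin.ext ?_)
          show ((j : ℕ) + (i + 1) - t) % t = ((j : ℕ) + 1 + i - t) % t
          rw [show (j : ℕ) + (i + 1) - t = (j : ℕ) + 1 + i - t by omega]
      · rw [dif_neg h2, dif_neg (show ¬ ((j : ℕ) + (i + 1) < t) by omega)]
        refine congrArg w' (Fin.ext ?_)
        show ((j : ℕ) + (i + 1) - t) % t = i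
        rw [show (j : ℕ) + (i + 1) - t = i by omega, Nat.mod_eq_of_lt hi]
  obtain ⟨p, hp⟩ := aux_walk_of_chain (BGraph t k) t f hadj
  have hp' : (p.copy h0 hT).length ≤ t := by rw [Walk.length_copy, hp]
  exact ⟨(p.copy h0 hT).bypass, Walk.bypass_isPath _, (Walk.length_bypass_le _).trans hp'⟩

/-- Proposition 3(1): for `t ≥ 2` even and `ℓ ≥ 3` odd, the supremum of the distance-`t`
chromatic number over `C_ℓ`-free graphs of maximum degree at most `d` is `Θ(d^t)`. -/
theorem distance_chromatic_number_odd_cycle_free_no_reduction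
    (t : ℕ) (ht : 2 ≤ t) (htEven : Even t) (ℓ : ℕ) (hℓ : 3 ≤ ℓ) (hℓOdd : Odd ℓ) :
    ∃ (c C : ℝ) (d₀ : ℕ), 0 < c ∧ 0 < C ∧ 1 ≤ d₀ ∧
      ∀ d : ℕ, d₀ ≤ d →
        ((∀ (V : Type) (_ : Fintype V) (G : SimpleGraph V),
            CycleFree G ℓ → (∀ v : V, (G.neighborSet v).ncard ≤ d) →
            ((distChromNum G t).toNat : ℝ) ≤ C * (d : ℝ) ^ t) ∧
         (∃ (V : Type) (_ : Fintype V) (G : SimpleGraph V),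
            CycleFree G ℓ ∧ (∀ v : V, (G.neighborSet v).ncard ≤ d) ∧
            c * (d : ℝ) ^ t ≤ ((distChromNum G t).toNat : ℝ))) := by
  refine ⟨(4 : ℝ)⁻¹ ^ t, (t : ℝ) + 2, 2, by positivity, by positivity, by norm_num, ?_⟩
  intro d hd
  have hd1R : (1 : ℝ) ≤ (d : ℝ) := by exact_mod_cast (by omega : 1 ≤ d)
  have hdt1 : (1 : ℝ) ≤ (d : ℝ) ^ t := one_le_pow₀ hd1R
  constructor
  · -- upper bound
    intro V _ G _ hdeg
    have hcol : (G.power t).Colorable ((t + 1) * d ^ t + 1) :=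
      aux_colorable_of_ncard_neighbor_le _ _
        (aux_power_ncard_neighbor_le G t d (by omega) hdeg)
    have hle : (distChromNum G t) ≤ (((t + 1) * d ^ t + 1 : ℕ) : ℕ∞) :=
      hcol.chromaticNumber_le
    have hne : (distChromNum G t) ≠ ⊤ :=
      ne_top_of_le_ne_top (ENat.coe_ne_top _) hle
    have hnat : (distChromNum G t).toNat ≤ (t + 1) * d ^ t + 1 := by
      rw [← ENat.coe_toNat hne] at hle
      exact_mod_cast hle
    have hone : (1 : ℝ) ≤ (d : ℝ) ^ t := by
      apply one_le_pow₀ hd1R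
    calc ((distChromNum G t).toNat : ℝ)
        ≤ (((t + 1) * d ^ t + 1 : ℕ) : ℝ) := by exact_mod_cast hnat
      _ = ((t : ℝ) + 1) * (d : ℝ) ^ t + 1 := by push_cast; ring
      _ ≤ ((t : ℝ) + 1) * (d : ℝ) ^ t + (d : ℝ) ^ t := by linarith
      _ = ((t : ℝ) + 2) * (d : ℝ) ^ t := by ring
  · -- lower bound
    classical
    set k := d / 2 with hk
    have hk1 : 1 ≤ k := by omega
    refine ⟨(Fin t → Fin k) × Fin 2, inferInstance, BGraph t k,
      BGraph_cycleFree t k ℓ hℓOdd, ?_, ?_⟩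
    · intro v
      exact (BGraph_deg t k (by omega) v).trans (by omega)
    · set S : Finset ((Fin t → Fin k) × Fin 2) :=
        Finset.univ.image (fun w : Fin t → Fin k => (w, (0 : Fin 2))) with hS
      have hSclique : ((BGraph t k).power t).IsClique (S : Set _) := by
        intro u hu v hv hne
        simp only [hS, Finset.coe_image, Finset.coe_univ, Set.image_univ,
          Set.mem_range] at hu hv
        obtain ⟨w, rfl⟩ := hu
        obtain ⟨w', rfl⟩ := hv
        have hww : w ≠ w' := fun h => hne (by rw [h])
        exact BGraph_clique_adj t k ht htEven w w' hww
      have hcard : S.card = k ^ t := by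
        rw [hS, Finset.card_image_of_injective _
          (fun w₁ w₂ h => (Prod.mk.injEq _ _ _ _).mp h |>.1)]
        simp [Fintype.card_fun]
      have hchrom : (S.card : ℕ∞) ≤ ((BGraph t k).power t).chromaticNumber :=
        hSclique.card_le_chromaticNumber
      have hfin : ((BGraph t k).power t).chromaticNumber ≠ ⊤ :=
        SimpleGraph.chromaticNumber_ne_top_iff_exists.mpr
          ⟨_, SimpleGraph.colorable_of_fintype _⟩
      have hfin' : distChromNum (BGraph t k) t ≠ ⊤ := hfin
      have hnat : k ^ t ≤ (distChromNum (BGraph t k) t).toNat := by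
        have h1 : ((k ^ t : ℕ) : ℕ∞) ≤ (distChromNum (BGraph t k) t) := by
          rw [← hcard]; exact hchrom
        rw [← ENat.coe_toNat hfin'] at h1
        exact_mod_cast h1
      have h4k : (d : ℝ) ≤ 4 * (k : ℝ) := by exact_mod_cast (by omega : d ≤ 4 * k)
      have hstep : (4 : ℝ)⁻¹ ^ t * (d : ℝ) ^ t ≤ (k : ℝ) ^ t := by
        rw [← mul_pow]
        refine pow_le_pow_left₀ (by positivity) ?_ t
        linarith
      calc (4 : ℝ)⁻¹ ^ t * (d : ℝ) ^ t ≤ (k : ℝ) ^ t := hstep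
        _ = ((k ^ t : ℕ) : ℝ) := by push_cast; ring
        _ ≤ ((distChromNum (BGraph t k) t).toNat : ℝ) := by exact_mod_cast hnat
end

section
/- Let t ≥ 2 be an integer and let ℓ ≥ 3 be an odd integer. Then there exist real constants c, C > 0 and an integer d₀ ≥ 1 such that for every integer d ≥ d₀: (a) every C_ℓ-free simple graph G with Δ(G) ≤ d satisfies χ'_t(G) ≤ C · d^t, and (b) there exists a C_ℓ-free simple graph G with Δ(G) ≤ d and χ'_t(G) ≥ c · d^t. (That is, the supremum of the distance-t chromatic index over C_ℓ-free graphs of maximum degree at most d is Θ(d^t) as d → ∞.) -/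
namespace ThmAux

open SimpleGraph

/-- parity of walks under a `ZMod 2` potential. -/
lemma walk_parity {V : Type*} {G : SimpleGraph V} (f : V → ZMod 2)
    (hf : ∀ u v : V, G.Adj u v → f u = f v + 1) :
    ∀ {u v : V} (w : G.Walk u v), f u = f v + (w.length : ZMod 2) := by
  intro u v w
  induction w with
  | nil => simp
  | @cons a b c h p ih =>
      have := hf a b h
      rw [SimpleGraph.Walk.length_cons, this, ih]
      push_cast
      ring

lemma cycleFree_of_parity {V : Type*} {G : SimpleGraph V} (f : V → ZMod 2)
    (hf : ∀ u v : V, G.Adj u v → f u = f v + 1) {ℓ : ℕ} (hodd : Odd ℓ) :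
    CycleFree G ℓ := by
  intro v p _ hlen
  have h := walk_parity f hf p
  have h0 : ((p.length : ZMod 2)) = 0 := by
    have := (left_eq_add).mp h
    exact this
  rw [hlen] at h0
  have hdvd : (2 : ℕ) ∣ ℓ := by
    rwa [ZMod.natCast_eq_zero_iff] at h0
  exact (Nat.not_even_iff_odd.mpr hodd) ((even_iff_two_dvd).mpr hdvd)

lemma clique_le_chromatic {W : Type*} [Finite W] [DecidableEq W] (H : SimpleGraph W) (F : Finset W)
    (hF : H.IsClique (F : Set W)) : F.card ≤ (H.chromaticNumber).toNat := by
  classical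
  by_contra hlt
  push_neg at hlt
  have hc := H.colorable_chromaticNumber_of_fintype
  have hcf := hc.cliqueFree hlt
  exact hcf F ⟨hF, rfl⟩

lemma power_adj_of_walk {W : Type*} {H : SimpleGraph W} {t : ℕ} {u v : W} (hne : u ≠ v)
    (w : H.Walk u v) (hw : w.length ≤ t) : (H.power t).Adj u v := by
  classical
  exact ⟨hne, w.bypass, w.bypass_isPath, w.length_bypass_le.trans hw⟩

lemma lineGraph_walk {V : Type*} {G : SimpleGraph V} :
    ∀ {x y : V} (w : G.Walk x y) (e f : G.edgeSet),
      x ∈ (e : Sym2 V) → y ∈ (f : Sym2 V) →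
      ∃ q : (G.lineGraph).Walk e f, q.length ≤ w.length + 1 := by
  intro x y w
  induction w with
  | nil =>
      intro e f hx hy
      by_cases h : e = f
      · subst h; exact ⟨SimpleGraph.Walk.nil, by simp⟩
      · refine ⟨SimpleGraph.Walk.cons (lineGraph_adj_iff_exists.mpr ⟨h, _, hx, hy⟩)
          SimpleGraph.Walk.nil, by simp⟩
  | @cons a b c h p ih =>
      intro e f hx hy
      have hg : s(a, b) ∈ G.edgeSet := G.mem_edgeSet.mpr h
      set g : G.edgeSet := ⟨s(a, b), hg⟩ with hgdef
      have hbg : b ∈ (g : Sym2 V) := by simp [hgdef]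
      obtain ⟨q, hq⟩ := ih g f hbg hy
      by_cases he : e = g
      · subst he
        exact ⟨q, by simp [SimpleGraph.Walk.length_cons]; omega⟩
      · have hag : a ∈ (g : Sym2 V) := by simp [hgdef]
        refine ⟨SimpleGraph.Walk.cons (lineGraph_adj_iff_exists.mpr ⟨he, a, hx, hag⟩) q, ?_⟩
        simp only [SimpleGraph.Walk.length_cons]
        omega


/-! ### Greedy coloring -/

lemma greedy_aux : ∀ (n : ℕ) (W : Type) [Fintype W] (H : SimpleGraph W) (D : ℕ),
    (∀ v : W, (H.neighborSet v).ncard ≤ D) → Fintype.card W ≤ n → H.Colorable (D + 1) := by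
  intro n
  induction n with
  | zero =>
      intro W _ H D _ hcard
      have : IsEmpty W := by
        rw [← Fintype.card_eq_zero_iff]; omega
      exact ⟨SimpleGraph.Coloring.mk isEmptyElim (fun {v} => isEmptyElim v)⟩
  | succ n ih =>
      intro W _ H D hdeg hcard
      classical
      by_cases hW : IsEmpty W
      · exact ⟨SimpleGraph.Coloring.mk isEmptyElim (fun {v} => isEmptyElim v)⟩
      rw [not_isEmpty_iff] at hW
      obtain ⟨v₀⟩ := hW
      have hdeg' : ∀ x : {w : W // w ≠ v₀},
          ((SimpleGraph.comap Subtype.val H).neighborSet x).ncard ≤ D := by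
        intro x
        have hsub : Subtype.val '' ((SimpleGraph.comap Subtype.val H).neighborSet x)
            ⊆ H.neighborSet x.val := by
          rintro w ⟨y, hy, rfl⟩; exact hy
        calc ((SimpleGraph.comap Subtype.val H).neighborSet x).ncard
            = (Subtype.val '' ((SimpleGraph.comap Subtype.val H).neighborSet x)).ncard :=
              (Set.ncard_image_of_injective _ Subtype.coe_injective).symm
          _ ≤ (H.neighborSet x.val).ncard := Set.ncard_le_ncard hsub (Set.toFinite _)
          _ ≤ D := hdeg _
      have hcard' : Fintype.card {w : W // w ≠ v₀} ≤ n := by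
        have h1 := Fintype.card_subtype_lt (p := fun w => w ≠ v₀) (x := v₀) (by simp)
        have h2 : Fintype.card {x // (fun w => w ≠ v₀) x} = Fintype.card {w : W // w ≠ v₀} :=
          Fintype.card_congr (Equiv.refl _)
        omega
      obtain ⟨C'⟩ := ih {w : W // w ≠ v₀} (SimpleGraph.comap Subtype.val H) D hdeg' hcard'
      -- find a free color for v₀
      set fcol : W → Fin (D + 1) := fun w => if h : w = v₀ then 0 else C' ⟨w, h⟩ with hfcol
      set used : Finset (Fin (D + 1)) := (H.neighborSet v₀).toFinset.image fcol with hused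
      have husedcard : used.card ≤ D := by
        calc used.card ≤ (H.neighborSet v₀).toFinset.card := Finset.card_image_le
          _ = (H.neighborSet v₀).ncard := by
              rw [Set.ncard_eq_toFinset_card']
          _ ≤ D := hdeg _
      have hfree : ∃ c₀ : Fin (D + 1), c₀ ∉ used := by
        by_contra hall
        push_neg at hall
        have : (Finset.univ : Finset (Fin (D + 1))) ⊆ used := fun c _ => hall c
        have := Finset.card_le_card this
        simp only [Finset.card_univ, Fintype.card_fin] at this
        omega
      obtain ⟨c₀, hc₀⟩ := hfree
      refine ⟨SimpleGraph.Coloring.mk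
        (fun w => if h : w = v₀ then c₀ else C' ⟨w, h⟩) ?_⟩
      intro a b hab
      by_cases ha : a = v₀
      · have hb : b ≠ v₀ := by rintro rfl; exact H.irrefl (ha ▸ hab)
        rw [dif_pos ha, dif_neg hb]
        intro hEq
        apply hc₀
        rw [hused]
        refine Finset.mem_image.mpr ⟨b, ?_, ?_⟩
        · rw [Set.mem_toFinset]; exact ha ▸ hab
        · rw [hfcol]; dsimp only; rw [dif_neg hb]; exact hEq.symm
      by_cases hb : b = v₀
      · rw [dif_neg ha, dif_pos hb]
        intro hEq
        apply hc₀
        rw [hused]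
        refine Finset.mem_image.mpr ⟨a, ?_, ?_⟩
        · rw [Set.mem_toFinset]; exact (hb ▸ hab).symm
        · rw [hfcol]; dsimp only; rw [dif_neg ha]; exact hEq
      · rw [dif_neg ha, dif_neg hb]
        exact C'.valid (by exact hab)

lemma greedy {W : Type} [Fintype W] (H : SimpleGraph W) (D : ℕ)
    (hdeg : ∀ v : W, (H.neighborSet v).ncard ≤ D) : H.Colorable (D + 1) :=
  greedy_aux (Fintype.card W) W H D hdeg le_rfl


/-! ### Ball counting -/

def ball {W : Type*} (H : SimpleGraph W) (v : W) (j : ℕ) : Set W :=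
  {w | ∃ q : H.Walk w v, q.length ≤ j}

lemma ball_ncard {W : Type*} [Finite W] (H : SimpleGraph W) (D : ℕ)
    (hdeg : ∀ u : W, (H.neighborSet u).ncard ≤ D) (v : W) :
    ∀ j : ℕ, (ball H v j).ncard ≤ (D + 1) ^ j := by
  classical
  cases nonempty_fintype W
  intro j
  induction j with
  | zero =>
      have hsub : ball H v 0 ⊆ {v} := by
        rintro w ⟨q, hq⟩
        have := SimpleGraph.Walk.eq_of_length_eq_zero (Nat.le_zero.mp hq)
        simp [this]
      calc (ball H v 0).ncard ≤ ({v} : Set W).ncard :=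
            Set.ncard_le_ncard hsub (Set.toFinite _)
        _ = 1 := Set.ncard_singleton v
        _ ≤ (D + 1) ^ 0 := by simp
  | succ j ihj =>
      have hsub : ball H v (j + 1) ⊆ ⋃ u ∈ ball H v j, ({u} ∪ H.neighborSet u) := by
        rintro w ⟨q, hq⟩
        cases q with
        | nil =>
            exact Set.mem_biUnion (⟨SimpleGraph.Walk.nil, by simp⟩ : v ∈ ball H v j)
              (Set.mem_union_left _ rfl)
        | @cons _ u _ h q' =>
            refine Set.mem_biUnion (?_ : u ∈ ball H v j) ?_
            · refine ⟨q', ?_⟩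
              simp only [SimpleGraph.Walk.length_cons] at hq
              omega
            · exact Set.mem_union_right _ h.symm
      have hsub' : (ball H v (j+1)).toFinset ⊆
          (ball H v j).toFinset.biUnion (fun u => ({u} ∪ H.neighborSet u).toFinset) := by
        intro w hw
        rw [Set.mem_toFinset] at hw
        obtain ⟨u, hu, hw'⟩ := Set.mem_iUnion₂.mp (hsub hw)
        exact Finset.mem_biUnion.mpr ⟨u, Set.mem_toFinset.mpr hu, Set.mem_toFinset.mpr hw'⟩
      calc (ball H v (j+1)).ncard = (ball H v (j+1)).toFinset.card :=
            Set.ncard_eq_toFinset_card' _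
        _ ≤ ((ball H v j).toFinset.biUnion (fun u => ({u} ∪ H.neighborSet u).toFinset)).card :=
            Finset.card_le_card hsub'
        _ ≤ ∑ u ∈ (ball H v j).toFinset, ({u} ∪ H.neighborSet u).toFinset.card :=
            Finset.card_biUnion_le
        _ ≤ ∑ _u ∈ (ball H v j).toFinset, (D + 1) := by
            refine Finset.sum_le_sum ?_
            intro u _
            rw [← Set.ncard_eq_toFinset_card']
            calc ({u} ∪ H.neighborSet u).ncard
                ≤ ({u} : Set W).ncard + (H.neighborSet u).ncard :=
                  Set.ncard_union_le _ _
              _ ≤ 1 + D := by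
                  have := hdeg u
                  rw [Set.ncard_singleton]
                  omega
              _ = D + 1 := by omega
        _ = (ball H v j).toFinset.card * (D + 1) := by
            rw [Finset.sum_const, smul_eq_mul]
        _ ≤ (D + 1) ^ j * (D + 1) := by
            have : (ball H v j).toFinset.card ≤ (D+1)^j := by
              rw [← Set.ncard_eq_toFinset_card']; exact ihj
            exact Nat.mul_le_mul_right _ this
        _ = (D + 1) ^ (j + 1) := (pow_succ (D+1) j).symm

/-- degree bound for powers -/
lemma power_neighbor_ncard {W : Type*} [Finite W] (H : SimpleGraph W) (D t : ℕ)
    (hdeg : ∀ u : W, (H.neighborSet u).ncard ≤ D) (v : W) :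
    ((H.power t).neighborSet v).ncard ≤ (D + 1) ^ t - 1 := by
  classical
  have hsub : (H.power t).neighborSet v ⊆ (ball H v t) \ {v} := by
    rintro w ⟨hne, p, _, hp⟩
    refine ⟨⟨p.reverse, by simpa using hp⟩, ?_⟩
    simp only [Set.mem_singleton_iff]
    exact fun h => hne (h ▸ rfl)
  have hball : v ∈ ball H v t := ⟨SimpleGraph.Walk.nil, by simp⟩
  have h1 : ((ball H v t) \ {v}).ncard + 1 = (ball H v t).ncard :=
    Set.ncard_diff_singleton_add_one hball (Set.toFinite _)
  have h2 := ball_ncard H D hdeg v t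
  have h3 := Set.ncard_le_ncard hsub (Set.toFinite _)
  omega

/-- line graph degree bound -/
lemma lineGraph_neighbor_ncard {V : Type*} [Finite V] (G : SimpleGraph V) (d : ℕ)
    (hdeg : ∀ v : V, (G.neighborSet v).ncard ≤ d) (e : G.edgeSet) :
    ((G.lineGraph).neighborSet e).ncard ≤ 2 * d := by
  classical
  obtain ⟨E, hE⟩ := e
  revert hE
  refine Sym2.inductionOn E ?_
  intro a b hE
  have hab : G.Adj a b := G.mem_edgeSet.mp hE
  set f : G.edgeSet → V ⊕ V := fun g =>
    if h : a ∈ (g : Sym2 V) then Sum.inl (Sym2.Mem.other h)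
    else if h' : b ∈ (g : Sym2 V) then Sum.inr (Sym2.Mem.other h')
    else Sum.inl a with hf
  have hmem : ∀ g ∈ (G.lineGraph).neighborSet ⟨s(a,b), hE⟩,
      a ∈ (g : Sym2 V) ∨ b ∈ (g : Sym2 V) := by
    intro g hg
    obtain ⟨hne, x, hxe, hxg⟩ := lineGraph_adj_iff_exists.mp hg
    rcases Sym2.mem_iff.mp hxe with rfl | rfl
    · exact Or.inl hxg
    · exact Or.inr hxg
  have hmaps : ∀ g ∈ (G.lineGraph).neighborSet ⟨s(a,b), hE⟩,
      f g ∈ (Sum.inl '' (G.neighborSet a)) ∪ (Sum.inr '' (G.neighborSet b) : Set (V ⊕ V)) := by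
    intro g hg
    by_cases h : a ∈ (g : Sym2 V)
    · have hadj : G.Adj a (Sym2.Mem.other h) := by
        rw [← G.mem_edgeSet, Sym2.other_spec h]
        exact g.2
      left
      rw [hf]; simp only [dif_pos h]
      exact ⟨_, hadj, rfl⟩
    · have hb : b ∈ (g : Sym2 V) := (hmem g hg).resolve_left h
      have hadj : G.Adj b (Sym2.Mem.other hb) := by
        rw [← G.mem_edgeSet, Sym2.other_spec hb]
        exact g.2
      right
      rw [hf]; simp only [dif_neg h, dif_pos hb]
      exact ⟨_, hadj, rfl⟩
  have hinj : Set.InjOn f ((G.lineGraph).neighborSet ⟨s(a,b), hE⟩) := by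
    intro g1 hg1 g2 hg2 hEq
    by_cases h1 : a ∈ (g1 : Sym2 V) <;> by_cases h2 : a ∈ (g2 : Sym2 V)
    · rw [hf] at hEq; simp only [dif_pos h1, dif_pos h2, Sum.inl.injEq] at hEq
      apply Subtype.ext
      rw [← Sym2.other_spec h1, ← Sym2.other_spec h2, hEq]
    · have hb2 : b ∈ (g2 : Sym2 V) := (hmem g2 hg2).resolve_left h2
      rw [hf] at hEq; simp only [dif_pos h1, dif_neg h2, dif_pos hb2] at hEq
      exact absurd hEq (by simp)
    · have hb1 : b ∈ (g1 : Sym2 V) := (hmem g1 hg1).resolve_left h1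
      rw [hf] at hEq; simp only [dif_neg h1, dif_pos h2, dif_pos hb1] at hEq
      exact absurd hEq (by simp)
    · have hb1 : b ∈ (g1 : Sym2 V) := (hmem g1 hg1).resolve_left h1
      have hb2 : b ∈ (g2 : Sym2 V) := (hmem g2 hg2).resolve_left h2
      rw [hf] at hEq
      simp only [dif_neg h1, dif_neg h2, dif_pos hb1, dif_pos hb2, Sum.inr.injEq] at hEq
      apply Subtype.ext
      rw [← Sym2.other_spec hb1, ← Sym2.other_spec hb2, hEq]
  calc ((G.lineGraph).neighborSet ⟨s(a,b), hE⟩).ncard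
      ≤ ((Sum.inl '' (G.neighborSet a)) ∪ (Sum.inr '' (G.neighborSet b) : Set (V ⊕ V))).ncard :=
        Set.ncard_le_ncard_of_injOn f hmaps hinj (Set.toFinite _)
    _ ≤ (Sum.inl '' (G.neighborSet a) : Set (V ⊕ V)).ncard
        + (Sum.inr '' (G.neighborSet b) : Set (V ⊕ V)).ncard := Set.ncard_union_le _ _
    _ ≤ 2 * d := by
        rw [Set.ncard_image_of_injective _ Sum.inl_injective,
          Set.ncard_image_of_injective _ Sum.inr_injective]
        have := hdeg a; have := hdeg b
        omega

/-- the full upper bound -/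
lemma upper_dist {V : Type} [Fintype V] (G : SimpleGraph V) (t d : ℕ)
    (hdeg : ∀ v : V, (G.neighborSet v).ncard ≤ d) :
    (distChromIndex G t).toNat ≤ (2*d+1)^t := by
  classical
  have hLdeg : ∀ e : G.edgeSet, ((G.lineGraph).neighborSet e).ncard ≤ 2*d :=
    lineGraph_neighbor_ncard G d hdeg
  have hPdeg : ∀ e : G.edgeSet, (((G.lineGraph).power t).neighborSet e).ncard ≤ (2*d+1)^t - 1 :=
    power_neighbor_ncard (G.lineGraph) (2*d) t hLdeg
  haveI : Fintype G.edgeSet := Fintype.ofFinite _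
  have hcol : ((G.lineGraph).power t).Colorable ((2*d+1)^t - 1 + 1) :=
    greedy ((G.lineGraph).power t) ((2*d+1)^t - 1) hPdeg
  have hpos : 1 ≤ (2*d+1)^t := Nat.one_le_pow _ _ (by omega)
  rw [Nat.sub_add_cancel hpos] at hcol
  have hle : ((G.lineGraph).power t).chromaticNumber ≤ ((2*d+1)^t : ℕ) :=
    SimpleGraph.chromaticNumber_le_iff_colorable.mpr hcol
  have h2 := ENat.toNat_le_toNat hle (ENat.coe_ne_top _)
  rw [ENat.toNat_coe] at h2
  simpa [distChromIndex] using h2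


/-! ### The product graph -/

def piGraph {U : Type*} (m : ℕ) (H : SimpleGraph U) : SimpleGraph (Fin m → U) where
  Adj x y := ∃ i, H.Adj (x i) (y i) ∧ ∀ j, j ≠ i → x j = y j
  symm := by
    constructor
    rintro x y ⟨i, h, hj⟩
    exact ⟨i, h.symm, fun j hj' => (hj j hj').symm⟩
  loopless := by
    constructor
    rintro x ⟨i, h, -⟩
    exact H.loopless.irrefl _ h

lemma piGraph_walk_update {U : Type*} {m : ℕ} {H : SimpleGraph U} {a b : U}
    (w : H.Walk a b) :
    ∀ (x : Fin m → U) (i : Fin m), x i = a →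
      ∃ q : (piGraph m H).Walk x (Function.update x i b), q.length = w.length := by
  induction w with
  | nil =>
      intro x i h
      subst h
      exact ⟨SimpleGraph.Walk.nil.copy rfl (Function.update_eq_self i x).symm, by simp⟩
  | @cons a a' b hadj w' ih =>
      intro x i h
      have adj1 : (piGraph m H).Adj x (Function.update x i a') := by
        refine ⟨i, ?_, ?_⟩
        · rw [h, Function.update_self]
          exact hadj
        · intro j hj
          rw [Function.update_of_ne hj]
      obtain ⟨q, hq⟩ := ih (Function.update x i a') i (Function.update_self i a' x)
      have hupd : Function.update (Function.update x i a') i b = Function.update x i b := by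
        simp
      refine ⟨(SimpleGraph.Walk.cons adj1 q).copy rfl hupd, ?_⟩
      simp [hq]

lemma piGraph_walk {U : Type*} {m : ℕ} {H : SimpleGraph U} (x y : Fin m → U) (c : Fin m → ℕ)
    (h : ∀ i, ∃ w : H.Walk (x i) (y i), w.length ≤ c i) :
    ∃ q : (piGraph m H).Walk x y, q.length ≤ ∑ i, c i := by
  classical
  suffices aux : ∀ (l : List (Fin m)) (x : Fin m → U),
      (∀ i, ∃ w : H.Walk (x i) (y i), w.length ≤ c i) →
      (∀ j, j ∉ l → x j = y j) →
      ∃ q : (piGraph m H).Walk x y, q.length ≤ (l.map c).sum by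
    obtain ⟨q, hq⟩ := aux (List.finRange m) x h
      (fun j hj => absurd (List.mem_finRange j) hj)
    refine ⟨q, ?_⟩
    rwa [Fin.sum_univ_def]
  intro l
  induction l with
  | nil =>
      intro x hx hall
      have hxy : x = y := funext fun j => hall j List.not_mem_nil
      subst hxy
      exact ⟨SimpleGraph.Walk.nil, by simp⟩
  | cons i l ihl =>
      intro x hx hall
      obtain ⟨w, hw⟩ := hx i
      set x' := Function.update x i (y i) with hx'
      obtain ⟨q1, hq1⟩ := piGraph_walk_update w x i rfl
      have hx'i : x' i = y i := Function.update_self i (y i) x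
      have hx'j : ∀ j, j ≠ i → x' j = x j := fun j hj => Function.update_of_ne hj _ _
      have hnext : ∀ j, ∃ w : H.Walk (x' j) (y j), w.length ≤ c j := by
        intro j
        by_cases hji : j = i
        · subst hji
          exact ⟨SimpleGraph.Walk.nil.copy hx'i.symm rfl, by simp⟩
        · rw [hx'j j hji]
          exact hx j
      have hall' : ∀ j, j ∉ l → x' j = y j := by
        intro j hj
        by_cases hji : j = i
        · subst hji; exact hx'i
        · rw [hx'j j hji]
          exact hall j (by simp [hji, hj])
      obtain ⟨q2, hq2⟩ := ihl x' hnext hall'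
      refine ⟨q1.append q2, ?_⟩
      rw [SimpleGraph.Walk.length_append, List.map_cons, List.sum_cons, hq1]
      omega

lemma piGraph_neighbor_ncard {U : Type*} [Finite U] {m : ℕ} (H : SimpleGraph U) (D : ℕ)
    (hdeg : ∀ u : U, (H.neighborSet u).ncard ≤ D) (x : Fin m → U) :
    ((piGraph m H).neighborSet x).ncard ≤ m * D := by
  classical
  cases nonempty_fintype U
  have hsub : ((piGraph m H).neighborSet x).toFinset ⊆
      (Finset.univ : Finset (Fin m)).biUnion
        (fun i => ((Function.update x i) '' (H.neighborSet (x i))).toFinset) := by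
    intro y hy
    rw [Set.mem_toFinset] at hy
    obtain ⟨i, hadj, hj⟩ := hy
    refine Finset.mem_biUnion.mpr ⟨i, Finset.mem_univ _, ?_⟩
    rw [Set.mem_toFinset]
    refine ⟨y i, hadj, ?_⟩
    funext j
    by_cases hji : j = i
    · subst hji; rw [Function.update_self]
    · rw [Function.update_of_ne hji]
      exact hj j hji
  calc ((piGraph m H).neighborSet x).ncard
      = ((piGraph m H).neighborSet x).toFinset.card := Set.ncard_eq_toFinset_card' _
    _ ≤ ((Finset.univ : Finset (Fin m)).biUnion
        (fun i => ((Function.update x i) '' (H.neighborSet (x i))).toFinset)).card :=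
        Finset.card_le_card hsub
    _ ≤ ∑ i : Fin m, ((Function.update x i) '' (H.neighborSet (x i))).toFinset.card :=
        Finset.card_biUnion_le
    _ ≤ ∑ _i : Fin m, D := by
        refine Finset.sum_le_sum ?_
        intro i _
        rw [← Set.ncard_eq_toFinset_card']
        calc ((Function.update x i) '' (H.neighborSet (x i))).ncard
            ≤ (H.neighborSet (x i)).ncard := Set.ncard_image_le (Set.toFinite _)
          _ ≤ D := hdeg _
    _ = m * D := by simp [Finset.sum_const, mul_comm]

lemma piGraph_parity {U : Type*} {m : ℕ} {H : SimpleGraph U} (f : U → ZMod 2)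
    (hf : ∀ u v : U, H.Adj u v → f u = f v + 1) :
    ∀ x y : Fin m → U, (piGraph m H).Adj x y →
      (∑ i, f (x i)) = (∑ i, f (y i)) + 1 := by
  rintro x y ⟨i, hadj, hj⟩
  classical
  have h1 : ∑ j ∈ Finset.univ.erase i, f (x j) = ∑ j ∈ Finset.univ.erase i, f (y j) := by
    refine Finset.sum_congr rfl ?_
    intro j hj'
    rw [hj j (Finset.ne_of_mem_erase hj')]
  rw [← Finset.add_sum_erase _ _ (Finset.mem_univ i), ← Finset.add_sum_erase _ _ (Finset.mem_univ i),
    h1, hf _ _ hadj]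
  ring


/-! ### The base graph: affine plane over `ZMod p` plus a complete bipartite part -/

section Base

variable (p : ℕ) [Fact (Nat.Prime p)]

abbrev Pt := ZMod p × ZMod p
abbrev Ln := (ZMod p × ZMod p) ⊕ ZMod p
abbrev UU := (Pt p ⊕ Ln p) ⊕ (ZMod p ⊕ ZMod p)

def onLine : Pt p → Ln p → Prop
  | P, Sum.inl mc => P.2 = mc.1 * P.1 + mc.2
  | P, Sum.inr a => P.1 = a

def baseAdj : UU p → UU p → Prop
  | Sum.inl (Sum.inl P), Sum.inl (Sum.inr l) => onLine p P l
  | Sum.inl (Sum.inr l), Sum.inl (Sum.inl P) => onLine p P l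
  | Sum.inr (Sum.inl _), Sum.inr (Sum.inr _) => True
  | Sum.inr (Sum.inr _), Sum.inr (Sum.inl _) => True
  | _, _ => False

def baseGraph : SimpleGraph (UU p) where
  Adj := baseAdj p
  symm := by
    constructor
    rintro (⟨P | l⟩ | ⟨i | j⟩) (⟨P' | l'⟩ | ⟨i' | j'⟩) h <;>
      simp_all [baseAdj]
  loopless := by
    constructor
    rintro (⟨P | l⟩ | ⟨i | j⟩) h <;> simp_all [baseAdj]

lemma baseAdj_pt_ln {P : Pt p} {l : Ln p} (h : onLine p P l) :
    (baseGraph p).Adj (Sum.inl (Sum.inl P)) (Sum.inl (Sum.inr l)) := h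

lemma baseAdj_K {i j : ZMod p} :
    (baseGraph p).Adj (Sum.inr (Sum.inl i)) (Sum.inr (Sum.inr j)) := trivial

/-- any two points lie on a common line -/
lemma exists_common_line (P Q : Pt p) : ∃ l : Ln p, onLine p P l ∧ onLine p Q l := by
  rcases eq_or_ne P.1 Q.1 with h | h
  · exact ⟨Sum.inr P.1, rfl, h.symm⟩
  · refine ⟨Sum.inl ((Q.2 - P.2) / (Q.1 - P.1), P.2 - (Q.2 - P.2) / (Q.1 - P.1) * P.1), ?_, ?_⟩
    · show P.2 = _ * P.1 + (P.2 - _ * P.1)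
      ring
    · show Q.2 = _ * Q.1 + (P.2 - _ * P.1)
      have hne : Q.1 - P.1 ≠ 0 := sub_ne_zero.mpr (Ne.symm h)
      field_simp
      ring
  
lemma pt_walk (P Q : Pt p) :
    ∃ w : (baseGraph p).Walk (Sum.inl (Sum.inl P)) (Sum.inl (Sum.inl Q)), w.length ≤ 2 := by
  obtain ⟨l, h1, h2⟩ := exists_common_line p P Q
  exact ⟨SimpleGraph.Walk.cons (baseAdj_pt_ln p h1)
    (SimpleGraph.Walk.cons ((baseGraph p).adj_symm (baseAdj_pt_ln p h2)) SimpleGraph.Walk.nil),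
    by simp⟩

lemma K_walk (i j : ZMod p) :
    ∃ w : (baseGraph p).Walk (Sum.inr (Sum.inl i)) (Sum.inr (Sum.inr j)), w.length ≤ 1 :=
  ⟨SimpleGraph.Walk.cons (baseAdj_K p) SimpleGraph.Walk.nil, by simp⟩

/-- parity potential on the base graph -/
def basePar : UU p → ZMod 2
  | Sum.inl (Sum.inl _) => 0
  | Sum.inl (Sum.inr _) => 1
  | Sum.inr (Sum.inl _) => 0
  | Sum.inr (Sum.inr _) => 1

lemma basePar_adj : ∀ u v : UU p, (baseGraph p).Adj u v → basePar p u = basePar p v + 1 := by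
  rintro (⟨P | l⟩ | ⟨i | j⟩) (⟨P' | l'⟩ | ⟨i' | j'⟩) h <;>
    simp_all [baseGraph, baseAdj, basePar] <;> decide

/-- degree bound for the base graph -/
lemma baseGraph_neighbor_ncard (u : UU p) :
    ((baseGraph p).neighborSet u).ncard ≤ p + 1 := by
  classical
  have hcard : ∀ (α : Type) [Fintype α] (g : α → UU p),
      ((baseGraph p).neighborSet u) ⊆ Set.range g → Fintype.card α ≤ p + 1 →
      ((baseGraph p).neighborSet u).ncard ≤ p + 1 := by
    intro α _ g hsub hc
    calc ((baseGraph p).neighborSet u).ncard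
        ≤ (Set.range g).ncard := Set.ncard_le_ncard hsub (Set.toFinite _)
      _ = (g '' Set.univ).ncard := by rw [Set.image_univ]
      _ ≤ (Set.univ : Set α).ncard := Set.ncard_image_le (Set.toFinite _)
      _ = Fintype.card α := by rw [Set.ncard_univ, Nat.card_eq_fintype_card]
      _ ≤ p + 1 := hc
  have hp : Fintype.card (ZMod p) = p := ZMod.card p
  obtain (⟨⟨x0, y0⟩ | (⟨m, c⟩ | a)⟩ | ⟨i | j⟩) := u
  · -- point: lines through it
    refine hcard (Option (ZMod p))
      (fun o => match o with
        | some m => Sum.inl (Sum.inr (Sum.inl (m, y0 - m * x0)))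
        | none => Sum.inl (Sum.inr (Sum.inr x0))) ?_ (by simp [hp])
    rintro (⟨P' | (⟨m, c⟩ | a)⟩ | ⟨i | j⟩) hv
    · exact hv.elim
    · refine ⟨some m, ?_⟩
      have hv' : y0 = m * x0 + c := hv
      show Sum.inl (Sum.inr (Sum.inl (m, y0 - m * x0))) = _
      rw [hv']; ring_nf
    · refine ⟨none, ?_⟩
      have hv' : x0 = a := hv
      show Sum.inl (Sum.inr (Sum.inr x0)) = _
      rw [hv']
    · exact hv.elim
    · exact hv.elim
  · -- non-vertical line: points on it
    refine hcard (ZMod p) (fun x => Sum.inl (Sum.inl (x, m * x + c))) ?_ (by rw [hp]; omega)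
    rintro (⟨⟨x, y⟩ | (⟨m', c'⟩ | a)⟩ | ⟨i | j⟩) hv
    · refine ⟨x, ?_⟩
      have hv' : y = m * x + c := hv
      rw [hv']
    · exact hv.elim
    · exact hv.elim
    · exact hv.elim
    · exact hv.elim
  · -- vertical line
    refine hcard (ZMod p) (fun y => Sum.inl (Sum.inl (a, y))) ?_ (by rw [hp]; omega)
    rintro (⟨⟨x, y⟩ | (⟨m', c'⟩ | a')⟩ | ⟨i | j⟩) hv
    · refine ⟨y, ?_⟩
      have hv' : x = a := hv
      rw [hv']
    · exact hv.elim
    · exact hv.elim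
    · exact hv.elim
    · exact hv.elim
  · refine hcard (ZMod p) (fun j => Sum.inr (Sum.inr j)) ?_ (by rw [hp]; omega)
    rintro (⟨P' | l⟩ | ⟨i' | j⟩) hv
    · exact hv.elim
    · exact hv.elim
    · exact hv.elim
    · exact ⟨j, rfl⟩
  · refine hcard (ZMod p) (fun i => Sum.inr (Sum.inl i)) ?_ (by rw [hp]; omega)
    rintro (⟨P' | l⟩ | ⟨i' | j'⟩) hv
    · exact hv.elim
    · exact hv.elim
    · exact ⟨i', rfl⟩
    · exact hv.elim

end Base


/-! ### The lower bound construction -/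

section Construction

variable (p k : ℕ) [Fact (Nat.Prime p)]

abbrev GG := piGraph (k+1) (baseGraph p)

def Xfun (x : Fin k → Pt p) (z : ZMod p ⊕ ZMod p) : Fin (k+1) → UU p :=
  Fin.snoc (fun i => Sum.inl (Sum.inl (x i))) (Sum.inr z)

lemma Xfun_castSucc (x : Fin k → Pt p) (z : ZMod p ⊕ ZMod p) (i : Fin k) :
    Xfun p k x z (Fin.castSucc i) = Sum.inl (Sum.inl (x i)) := by
  simp [Xfun]

lemma Xfun_last (x : Fin k → Pt p) (z : ZMod p ⊕ ZMod p) :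
    Xfun p k x z (Fin.last k) = Sum.inr z := by
  simp [Xfun]

/-- walks between X-type vertices -/
lemma X_walk (x y : Fin k → Pt p) (z z' : ZMod p ⊕ ZMod p) (cz : ℕ)
    (hz : ∃ w : (baseGraph p).Walk (Sum.inr z) (Sum.inr z'), w.length ≤ cz) :
    ∃ q : (GG p k).Walk (Xfun p k x z) (Xfun p k y z'), q.length ≤ 2 * k + cz := by
  classical
  have hyp : ∀ j : Fin (k+1), ∃ w : (baseGraph p).Walk (Xfun p k x z j) (Xfun p k y z' j),
      w.length ≤ (if j = Fin.last k then cz else 2) := by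
    intro j
    by_cases hj : j = Fin.last k
    · subst hj
      rw [if_pos rfl, Xfun_last, Xfun_last]
      exact hz
    · obtain ⟨i, rfl⟩ := Fin.exists_castSucc_eq.mpr hj
      rw [if_neg hj, Xfun_castSucc, Xfun_castSucc]
      exact pt_walk p (x i) (y i)
  obtain ⟨q, hq⟩ := piGraph_walk (H := baseGraph p) (Xfun p k x z) (Xfun p k y z')
    (fun j => if j = Fin.last k then cz else 2) hyp
  refine ⟨q, hq.trans ?_⟩
  have hsum : ∑ j : Fin (k+1), (if j = Fin.last k then cz else 2) = 2 * k + cz := by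
    rw [Fin.sum_univ_castSucc]
    have h1 : ∀ i : Fin k,
        (if Fin.castSucc i = Fin.last k then cz else 2) = 2 := by
      intro i
      rw [if_neg (Fin.castSucc_lt_last i).ne]
    rw [Finset.sum_congr rfl (fun i _ => h1 i), if_pos rfl, Finset.sum_const,
      Finset.card_univ, Fintype.card_fin, smul_eq_mul]
    omega
  rw [hsum]

/-- The "even" edges -/
lemma eEven_adj (x : Fin k → Pt p) (i j : ZMod p) :
    (GG p k).Adj (Xfun p k x (Sum.inl i)) (Xfun p k x (Sum.inr j)) := by
  refine ⟨Fin.last k, ?_, ?_⟩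
  · rw [Xfun_last, Xfun_last]
    exact baseAdj_K p
  · intro j' hj'
    obtain ⟨i', rfl⟩ := Fin.exists_castSucc_eq.mpr hj'
    rw [Xfun_castSucc, Xfun_castSucc]

def eEven (x : Fin k → Pt p) (i j : ZMod p) : (GG p k).edgeSet :=
  ⟨s(Xfun p k x (Sum.inl i), Xfun p k x (Sum.inr j)),
    (GG p k).mem_edgeSet.mpr (eEven_adj p k x i j)⟩

/-- The "odd" edges -/
def lineOf (m : ZMod p) (P : Pt p) : UU p :=
  Sum.inl (Sum.inr (Sum.inl (m, P.2 - m * P.1)))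

def Xodd' (hk : 0 < k) (x : Fin k → Pt p) (m : ZMod p) : Fin (k+1) → UU p :=
  Fin.snoc (Function.update (fun i => Sum.inl (Sum.inl (x i))) ⟨0, hk⟩ (lineOf p m (x ⟨0, hk⟩)))
    (Sum.inr (Sum.inl 0))

lemma eOdd_adj (hk : 0 < k) (x : Fin k → Pt p) (m : ZMod p) :
    (GG p k).Adj (Xfun p k x (Sum.inl 0)) (Xodd' p k hk x m) := by
  classical
  refine ⟨Fin.castSucc ⟨0, hk⟩, ?_, ?_⟩
  · rw [Xfun_castSucc]
    show (baseGraph p).Adj _ ((Fin.snoc _ _ : Fin (k+1) → UU p) (Fin.castSucc ⟨0, hk⟩))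
    rw [Fin.snoc_castSucc, Function.update_self]
    refine baseAdj_pt_ln p ?_
    show (x ⟨0, hk⟩).2 = m * (x ⟨0, hk⟩).1 + ((x ⟨0, hk⟩).2 - m * (x ⟨0, hk⟩).1)
    ring
  · intro j' hj'
    by_cases hl : j' = Fin.last k
    · subst hl
      rw [Xfun_last]
      show _ = (Fin.snoc _ _ : Fin (k+1) → UU p) (Fin.last k)
      rw [Fin.snoc_last]
    · obtain ⟨i', rfl⟩ := Fin.exists_castSucc_eq.mpr hl
      have hne : i' ≠ ⟨0, hk⟩ := by
        intro h; exact hj' (by rw [h])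
      rw [Xfun_castSucc]
      show _ = (Fin.snoc _ _ : Fin (k+1) → UU p) (Fin.castSucc i')
      rw [Fin.snoc_castSucc, Function.update_of_ne hne]

def eOdd (hk : 0 < k) (x : Fin k → Pt p) (m : ZMod p) : (GG p k).edgeSet :=
  ⟨s(Xfun p k x (Sum.inl 0), Xodd' p k hk x m),
    (GG p k).mem_edgeSet.mpr (eOdd_adj p k hk x m)⟩

/-- injectivity of the parametrizations -/
lemma Xfun_inj {x y : Fin k → Pt p} {z z' : ZMod p ⊕ ZMod p}
    (h : Xfun p k x z = Xfun p k y z') : x = y ∧ z = z' := by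
  constructor
  · funext i
    have := congrFun h (Fin.castSucc i)
    rw [Xfun_castSucc, Xfun_castSucc] at this
    exact Sum.inl_injective (Sum.inl_injective this)
  · have := congrFun h (Fin.last k)
    rw [Xfun_last, Xfun_last] at this
    exact Sum.inr_injective this

lemma eEven_inj : Function.Injective
    (fun a : (Fin k → Pt p) × ZMod p × ZMod p => eEven p k a.1 a.2.1 a.2.2) := by
  rintro ⟨x, i, j⟩ ⟨y, i', j'⟩ h
  have h2 := Subtype.ext_iff.mp h
  simp only [eEven] at h2
  rcases Sym2.eq_iff.mp h2 with ⟨h3, h4⟩ | ⟨h3, h4⟩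
  · obtain ⟨hxy, hz⟩ := Xfun_inj p k h3
    obtain ⟨-, hz'⟩ := Xfun_inj p k h4
    subst hxy
    simp only [Prod.mk.injEq]
    exact ⟨trivial, Sum.inl_injective hz, Sum.inr_injective hz'⟩
  · obtain ⟨-, hz⟩ := Xfun_inj p k h3
    exact absurd hz (by simp)

lemma eOdd_inj (hk : 0 < k) : Function.Injective
    (fun a : (Fin k → Pt p) × ZMod p => eOdd p k hk a.1 a.2) := by
  rintro ⟨x, m⟩ ⟨y, m'⟩ h
  have h2 := Subtype.ext_iff.mp h
  simp only [eOdd] at h2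
  have hcross : ∀ (x y : Fin k → Pt p) (m' : ZMod p),
      Xfun p k x (Sum.inl 0) ≠ Xodd' p k hk y m' := by
    intro x y m' hEq
    have := congrFun hEq (Fin.castSucc ⟨0, hk⟩)
    rw [Xfun_castSucc] at this
    rw [show (Xodd' p k hk y m') (Fin.castSucc ⟨0, hk⟩) = lineOf p m' (y ⟨0, hk⟩) by
      show (Fin.snoc _ _ : Fin (k+1) → UU p) (Fin.castSucc ⟨0, hk⟩) = _
      rw [Fin.snoc_castSucc, Function.update_self]] at this
    simp [lineOf] at this
  rcases Sym2.eq_iff.mp h2 with ⟨h3, h4⟩ | ⟨h3, h4⟩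
  · obtain ⟨hxy, -⟩ := Xfun_inj p k h3
    subst hxy
    have h5 := congrFun h4 (Fin.castSucc ⟨0, hk⟩)
    have hval : ∀ m : ZMod p, (Xodd' p k hk x m) (Fin.castSucc ⟨0, hk⟩)
        = lineOf p m (x ⟨0, hk⟩) := by
      intro m
      show (Fin.snoc _ _ : Fin (k+1) → UU p) (Fin.castSucc ⟨0, hk⟩) = _
      rw [Fin.snoc_castSucc, Function.update_self]
    rw [hval, hval] at h5
    simp only [lineOf, Sum.inl.injEq, Sum.inr.injEq, Prod.mk.injEq] at h5
    simp only [Prod.mk.injEq]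
    exact ⟨trivial, h5.1⟩
  · exact absurd h3 (hcross x y m')

end Construction


/-! ### Assembling the lower bound -/

lemma construction (ℓ t k : ℕ) (hodd : Odd ℓ) (p : ℕ) [Fact (Nat.Prime p)]
    (hcase : (0 < k ∧ t = 2*k+1) ∨ t = 2*k+2) :
    ∃ (V : Type) (_ : Fintype V) (G : SimpleGraph V),
      CycleFree G ℓ ∧ (∀ v, (G.neighborSet v).ncard ≤ (k+1)*(p+1)) ∧
      p ^ t ≤ (distChromIndex G t).toNat := by
  classical
  haveI : NeZero p := ⟨(Fact.out : Nat.Prime p).ne_zero⟩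
  haveI : DecidableEq (Fin (k+1) → UU p) := Classical.decEq _
  refine ⟨Fin (k+1) → UU p, inferInstance, GG p k, ?_, ?_, ?_⟩
  · exact cycleFree_of_parity (fun x => ∑ i, basePar p (x i))
      (piGraph_parity (basePar p) (basePar_adj p)) hodd
  · intro v
    exact piGraph_neighbor_ncard (baseGraph p) (p+1) (baseGraph_neighbor_ncard p) v
  · have hcardZ : Fintype.card (ZMod p) = p := ZMod.card p
    have hcardPt : Fintype.card (Pt p) = p * p := by
      rw [Fintype.card_prod, hcardZ]
    have hcardFun : Fintype.card (Fin k → Pt p) = (p * p) ^ k := by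
      rw [Fintype.card_fun, hcardPt, Fintype.card_fin]
    rcases hcase with ⟨hk, ht⟩ | ht
    · -- odd case
      set ι := fun a : (Fin k → Pt p) × ZMod p => eOdd p k hk a.1 a.2 with hι
      set F := Finset.image ι Finset.univ with hF
      have hclique : (((GG p k).lineGraph).power t).IsClique (F : Set ((GG p k).edgeSet)) := by
        intro e he f hf hne
        obtain ⟨⟨x, m⟩, -, rfl⟩ := Finset.mem_image.mp (Finset.mem_coe.mp he)
        obtain ⟨⟨y, m'⟩, -, rfl⟩ := Finset.mem_image.mp (Finset.mem_coe.mp hf)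
        obtain ⟨w, hw⟩ := X_walk p k x y (Sum.inl 0) (Sum.inl 0) 0
          ⟨SimpleGraph.Walk.nil, by simp⟩
        obtain ⟨q, hq⟩ := lineGraph_walk w (ι (x, m)) (ι (y, m'))
          (Sym2.mem_mk_left _ _) (Sym2.mem_mk_left _ _)
        refine power_adj_of_walk hne q (hq.trans ?_)
        omega
      have hcard : F.card = p ^ t := by
        rw [hF, Finset.card_image_of_injective _ (eOdd_inj p k hk), Finset.card_univ,
          Fintype.card_prod, hcardFun, hcardZ, ht]
        ring
      have := clique_le_chromatic (((GG p k).lineGraph).power t) F hclique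
      rw [hcard] at this
      exact this
    · -- even case
      set ι := fun a : (Fin k → Pt p) × ZMod p × ZMod p => eEven p k a.1 a.2.1 a.2.2 with hι
      set F := Finset.image ι Finset.univ with hF
      have hclique : (((GG p k).lineGraph).power t).IsClique (F : Set ((GG p k).edgeSet)) := by
        intro e he f hf hne
        obtain ⟨⟨x, i, j⟩, -, rfl⟩ := Finset.mem_image.mp (Finset.mem_coe.mp he)
        obtain ⟨⟨y, i', j'⟩, -, rfl⟩ := Finset.mem_image.mp (Finset.mem_coe.mp hf)
        obtain ⟨w, hw⟩ := X_walk p k x y (Sum.inl i) (Sum.inr j') 1 (K_walk p i j')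
        obtain ⟨q, hq⟩ := lineGraph_walk w (ι (x, i, j)) (ι (y, i', j'))
          (Sym2.mem_mk_left _ _) (Sym2.mem_mk_right _ _)
        refine power_adj_of_walk hne q (hq.trans ?_)
        omega
      have hcard : F.card = p ^ t := by
        rw [hF, Finset.card_image_of_injective _ (eEven_inj p k), Finset.card_univ,
          Fintype.card_prod, Fintype.card_prod, hcardFun, hcardZ, ht]
        ring
      have := clique_le_chromatic (((GG p k).lineGraph).power t) F hclique
      rw [hcard] at this
      exact this


end ThmAux

open ThmAux

/-- Proposition 3(2): for `t ≥ 2` and `ℓ ≥ 3` odd, the supremum of the distance-`t`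
chromatic index over `C_ℓ`-free graphs of maximum degree at most `d` is `Θ(d^t)`. -/
theorem distance_chromatic_index_odd_cycle_free_no_reduction
    (t : ℕ) (ht : 2 ≤ t) (ℓ : ℕ) (hℓ : 3 ≤ ℓ) (hℓOdd : Odd ℓ) :
    ∃ (c C : ℝ) (d₀ : ℕ), 0 < c ∧ 0 < C ∧ 1 ≤ d₀ ∧
      ∀ d : ℕ, d₀ ≤ d →
        ((∀ (V : Type) (_ : Fintype V) (G : SimpleGraph V),
            CycleFree G ℓ → (∀ v : V, (G.neighborSet v).ncard ≤ d) →
            ((distChromIndex G t).toNat : ℝ) ≤ C * (d : ℝ) ^ t) ∧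
         (∃ (V : Type) (_ : Fintype V) (G : SimpleGraph V),
            CycleFree G ℓ ∧ (∀ v : V, (G.neighborSet v).ncard ≤ d) ∧
            c * (d : ℝ) ^ t ≤ ((distChromIndex G t).toNat : ℝ))) := by
  have ht8 : (0:ℝ) < 8 * t := by positivity
  refine ⟨((8 * (t:ℝ))⁻¹) ^ t, 3 ^ t, 8 * t, by positivity, by positivity, by omega, ?_⟩
  intro d hd
  have hd1 : 1 ≤ d := by omega
  constructor
  · -- upper bound
    intro V instV G _ hdeg
    haveI := instV
    have h1 : (distChromIndex G t).toNat ≤ (2*d+1)^t := upper_dist G t d hdeg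
    calc ((distChromIndex G t).toNat : ℝ)
        ≤ (((2*d+1)^t : ℕ) : ℝ) := Nat.cast_le.mpr h1
      _ = ((2*(d:ℝ)+1))^t := by push_cast; ring
      _ ≤ (3*(d:ℝ))^t := by
          refine pow_le_pow_left₀ (by positivity) ?_ t
          have : (1:ℝ) ≤ (d:ℝ) := by exact_mod_cast hd1
          linarith
      _ = 3 ^ t * (d:ℝ) ^ t := mul_pow 3 (d:ℝ) t
  · -- lower bound
    set k := (t-1)/2 with hk
    have hcase : (0 < k ∧ t = 2*k+1) ∨ t = 2*k+2 := by
      rcases Nat.even_or_odd t with he | ho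
      · right; have := Nat.even_iff.mp he; omega
      · left; have := Nat.odd_iff.mp ho; omega
    set M := 4 * t with hM
    set n := d / M with hn
    have hM0 : 0 < M := by omega
    have hn0 : n ≠ 0 := by
      have : M * 2 ≤ d := by omega
      have h2 : 2 ≤ d / M := (Nat.le_div_iff_mul_le hM0).mpr (by omega)
      omega
    obtain ⟨q, hq_prime, hq1, hq2⟩ := Nat.exists_prime_lt_and_le_two_mul n hn0
    haveI : Fact (Nat.Prime q) := ⟨hq_prime⟩
    obtain ⟨V, instV, G, hcyc, hdeg, hchr⟩ := construction ℓ t k hℓOdd q hcase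
    -- degree bound: (k+1)*(q+1) ≤ d
    have hdle : (k+1)*(q+1) ≤ d := by
      have e1 : (k+1)*(q+1) ≤ t*(q+1) := Nat.mul_le_mul_right _ (by omega)
      have e2 : t*(q+1) ≤ t*(2*n+1) := Nat.mul_le_mul_left _ (by omega)
      have e3 : t*(2*n+1) = 2*(n*t)+t := by ring
      have e4 : 4*(n*t) ≤ d := by
        calc 4*(n*t) = (d / M) * M := by rw [hn, hM]; ring
          _ ≤ d := Nat.div_mul_le_self d M
      set A := n*t with hA
      omega
    -- d < M * q
    have hdq : d < M * q := by
      have h5 : d < M * (n + 1) := by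
        have h6 := Nat.div_add_mod d M
        have h7 := Nat.mod_lt d hM0
        have e : M * (n+1) = M * n + M := by ring
        set P := M * n with hP
        omega
      have h8 : M * (n+1) ≤ M * q := Nat.mul_le_mul_left _ (by omega)
      omega
    refine ⟨V, instV, G, hcyc, fun v => (hdeg v).trans hdle, ?_⟩
    -- real arithmetic
    have hq0 : (0:ℝ) < q := by exact_mod_cast hq_prime.pos
    have hdr : (d:ℝ) ≤ 8 * t * q := by
      have : (d:ℝ) < (M:ℝ) * q := by exact_mod_cast hdq
      have hMr : (M:ℝ) = 4 * t := by rw [hM]; push_cast; ring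
      nlinarith
    calc ((8 * (t:ℝ))⁻¹) ^ t * (d:ℝ) ^ t
        = ((8 * (t:ℝ))⁻¹ * d) ^ t := (mul_pow _ _ t).symm
      _ ≤ ((q:ℝ)) ^ t := by
          refine pow_le_pow_left₀ (by positivity) ?_ t
          rw [inv_mul_le_iff₀ ht8] at *
          · nlinarith
      _ = (((q ^ t : ℕ)) : ℝ) := by push_cast; ring
      _ ≤ (((distChromIndex G t).toNat : ℕ) : ℝ) := Nat.cast_le.mpr hchr
end

section
/- Fix an integer t ≥ 3. For every even integer d ≥ 2 there exists a d-regular simple graph G such that χ_t(G) ≥ d^t/2^t and χ'_{t+1}(G) ≥ d^{t+1}/2^t. Moreover, G can be taken to be bipartite if t is even, and to contain no odd cycle of length less than t if t is odd. -/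
section AuxLemmas

open SimpleGraph

/-- Chromatic number lower bound from a "clique map". -/
private lemma card_le_chromaticNumber' {W α : Type*} [Fintype α] (H : SimpleGraph W) (f : α → W)
    (hf : ∀ a b : α, a ≠ b → H.Adj (f a) (f b)) :
    (Fintype.card α : ℕ∞) ≤ H.chromaticNumber := by
  rw [SimpleGraph.chromaticNumber]
  refine le_iInf₂ fun n hn => ?_
  obtain ⟨C⟩ := hn
  have hinj : Function.Injective (fun a => C (f a)) := by
    intro a b hab
    by_contra hne
    exact (C.valid (hf a b hne)) hab
  have := Fintype.card_le_of_injective _ hinj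
  simpa using (Nat.cast_le.mpr (by simpa using this) : ((Fintype.card α : ℕ) : ℕ∞) ≤ (n : ℕ∞))

private lemma le_toNat_of_le {m : ℕ} {x : ℕ∞} {N : ℕ} (h : (m : ℕ∞) ≤ x) (hN : x ≤ (N : ℕ∞)) :
    m ≤ x.toNat := by
  lift x to ℕ using (lt_of_le_of_lt hN (by exact_mod_cast lt_top_iff_ne_top.mpr (by simp))).ne
  simpa using h

/-- A walk between endpoints of two edges gives a walk in the line graph, one longer. -/
private lemma exists_lineWalk {V : Type*} {G : SimpleGraph V} :
    ∀ {u v : V} (p : G.Walk u v) (e f : G.edgeSet), u ∈ (e : Sym2 V) → v ∈ (f : Sym2 V) →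
    ∃ q : (G.lineGraph).Walk e f, q.length ≤ p.length + 1 := by
  intro u v p
  induction p with
  | nil =>
    intro e f he hf
    by_cases hef : e = f
    · subst hef; exact ⟨SimpleGraph.Walk.nil, by simp⟩
    · exact ⟨SimpleGraph.Walk.cons ⟨hef, _, he, hf⟩ SimpleGraph.Walk.nil, le_refl 1⟩
  | @cons u w v h p ih =>
    intro e f he hf
    have hw : w ∈ ((⟨s(u,w), h⟩ : G.edgeSet) : Sym2 V) := by simp
    obtain ⟨q, hq⟩ := ih ⟨s(u,w), h⟩ f hw hf
    by_cases heg : e = (⟨s(u,w), h⟩ : G.edgeSet)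
    · subst heg
      exact ⟨q, by simp [SimpleGraph.Walk.length_cons]; omega⟩
    · refine ⟨SimpleGraph.Walk.cons ⟨heg, u, he, by simp⟩ q, ?_⟩
      simp only [SimpleGraph.Walk.length_cons]
      show q.length + 1 ≤ _
      omega

/-- A chain of adjacent vertices gives a walk. -/
private lemma exists_walk_chain {W : Type*} {G : SimpleGraph W} (f : ℕ → W) :
    ∀ n : ℕ, (∀ m < n, G.Adj (f m) (f (m+1))) → ∃ w : G.Walk (f 0) (f n), w.length = n := by
  intro n
  induction n with
  | zero => exact fun _ => ⟨SimpleGraph.Walk.nil, rfl⟩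
  | succ n ih =>
    intro h
    obtain ⟨w, hw⟩ := ih (fun m hm => h m (by omega))
    exact ⟨w.concat (h n (by omega)), by rw [SimpleGraph.Walk.length_concat, hw]⟩

namespace Prop4

variable (t k : ℕ)

/-- The vertex set of the "rotating register" graph. -/
abbrev Vert : Type := (ZMod t → ZMod k) × ZMod t

/-- The "rotating register" graph: a vertex is a register of `t` cells with values in
`ZMod k`, together with a pointer; moving the pointer forward rewrites the cell it
moves onto. -/
@[reducible] def PG : SimpleGraph (Vert t k) where
  Adj u v := u ≠ v ∧
    ((v.2 = u.2 + 1 ∧ ∀ r, r ≠ v.2 → u.1 r = v.1 r) ∨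
     (u.2 = v.2 + 1 ∧ ∀ r, r ≠ u.2 → u.1 r = v.1 r))
  symm := by
    constructor
    rintro u v ⟨hne, h | h⟩
    · exact ⟨hne.symm, Or.inr ⟨h.1, fun r hr => (h.2 r hr).symm⟩⟩
    · exact ⟨hne.symm, Or.inl ⟨h.1, fun r hr => (h.2 r hr).symm⟩⟩
  loopless := ⟨fun v h => h.1 rfl⟩

variable {t k}

private lemma one_ne_zero' (ht : 3 ≤ t) : (1 : ZMod t) ≠ 0 := by
  have : ((1:ℕ) : ZMod t) ≠ 0 := by
    rw [Ne, ZMod.natCast_eq_zero_iff]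
    intro h; have := Nat.le_of_dvd (by omega) h; omega
  simpa using this

private lemma two_ne_zero' (ht : 3 ≤ t) : (2 : ZMod t) ≠ 0 := by
  have : ((2:ℕ) : ZMod t) ≠ 0 := by
    rw [Ne, ZMod.natCast_eq_zero_iff]
    intro h; have := Nat.le_of_dvd (by omega) h; omega
  simpa using this

/-- A walk of length exactly `t` from `(x,i)` to `(y,i)`, for arbitrary `x y`. -/
private lemma exists_walk_loop (ht : 3 ≤ t) (x y : ZMod t → ZMod k) (i : ZMod t) :
    ∃ w : (PG t k).Walk (x, i) (y, i), w.length = t := by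
  haveI : NeZero t := ⟨by omega⟩
  set z : ℕ → (ZMod t → ZMod k) := fun m r => if ∃ a : ℕ, a < m ∧ r = i + 1 + a then y r else x r with hz
  set f : ℕ → Vert t k := fun m => (z m, i + m) with hf
  have hf0 : f 0 = (x, i) := by
    simp only [hf, hz]
    norm_num
  have hft : f t = (y, i) := by
    simp only [hf, hz]
    have h1 : (fun r => if ∃ a : ℕ, a < t ∧ r = i + 1 + a then y r else x r) = y := by
      funext r
      rw [if_pos]
      refine ⟨(r - i - 1).val, ZMod.val_lt _, ?_⟩
      have : ((r - i - 1).val : ZMod t) = r - i - 1 := ZMod.natCast_rightInverse _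
      rw [this]; ring
    have h2 : i + (t : ZMod t) = i := by simp [ZMod.natCast_self]
    rw [h1, h2]
  have hadj : ∀ m < t, (PG t k).Adj (f m) (f (m+1)) := by
    intro m hm
    refine ⟨?_, Or.inl ⟨?_, ?_⟩⟩
    · intro hEq
      have : (i + (m:ZMod t)) = (i + ((m+1:ℕ):ZMod t)) := congrArg Prod.snd hEq
      push_cast at this
      have : (1 : ZMod t) = 0 := by linear_combination -this
      exact one_ne_zero' ht this
    · show i + ((m+1:ℕ):ZMod t) = i + (m:ZMod t) + 1
      push_cast; ring
    · intro r hr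
      show z m r = z (m+1) r
      simp only [hz]
      by_cases hp : ∃ a : ℕ, a < m ∧ r = i + 1 + a
      · rw [if_pos hp, if_pos]
        obtain ⟨a, ha, rfl⟩ := hp
        exact ⟨a, by omega, rfl⟩
      · rw [if_neg hp, if_neg]
        rintro ⟨a, ha, rfl⟩
        have ham : a = m := by
          by_contra h'
          exact hp ⟨a, by omega, rfl⟩
        apply hr
        subst ham
        show i + 1 + (a : ZMod t) = i + ((a+1:ℕ) : ZMod t)
        push_cast; ring
  have h := exists_walk_chain f t hadj
  rw [hf0, hft] at h
  exact h

/-- Every vertex of `PG t k` has exactly `2k` neighbours. -/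
private lemma degree_eq (ht : 3 ≤ t) (hk : 0 < k) (v : Vert t k) :
    ((PG t k).neighborSet v).ncard = k + k := by
  haveI : NeZero t := ⟨by omega⟩
  haveI : NeZero k := ⟨by omega⟩
  obtain ⟨x, i⟩ := v
  have h10 := one_ne_zero' (t := t) ht
  have h20 := two_ne_zero' (t := t) ht
  let g : ZMod k ⊕ ZMod k → ((PG t k).neighborSet (x, i)) := fun s =>
    match s with
    | Sum.inl c => ⟨((fun r => if r = i + 1 then c else x r), i + 1), by
        constructor
        · intro hEq
          have : i = i + 1 := congrArg Prod.snd hEq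
          exact h10 (by linear_combination -this)
        · exact Or.inl ⟨rfl, fun r hr => by simp [if_neg hr]⟩⟩
    | Sum.inr c => ⟨((fun r => if r = i then c else x r), i - 1), by
        constructor
        · intro hEq
          have : i = i - 1 := congrArg Prod.snd hEq
          exact h10 (by linear_combination this)
        · exact Or.inr ⟨by ring, fun r hr => by simp [if_neg hr]⟩⟩
  have hgbij : Function.Bijective g := by
    constructor
    · rintro (c | c) (c' | c') hEq
      · have h1 : (fun r => if r = i + 1 then c else x r) = (fun r => if r = i + 1 then c' else x r) :=
          congrArg (Prod.fst ∘ Subtype.val) hEq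
        have := congrFun h1 (i + 1)
        simpa using this
      · have h2 : i + 1 = i - 1 := congrArg (Prod.snd ∘ Subtype.val) hEq
        exact absurd (by linear_combination h2) h20
      · have h2 : i - 1 = i + 1 := congrArg (Prod.snd ∘ Subtype.val) hEq
        exact absurd (by linear_combination -h2) h20
      · have h1 : (fun r => if r = i then c else x r) = (fun r => if r = i then c' else x r) :=
          congrArg (Prod.fst ∘ Subtype.val) hEq
        have := congrFun h1 i
        simpa using this
    · rintro ⟨⟨y, j⟩, hne, hadj | hadj⟩
      · refine ⟨Sum.inl (y (i + 1)), ?_⟩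
        apply Subtype.ext
        have hj : j = i + 1 := hadj.1
        subst hj
        refine Prod.ext ?_ rfl
        funext r
        by_cases hr : r = i + 1
        · subst hr; simp [g]
        · simpa [g, if_neg hr] using hadj.2 r hr
      · refine ⟨Sum.inr (y i), ?_⟩
        apply Subtype.ext
        have hj : i = j + 1 := hadj.1
        have hj' : j = i - 1 := by linear_combination -hj
        subst hj'
        refine Prod.ext ?_ rfl
        funext r
        by_cases hr : r = i
        · subst hr; simp [g]
        · simpa [g, if_neg hr] using hadj.2 r hr
  have : Nat.card ((PG t k).neighborSet (x, i)) = Nat.card (ZMod k ⊕ ZMod k) :=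
    (Nat.card_congr (Equiv.ofBijective g hgbij)).symm
  rw [← Nat.card_coe_set_eq, this, Nat.card_sum, Nat.card_zmod]

/-- For even `t`, the graph `PG t k` is bipartite (pointer parity). -/
private lemma bipartite_even (ht : 3 ≤ t) (hteven : Even t) :
    ∃ s : Set (Vert t k), ∀ u v : Vert t k, (PG t k).Adj u v → (u ∈ s ↔ v ∉ s) := by
  haveI : NeZero t := ⟨by omega⟩
  have h2t : (2:ℕ) ∣ t := hteven.two_dvd
  let φ : ZMod t →+* ZMod 2 := ZMod.castHom h2t (ZMod 2)
  refine ⟨{v | φ v.2 = 0}, ?_⟩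
  rintro u v ⟨hne, hadj | hadj⟩
  · have h1 : φ v.2 = φ u.2 + 1 := by rw [hadj.1]; simp
    have : ∀ a : ZMod 2, (a = 0 ↔ ¬(a + 1 = 0)) := by decide
    simp only [Set.mem_setOf_eq, h1]
    exact this (φ u.2)
  · have h1 : φ u.2 = φ v.2 + 1 := by rw [hadj.1]; simp
    have : ∀ a : ZMod 2, (a + 1 = 0 ↔ ¬(a = 0)) := by decide
    simp only [Set.mem_setOf_eq, h1]
    exact this (φ v.2)

private lemma counter_shift :
    ∀ {u v : Vert t k} (p : (PG t k).Walk u v),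
      ∃ a b : ℕ, a + b = p.length ∧ v.2 = u.2 + (a : ZMod t) - (b : ZMod t) := by
  intro u v p
  induction p with
  | nil => exact ⟨0, 0, rfl, by simp⟩
  | @cons u w v h p ih =>
    obtain ⟨a, b, hab, hshift⟩ := ih
    rcases h.2 with hadj | hadj
    · refine ⟨a + 1, b, by simp [SimpleGraph.Walk.length_cons]; omega, ?_⟩
      rw [hshift, hadj.1]
      push_cast; ring
    · refine ⟨a, b + 1, by simp [SimpleGraph.Walk.length_cons]; omega, ?_⟩
      rw [hshift, hadj.1]
      push_cast; ring

/-- Every closed walk of odd length in `PG t k` has length at least `t`. -/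
private lemma odd_closed_walk (ht : 3 ≤ t) {v : Vert t k} (p : (PG t k).Walk v v)
    (hodd : Odd p.length) : t ≤ p.length := by
  haveI : NeZero t := ⟨by omega⟩
  obtain ⟨a, b, hab, hshift⟩ := counter_shift p
  have h0 : ((a : ZMod t) - (b : ZMod t)) = 0 := by linear_combination -hshift
  have h0' : (((a : ℤ) - (b : ℤ) : ℤ) : ZMod t) = 0 := by push_cast; exact h0
  rw [ZMod.intCast_zmod_eq_zero_iff_dvd] at h0'
  obtain ⟨c, hc⟩ := h0'
  have hcne : c ≠ 0 := by
    rintro rfl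
    rw [mul_zero, sub_eq_zero] at hc
    have : a = b := by exact_mod_cast hc
    subst this
    obtain ⟨m, hm⟩ := hodd
    omega
  have h1 : (t : ℤ) ≤ |(a : ℤ) - b| := by
    rw [hc, abs_mul]
    have hc1 : (1:ℤ) ≤ |c| := by
      rcases abs_pos.mpr hcne with h
      omega
    calc (t:ℤ) = |(t:ℤ)| * 1 := by rw [abs_of_nonneg (by positivity)]; ring
    _ ≤ |(t:ℤ)| * |c| := by apply mul_le_mul_of_nonneg_left hc1 (abs_nonneg _)
  have h2 : |(a : ℤ) - b| ≤ a + b := by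
    rcases abs_cases ((a:ℤ) - b) with ⟨h, _⟩ | ⟨h, _⟩ <;> omega
  have := h1.trans h2
  omega

end Prop4

end AuxLemmas

/-- Proposition 4: for fixed `t ≥ 3` and every even `d ≥ 2` there is a `d`-regular graph
`G` with `χ_t(G) ≥ d^t/2^t` and `χ'_{t+1}(G) ≥ d^{t+1}/2^t`; moreover `G` is bipartite
if `t` is even, and has no odd cycle of length less than `t` if `t` is odd. -/
theorem regular_graph_with_large_power_clique
    (t : ℕ) (ht : 3 ≤ t) (d : ℕ) (hd : 2 ≤ d) (hdEven : Even d) :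
    ∃ (V : Type) (_ : Fintype V) (G : SimpleGraph V),
      (∀ v : V, (G.neighborSet v).ncard = d) ∧
      (d : ℝ) ^ t / 2 ^ t ≤ ((distChromNum G t).toNat : ℝ) ∧
      (d : ℝ) ^ (t + 1) / 2 ^ t ≤ ((distChromIndex G (t + 1)).toNat : ℝ) ∧
      (Even t → BipartiteGraph G) ∧
      (Odd t → ∀ (v : V) (p : G.Walk v v), p.IsCycle → Odd p.length → t ≤ p.length) := by
  classical
  obtain ⟨k, hk⟩ := hdEven
  have hk1 : 1 ≤ k := by omega
  haveI : NeZero t := ⟨by omega⟩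
  haveI : NeZero k := ⟨by omega⟩
  set G := Prop4.PG t k with hG
  refine ⟨Prop4.Vert t k, inferInstance, G, ?_, ?_, ?_, ?_, ?_⟩
  · intro v; rw [Prop4.degree_eq ht (by omega) v, hk]
  · -- χ_t
    have hcl : ((k ^ t : ℕ) : ℕ∞) ≤ (G.power t).chromaticNumber := by
      have := card_le_chromaticNumber' (G.power t) (fun y : ZMod t → ZMod k => ((y, 0) : Prop4.Vert t k))
        (fun a b hab => by
          refine ⟨fun hEq => hab (congrArg Prod.fst hEq), ?_⟩
          obtain ⟨w, hw⟩ := Prop4.exists_walk_loop ht a b 0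
          exact ⟨w.bypass, w.bypass_isPath, w.length_bypass_le.trans (le_of_eq hw)⟩)
      rwa [Fintype.card_fun, ZMod.card, ZMod.card] at this
    have hub : (G.power t).chromaticNumber ≤ (Fintype.card (Prop4.Vert t k) : ℕ∞) :=
      ((G.power t).colorable_of_fintype).chromaticNumber_le
    have h1 : k ^ t ≤ (distChromNum G t).toNat := le_toNat_of_le hcl hub
    have hd2 : (d : ℝ) = 2 * k := by rw [hk]; push_cast; ring
    rw [hd2]
    calc (2 * (k:ℝ)) ^ t / 2 ^ t = (k:ℝ) ^ t := by
          rw [mul_pow, mul_div_cancel_left₀ _ (by positivity : (2:ℝ)^t ≠ 0)]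
    _ ≤ (((distChromNum G t).toNat : ℕ) : ℝ) := by exact_mod_cast Nat.cast_le.mpr (by exact_mod_cast h1)
  · -- χ'_{t+1}
    haveI : Fintype ↥G.edgeSet := Fintype.ofFinite _
    set upd : (ZMod t → ZMod k) → ZMod t → ZMod k → (ZMod t → ZMod k) :=
      fun x j c r => if r = j then c else x r with hupd
    set ep : (ZMod t → ZMod k) → Bool → ZMod k → Prop4.Vert t k :=
      fun x b c => if b then ((upd x 1 c, 1) : Prop4.Vert t k) else (upd x 0 c, -1) with hep
    have h10 := Prop4.one_ne_zero' (t := t) ht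
    have h20 := Prop4.two_ne_zero' (t := t) ht
    have hm1 : (-1 : ZMod t) ≠ 0 := fun h => h10 (by linear_combination -h)
    have hm2 : (1 : ZMod t) ≠ -1 := fun h => h20 (by linear_combination h)
    have hepsnd : ∀ x b c, (ep x b c).2 ≠ 0 := by
      intro x b c; cases b <;> simp [hep] <;> assumption
    have hadj : ∀ x b c, G.Adj (x, (0 : ZMod t)) (ep x b c) := by
      intro x b c
      have hne : (x, (0:ZMod t)) ≠ ep x b c := fun hEq =>
        hepsnd x b c ((congrArg Prod.snd hEq).symm : (ep x b c).2 = 0)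
      cases b
      · refine ⟨hne, Or.inr ⟨by simp [hep], ?_⟩⟩
        intro r hr
        simp only [hep, hupd, Bool.false_eq_true, if_false] at hr ⊢
        simp [if_neg hr]
      · refine ⟨hne, Or.inl ⟨by simp [hep], ?_⟩⟩
        intro r hr
        simp only [hep, hupd, if_true] at hr ⊢
        simp [if_neg hr]
    set f₂ : ((ZMod t → ZMod k) × Bool × ZMod k) → ↥G.edgeSet :=
      fun p => ⟨s((p.1, (0:ZMod t)), ep p.1 p.2.1 p.2.2), hadj p.1 p.2.1 p.2.2⟩ with hf₂
    have hf2inj : Function.Injective f₂ := by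
      rintro ⟨x, b, c⟩ ⟨x', b', c'⟩ hEq
      have h := Subtype.ext_iff.mp hEq
      simp only [hf₂] at h
      rw [Sym2.eq_iff] at h
      rcases h with ⟨h1, h2⟩ | ⟨h1, h2⟩
      · have hx : x = x' := congrArg Prod.fst h1
        subst hx
        have hbb : b = b' := by
          have hsnd := congrArg Prod.snd h2
          cases b <;> cases b' <;> try rfl
          all_goals exfalso; simp only [hep, if_true, if_false,
            Bool.false_eq_true, Bool.true_eq_false] at hsnd
          · exact hm2 hsnd.symm
          · exact hm2 hsnd
        subst hbb
        have hfst := congrArg Prod.fst h2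
        have hcc : c = c' := by
          cases b <;> simp only [hep, if_true, if_false, Bool.false_eq_true] at hfst
          · have := congrFun hfst 0
            simpa [hupd] using this
          · have := congrFun hfst 1
            simpa [hupd] using this
        subst hcc
        rfl
      · exfalso
        exact hepsnd x' b' c' ((congrArg Prod.snd h1).symm : (ep x' b' c').2 = 0)
    have hclique : ∀ p q, p ≠ q → ((G.lineGraph).power (t+1)).Adj (f₂ p) (f₂ q) := by
      rintro ⟨x, b, c⟩ ⟨x', b', c'⟩ hpq
      refine ⟨fun h => hpq (hf2inj h), ?_⟩
      obtain ⟨w, hw⟩ := Prop4.exists_walk_loop ht x x' 0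
      obtain ⟨q, hq⟩ := exists_lineWalk w (f₂ (x, b, c)) (f₂ (x', b', c'))
        (by simp [hf₂]) (by simp [hf₂])
      refine ⟨q.bypass, q.bypass_isPath, q.length_bypass_le.trans ?_⟩
      omega
    have hcl : ((k ^ t * (2 * k) : ℕ) : ℕ∞) ≤ ((G.lineGraph).power (t+1)).chromaticNumber := by
      have := card_le_chromaticNumber' ((G.lineGraph).power (t+1)) f₂ hclique
      have hcard : Fintype.card ((ZMod t → ZMod k) × Bool × ZMod k) = k ^ t * (2 * k) := by
        simp only [Fintype.card_prod, Fintype.card_fun, ZMod.card, Fintype.card_bool]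
      rwa [hcard] at this
    have hub : ((G.lineGraph).power (t+1)).chromaticNumber ≤ ((Fintype.card ↥G.edgeSet : ℕ) : ℕ∞) :=
      (((G.lineGraph).power (t+1)).colorable_of_fintype).chromaticNumber_le
    have h1 : k ^ t * (2 * k) ≤ (distChromIndex G (t+1)).toNat := le_toNat_of_le hcl hub
    have hd2 : (d : ℝ) = 2 * k := by rw [hk]; push_cast; ring
    rw [hd2]
    have harith : (2 * (k:ℝ)) ^ (t+1) / 2 ^ t = ((k ^ t * (2 * k) : ℕ) : ℝ) := by
      push_cast
      rw [mul_pow, pow_succ]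
      field_simp
      ring
    rw [harith]
    exact_mod_cast Nat.cast_le.mpr h1
  · intro hte
    exact Prop4.bipartite_even ht hte
  · intro hto v p hp hodd
    exact Prop4.odd_closed_walk ht p hodd
end

section
/- Let d be an integer such that d − 1 is a prime power. Then there exists a d-regular bipartite simple graph P of girth 6 such that χ_2(P) = d² − d + 1 and χ'_3(P) = d³ − d² + d. -/
open Configuration Projectivization Matrix

section Plane
variable (K : Type) [Field K]

abbrev PPt := Projectivization K (Fin 3 → K)

structure PLn where
  q : Projectivization K (Fin 3 → K)

instance : Membership (PPt K) (PLn K) :=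
  ⟨fun l p => p.rep ⬝ᵥ l.q.rep = 0⟩

variable {K}

lemma PLn.ext' {l₁ l₂ : PLn K} (h : l₁.q = l₂.q) : l₁ = l₂ := by cases l₁; cases l₂; cases h; rfl

lemma dot_orth_wd {v v' w w' : Fin 3 → K} (hv : ∃ a : Kˣ, a • v = v')
    (hw : ∃ b : Kˣ, b • w = w') (h : v' ⬝ᵥ w' = 0) : v ⬝ᵥ w = 0 := by
  obtain ⟨a, rfl⟩ := hv; obtain ⟨b, rfl⟩ := hw
  rw [Units.smul_def, Units.smul_def, smul_dotProduct, dotProduct_smul, smul_eq_mul, smul_eq_mul] at h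
  rcases mul_eq_zero.mp h with h | h
  · exact absurd h a.ne_zero
  rcases mul_eq_zero.mp h with h | h
  · exact absurd h b.ne_zero
  exact h

lemma mem_mk_iff {v w : Fin 3 → K} (hv : v ≠ 0) (hw : w ≠ 0) :
    mk K v hv ∈ PLn.mk (mk K w hw) ↔ v ⬝ᵥ w = 0 := by
  constructor
  · intro h
    exact dot_orth_wd (exists_smul_eq_mk_rep K v hv) (exists_smul_eq_mk_rep K w hw) h
  · intro h
    obtain ⟨a, ha⟩ := exists_smul_eq_mk_rep K v hv
    obtain ⟨b, hb⟩ := exists_smul_eq_mk_rep K w hw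
    show (mk K v hv).rep ⬝ᵥ (mk K w hw).rep = 0
    rw [← ha, ← hb, Units.smul_def, Units.smul_def, smul_dotProduct, dotProduct_smul, h]
    simp

lemma mem_iff_rep {p : PPt K} {l : PLn K} : p ∈ l ↔ p.rep ⬝ᵥ l.q.rep = 0 := Iff.rfl

lemma mem_mk_left_iff {v : Fin 3 → K} (hv : v ≠ 0) (l : PLn K) :
    mk K v hv ∈ l ↔ v ⬝ᵥ l.q.rep = 0 := by
  have h := mem_mk_iff hv l.q.rep_nonzero
  rwa [mk_rep, show PLn.mk l.q = l from rfl] at h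

lemma mem_mk_right_iff {w : Fin 3 → K} (hw : w ≠ 0) (p : PPt K) :
    p ∈ PLn.mk (mk K w hw) ↔ p.rep ⬝ᵥ w = 0 := by
  have h := mem_mk_iff p.rep_nonzero hw
  rwa [mk_rep] at h

lemma exists_smul_of_cross_eq_zero {v w : Fin 3 → K} (hv : v ≠ 0)
    (h : crossProduct v w = 0) : ∃ c : K, w = c • v := by
  rw [cross_apply] at h
  have h0 := congrFun h 0
  have h1 := congrFun h 1
  have h2 := congrFun h 2
  simp only [Matrix.cons_val_zero, Matrix.cons_val_one, Matrix.head_cons, Pi.zero_apply,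
    Matrix.cons_val_two, Matrix.tail_cons, sub_eq_zero] at h0 h1 h2
  obtain ⟨i, hi⟩ : ∃ i, v i ≠ 0 := Function.ne_iff.mp hv
  refine ⟨w i / v i, ?_⟩
  funext j
  rw [Pi.smul_apply, smul_eq_mul, div_mul_eq_mul_div, eq_div_iff hi]
  fin_cases i <;> fin_cases j <;>
    simp only [show (⟨0, by omega⟩ : Fin 3) = 0 from rfl, show (⟨1, by omega⟩ : Fin 3) = 1 from rfl,
      show (⟨2, by omega⟩ : Fin 3) = 2 from rfl] <;>
    first
    | ring1
    | linear_combination h0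
    | linear_combination -h0
    | linear_combination h1
    | linear_combination -h1
    | linear_combination h2
    | linear_combination -h2

lemma cross_ne_zero_of_indep {v w : Fin 3 → K} (hv : v ≠ 0)
    (h : ¬ ∃ c : K, w = c • v) : crossProduct v w ≠ 0 := by
  intro hc
  exact h (exists_smul_of_cross_eq_zero hv hc)

lemma triple_expansion (u v w : Fin 3 → K) :
    crossProduct u (crossProduct v w) = (u ⬝ᵥ w) • v - (u ⬝ᵥ v) • w := by
  funext i
  fin_cases i <;>
    simp [cross_apply, dotProduct, Fin.sum_univ_three] <;> ring

lemma orth_pair_eq_smul_cross {u v w : Fin 3 → K} (hv : v ≠ 0)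
    (hind : ¬ ∃ c : K, w = c • v) (h1 : u ⬝ᵥ v = 0) (h2 : u ⬝ᵥ w = 0) :
    ∃ c : K, u = c • crossProduct v w := by
  have hcross : crossProduct v w ≠ 0 := cross_ne_zero_of_indep hv hind
  have hz : crossProduct (crossProduct v w) u = 0 := by
    have ht : crossProduct u (crossProduct v w) = 0 := by
      rw [triple_expansion, h1, h2]; simp
    rw [← cross_anticomm, ht, neg_zero]
  exact exists_smul_of_cross_eq_zero hcross hz

lemma indep_of_ne {v w : Fin 3 → K} (hv : v ≠ 0) (hw : w ≠ 0)
    (hne : mk K v hv ≠ mk K w hw) : ¬ ∃ c : K, w = c • v := by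
  rintro ⟨c, rfl⟩
  have hc : c ≠ 0 := by rintro rfl; simp at hw
  exact hne ((mk_eq_mk_iff' K v (c • v) hv hw).mpr ⟨c⁻¹, by
    rw [smul_smul, inv_mul_cancel₀ hc, one_smul]⟩)

end Plane

section Inst
variable {K : Type} [Field K]

lemma rep_indep {p₁ p₂ : PPt K} (h : p₁ ≠ p₂) : ¬ ∃ c : K, p₂.rep = c • p₁.rep :=
  indep_of_ne p₁.rep_nonzero p₂.rep_nonzero (by rwa [mk_rep, mk_rep])

lemma q_ne {l₁ l₂ : PLn K} (h : l₁ ≠ l₂) : l₁.q ≠ l₂.q := fun hq => h (PLn.ext' hq)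

set_option maxHeartbeats 1000000 in
noncomputable instance PPlane : ProjectivePlane (PPt K) (PLn K) where
  exists_point l := by
    obtain ⟨i, hi⟩ : ∃ i, l.q.rep i ≠ 0 := Function.ne_iff.mp l.q.rep_nonzero
    have hs : (Pi.single i 1 : Fin 3 → K) ≠ 0 := fun h => by
      simpa using congrFun h i
    refine ⟨mk K (Pi.single i 1) hs, ?_⟩
    rw [mem_mk_left_iff hs, single_dotProduct, one_mul]
    exact hi
  exists_line p := by
    obtain ⟨i, hi⟩ : ∃ i, p.rep i ≠ 0 := Function.ne_iff.mp p.rep_nonzero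
    have hs : (Pi.single i 1 : Fin 3 → K) ≠ 0 := fun h => by
      simpa using congrFun h i
    refine ⟨PLn.mk (mk K (Pi.single i 1) hs), ?_⟩
    rw [mem_mk_right_iff hs, dotProduct_single, mul_one]
    exact hi
  eq_or_eq := by
    intro p₁ p₂ l₁ l₂ h₁ h₂ h₃ h₄
    by_cases hp : p₁ = p₂
    · exact Or.inl hp
    right
    have hind := rep_indep hp
    rw [mem_iff_rep] at h₁ h₂ h₃ h₄
    obtain ⟨c₁, hc₁⟩ := orth_pair_eq_smul_cross (u := l₁.q.rep) p₁.rep_nonzero hind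
      (by rw [dotProduct_comm]; exact h₁) (by rw [dotProduct_comm]; exact h₂)
    obtain ⟨c₂, hc₂⟩ := orth_pair_eq_smul_cross (u := l₂.q.rep) p₁.rep_nonzero hind
      (by rw [dotProduct_comm]; exact h₃) (by rw [dotProduct_comm]; exact h₄)
    have hcz₂ : c₂ ≠ 0 := by
      rintro rfl; exact l₂.q.rep_nonzero (by simpa using hc₂)
    apply PLn.ext'
    have key : mk K l₁.q.rep l₁.q.rep_nonzero = mk K l₂.q.rep l₂.q.rep_nonzero := by
      refine (mk_eq_mk_iff' K _ _ _ _).mpr ⟨c₁ * c₂⁻¹, ?_⟩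
      rw [hc₁, hc₂, smul_smul, mul_assoc, inv_mul_cancel₀ hcz₂, mul_one]
    rwa [mk_rep, mk_rep] at key
  mkPoint := fun {l₁ l₂} h =>
    mk K (crossProduct l₁.q.rep l₂.q.rep)
      (cross_ne_zero_of_indep l₁.q.rep_nonzero
        (indep_of_ne l₁.q.rep_nonzero l₂.q.rep_nonzero (by rw [mk_rep, mk_rep]; exact q_ne h)))
  mkPoint_ax := fun {l₁ l₂} h => by
    constructor <;>
    · rw [mem_mk_left_iff, dotProduct_comm]
      first
      | exact dot_self_cross _ _
      | exact dot_cross_self _ _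
  mkLine := fun {p₁ p₂} h =>
    PLn.mk (mk K (crossProduct p₁.rep p₂.rep)
      (cross_ne_zero_of_indep p₁.rep_nonzero (rep_indep h)))
  mkLine_ax := fun {p₁ p₂} h => by
    constructor <;>
    · rw [mem_mk_right_iff]
      first
      | exact dot_self_cross _ _
      | exact dot_cross_self _ _
  exists_config := by
    have h100 : (![1,0,0] : Fin 3 → K) ≠ 0 := fun h => by simpa using congrFun h 0
    have h010 : (![0,1,0] : Fin 3 → K) ≠ 0 := fun h => by simpa using congrFun h 1
    have h001 : (![0,0,1] : Fin 3 → K) ≠ 0 := fun h => by simpa using congrFun h 2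
    have h011 : (![0,1,1] : Fin 3 → K) ≠ 0 := fun h => by simpa using congrFun h 1
    have h101 : (![1,0,1] : Fin 3 → K) ≠ 0 := fun h => by simpa using congrFun h 0
    refine ⟨mk K ![1,0,0] h100, mk K ![0,1,0] h010, mk K ![0,0,1] h001,
      PLn.mk (mk K ![0,1,1] h011), PLn.mk (mk K ![1,0,0] h100), PLn.mk (mk K ![1,0,1] h101),
      ?_, ?_, ?_, ?_, ?_, ?_, ?_, ?_⟩ <;>
      rw [mem_mk_iff] <;>
      simp [dotProduct, Fin.sum_univ_three]

end Inst

section Count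
variable {K : Type} [Field K] [Fintype K] [DecidableEq K]

instance : Finite (PPt K) := Quotient.finite _
instance : Finite (PLn K) := Finite.of_equiv (PPt K) ⟨PLn.mk, PLn.q, fun _ => rfl, fun _ => rfl⟩

omit [Fintype K] [DecidableEq K] in
lemma smul_cancel {v : Fin 3 → K} (hv : v ≠ 0) {a b : K} (h : a • v = b • v) : a = b := by
  obtain ⟨i, hi⟩ : ∃ i, v i ≠ 0 := Function.ne_iff.mp hv
  have := congrFun h i
  simp only [Pi.smul_apply, smul_eq_mul] at this
  exact mul_right_cancel₀ hi this

lemma fiber_equiv_units (p : PPt K) :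
    Nat.card {v : {v : Fin 3 → K // v ≠ 0} // mk K v.1 v.2 = p} = Fintype.card K - 1 := by
  have hKu : Nat.card Kˣ = Fintype.card K - 1 := by
    rw [Nat.card_eq_fintype_card, Fintype.card_units]
  rw [← hKu]
  apply Nat.card_congr
  apply Equiv.symm
  refine Equiv.ofBijective
    (fun a : Kˣ => ⟨⟨(a : K) • p.rep, smul_ne_zero a.ne_zero p.rep_nonzero⟩, ?_⟩) ⟨?_, ?_⟩
  · show mk K ((a : K) • p.rep) _ = p
    have h2 : mk K ((a : K) • p.rep) (smul_ne_zero a.ne_zero p.rep_nonzero)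
        = mk K p.rep p.rep_nonzero := (mk_eq_mk_iff' K _ _ _ _).mpr ⟨a, rfl⟩
    rwa [mk_rep] at h2
  · intro a b hab
    have h3 : (a : K) • p.rep = (b : K) • p.rep := congrArg (fun x => (x.1 : Fin 3 → K)) hab
    exact Units.ext (smul_cancel p.rep_nonzero h3)
  · rintro ⟨⟨v, hv⟩, hmk⟩
    obtain ⟨a, ha⟩ := exists_smul_eq_mk_rep K v hv
    rw [hmk, Units.smul_def] at ha
    refine ⟨a⁻¹, ?_⟩
    apply Subtype.ext; apply Subtype.ext
    show ((a⁻¹ : Kˣ) : K) • p.rep = v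
    simp [← ha, smul_smul]

lemma card_nonzero_vectors :
    Nat.card {v : Fin 3 → K // v ≠ 0} = Fintype.card K ^ 3 - 1 := by
  rw [Nat.card_eq_fintype_card, Fintype.card_subtype_compl]
  simp [Fintype.card_subtype_eq (0 : Fin 3 → K), Fintype.card_pi]

lemma card_ppt_mul : Nat.card (PPt K) * (Fintype.card K - 1) = Fintype.card K ^ 3 - 1 := by
  classical
  letI : Fintype (PPt K) := Fintype.ofFinite _
  have h1 : Nat.card {v : Fin 3 → K // v ≠ 0}
      = Nat.card (Σ p : PPt K, {v : {v : Fin 3 → K // v ≠ 0} // mk K v.1 v.2 = p}) :=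
    (Nat.card_congr (Equiv.sigmaFiberEquiv (fun v : {v : Fin 3 → K // v ≠ 0} => mk K v.1 v.2))).symm
  rw [card_nonzero_vectors] at h1
  letI : ∀ p : PPt K, Fintype {v : {v : Fin 3 → K // v ≠ 0} // mk K v.1 v.2 = p} :=
    fun p => Fintype.ofFinite _
  rw [Nat.card_eq_fintype_card, Fintype.card_sigma] at h1
  simp_rw [← Nat.card_eq_fintype_card, fiber_equiv_units] at h1
  rw [Finset.sum_const, Finset.card_univ, smul_eq_mul] at h1
  rw [Nat.card_eq_fintype_card, ← h1, Nat.card_eq_fintype_card]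

lemma card_ppt : Nat.card (PPt K) = Fintype.card K ^ 2 + Fintype.card K + 1 := by
  have hq : 2 ≤ Fintype.card K := Fintype.one_lt_card
  have h := card_ppt_mul (K := K)
  have hfact : (Fintype.card K ^ 2 + Fintype.card K + 1) * (Fintype.card K - 1)
      = Fintype.card K ^ 3 - 1 := by
    have h1 : 1 ≤ Fintype.card K := by omega
    have h3 : 1 ≤ Fintype.card K ^ 3 := Nat.one_le_pow _ _ (by omega)
    zify [h1, h3]
    ring
  rw [← hfact] at h
  exact Nat.eq_of_mul_eq_mul_right (by omega) h

section Graph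
variable (K : Type) [Field K]

def IG : SimpleGraph (PPt K ⊕ PLn K) where
  Adj x y := match x, y with
    | .inl p, .inr l => p ∈ l
    | .inr l, .inl p => p ∈ l
    | _, _ => False
  symm := by constructor; rintro (p|l) (p'|l') h <;> exact h
  loopless := by constructor; rintro (p|l) h <;> exact h

variable {K}

@[simp] lemma IG_adj_inl_inr {p : PPt K} {l : PLn K} :
    (IG K).Adj (.inl p) (.inr l) ↔ p ∈ l := Iff.rfl

@[simp] lemma IG_adj_inr_inl {p : PPt K} {l : PLn K} :
    (IG K).Adj (.inr l) (.inl p) ↔ p ∈ l := Iff.rfl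

@[simp] lemma IG_adj_inl_inl {p p' : PPt K} : ¬ (IG K).Adj (.inl p) (.inl p') := fun h => h

@[simp] lemma IG_adj_inr_inr {l l' : PLn K} : ¬ (IG K).Adj (.inr l) (.inr l') := fun h => h

lemma IG_walk_parity {x y : PPt K ⊕ PLn K} (w : (IG K).Walk x y) :
    Even w.length ↔ (x.isLeft = y.isLeft) := by
  induction w with
  | nil => simp
  | @cons a b c h w ih =>
    rw [SimpleGraph.Walk.length_cons, Nat.even_add_one, ih]
    rcases a with p|l <;> rcases b with p'|l' <;> rcases c with p''|l'' <;> simp_all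

lemma IG_closed_even {x : PPt K ⊕ PLn K} (w : (IG K).Walk x x) : Even w.length := by
  rw [IG_walk_parity]

/-- a short walk from a point to a line forces incidence -/
lemma IG_mem_of_short_walk {p : PPt K} {l : PLn K} (w : (IG K).Walk (.inl p) (.inr l))
    (hw : w.length ≤ 2) : p ∈ l := by
  cases w with
  | cons h w' =>
    rename_i b
    rcases b with p'|l'
    · exact absurd h IG_adj_inl_inl
    · cases w' with
      | nil => exact h
      | cons h2 w'' =>
        rename_i c
        rcases c with p''|l''
        · cases w'' with
          | cons h3 w''' =>
            simp only [SimpleGraph.Walk.length_cons] at hw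
            omega
        · exact absurd h2 IG_adj_inr_inr
end Graph

section Reg
variable {K : Type} [Field K] [Fintype K]

lemma sq_add_self_inj {a b : ℕ} (h : a^2 + a + 1 = b^2 + b + 1) : a = b := by
  rcases Nat.lt_trichotomy a b with h' | h' | h'
  · have : a^2 ≤ b^2 := Nat.pow_le_pow_left h'.le 2
    omega
  · exact h'
  · have : b^2 ≤ a^2 := Nat.pow_le_pow_left h'.le 2
    omega

lemma order_eq : Configuration.ProjectivePlane.order (PPt K) (PLn K) = Fintype.card K := by
  classical
  letI : Fintype (PPt K) := Fintype.ofFinite _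
  have hcard : Fintype.card (PPt K) = Fintype.card K ^ 2 + Fintype.card K + 1 := by
    rw [← Nat.card_eq_fintype_card, card_ppt]
  have h := Configuration.ProjectivePlane.card_points (PPt K) (PLn K)
  rw [hcard] at h
  exact sq_add_self_inj h.symm

lemma IG_regular (v : PPt K ⊕ PLn K) :
    ((IG K).neighborSet v).ncard = Fintype.card K + 1 := by
  classical
  rcases v with p | l
  · have e : {l : PLn K // p ∈ l} ≃ ((IG K).neighborSet (.inl p)) := by
      refine Equiv.ofBijective (fun l => ⟨.inr l.1, l.2⟩) ⟨?_, ?_⟩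
      · rintro ⟨l₁, h₁⟩ ⟨l₂, h₂⟩ h
        simp only [Subtype.mk.injEq, Sum.inr.injEq] at h
        exact Subtype.ext (Sum.inr_injective (congrArg Subtype.val h))
      · rintro ⟨p' | l', h⟩
        · exact absurd (((IG K).mem_neighborSet _ _).mp h) IG_adj_inl_inl
        · exact ⟨⟨l', ((IG K).mem_neighborSet _ _).mp h⟩, rfl⟩
    rw [← Nat.card_coe_set_eq, ← Nat.card_congr e]
    show Configuration.lineCount (PLn K) p = _
    rw [Configuration.ProjectivePlane.lineCount_eq, order_eq]
  · have e : {p : PPt K // p ∈ l} ≃ ((IG K).neighborSet (.inr l)) := by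
      refine Equiv.ofBijective (fun p => ⟨.inl p.1, p.2⟩) ⟨?_, ?_⟩
      · rintro ⟨p₁, h₁⟩ ⟨p₂, h₂⟩ h
        simp only [Subtype.mk.injEq, Sum.inl.injEq] at h
        exact Subtype.ext (Sum.inl_injective (congrArg Subtype.val h))
      · rintro ⟨p' | l', h⟩
        · exact ⟨⟨p', ((IG K).mem_neighborSet _ _).mp h⟩, rfl⟩
        · exact absurd (((IG K).mem_neighborSet _ _).mp h) IG_adj_inr_inr
    rw [← Nat.card_coe_set_eq, ← Nat.card_congr e]
    show Configuration.pointCount (PPt K) l = _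
    rw [Configuration.ProjectivePlane.pointCount_eq, order_eq]
end Reg

section Girth
open SimpleGraph Configuration
variable {K : Type} [Field K]

lemma IG_no_four_cycle {x : PPt K ⊕ PLn K} (w : (IG K).Walk x x) (hc : w.IsCycle) :
    w.length ≠ 4 := by
  intro hlen
  cases w with
  | nil => simp at hlen
  | cons h1 w1 =>
  cases w1 with
  | nil => simp at hlen
  | cons h2 w2 =>
  cases w2 with
  | nil => simp at hlen
  | cons h3 w3 =>
  cases w3 with
  | nil => simp at hlen
  | cons h4 w4 =>
  cases w4 with
  | cons h5 w5 => simp [SimpleGraph.Walk.length_cons] at hlen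
  | nil =>
    rename_i b c d
    have hnd := hc.2
    simp only [SimpleGraph.Walk.support_cons, SimpleGraph.Walk.support_nil, List.tail_cons] at hnd
    have hbc : b ≠ c := by simp at hnd; tauto
    have hcd : c ≠ d := by simp at hnd; tauto
    have hbd : b ≠ d := by simp at hnd; tauto
    have hxb : x ≠ b := by simp at hnd; tauto
    have hxc : x ≠ c := by simp at hnd; tauto
    have hxd : x ≠ d := by simp at hnd; tauto
    rcases x with p|l
    · rcases b with p₁|l₁
      · exact IG_adj_inl_inl h1
      rcases c with p₂|l₂
      swap
      · exact IG_adj_inr_inr h2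
      rcases d with p₃|l₃
      · exact IG_adj_inl_inl h3
      have hne : p ≠ p₂ := fun h => hxc (by rw [h])
      have hlne : l₁ ≠ l₃ := fun h => hbd (by rw [h])
      rcases Configuration.Nondegenerate.eq_or_eq (P := PPt K) (L := PLn K)
        (IG_adj_inl_inr.mp h1) (IG_adj_inr_inl.mp h2) (IG_adj_inr_inl.mp h4) (IG_adj_inl_inr.mp h3)
        with h | h
      · exact hne h
      · exact hlne h
    · rcases b with p₁|l₁
      swap
      · exact IG_adj_inr_inr h1
      rcases c with p₂|l₂
      · exact IG_adj_inl_inl h2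
      rcases d with p₃|l₃
      swap
      · exact IG_adj_inr_inr h3
      have hne : p₁ ≠ p₃ := fun h => hbd (by rw [h])
      have hlne : l ≠ l₂ := fun h => hxc (by rw [h])
      rcases Configuration.Nondegenerate.eq_or_eq (P := PPt K) (L := PLn K)
        (IG_adj_inr_inl.mp h1) (IG_adj_inl_inr.mp h4) (IG_adj_inl_inr.mp h2) (IG_adj_inr_inl.mp h3)
        with h | h
      · exact hne h
      · exact hlne h
end Girth

section Hex
open SimpleGraph Configuration Configuration.ProjectivePlane
variable {K : Type} [Field K]

lemma IG_exists_hexagon :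
    ∃ (x : PPt K ⊕ PLn K) (w : (IG K).Walk x x), w.IsCycle ∧ w.length = 6 := by
  classical
  obtain ⟨p₁, p₂, p₃, l₁, l₂, l₃, h12, h13, h21, h22, h23, h31, h32, h33⟩ :=
    Configuration.ProjectivePlane.exists_config (P := PPt K) (L := PLn K)
  have hAB : p₁ ≠ p₂ := fun h => h12 (h ▸ h22)
  have hAC : p₁ ≠ p₃ := fun h => h12 (h ▸ h32)
  have hBC : p₂ ≠ p₃ := fun h => h33 (h ▸ h23)
  -- noncollinearity: any line containing p₂ and p₃ equals l₂, which misses p₁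
  have huniq : ∀ m : PLn K, p₂ ∈ m → p₃ ∈ m → m = l₂ := fun m hm2 hm3 =>
    (Configuration.HasLines.existsUnique_line (PPt K) (PLn K) p₂ p₃ hBC).unique
      ⟨hm2, hm3⟩ ⟨h22, h32⟩
  set lab := Configuration.HasLines.mkLine (P := PPt K) (L := PLn K) hAB with hlab
  set lbc := Configuration.HasLines.mkLine (P := PPt K) (L := PLn K) hBC with hlbc
  set lca := Configuration.HasLines.mkLine (P := PPt K) (L := PLn K) hAC.symm with hlca
  have hab1 : p₁ ∈ lab := (Configuration.HasLines.mkLine_ax hAB).1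
  have hab2 : p₂ ∈ lab := (Configuration.HasLines.mkLine_ax hAB).2
  have hbc1 : p₂ ∈ lbc := (Configuration.HasLines.mkLine_ax hBC).1
  have hbc2 : p₃ ∈ lbc := (Configuration.HasLines.mkLine_ax hBC).2
  have hca1 : p₃ ∈ lca := (Configuration.HasLines.mkLine_ax hAC.symm).1
  have hca2 : p₁ ∈ lca := (Configuration.HasLines.mkLine_ax hAC.symm).2
  have h1 : lab ≠ lbc := fun h => h12 (huniq lab hab2 (h ▸ hbc2) ▸ hab1)
  have h2 : lbc ≠ lca := fun h => h12 (huniq lbc hbc1 hbc2 ▸ (h ▸ hca2 : p₁ ∈ lbc))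
  have h3 : lab ≠ lca := fun h => h12 (huniq lab hab2 (h ▸ hca1) ▸ hab1)
  refine ⟨.inl p₁,
    .cons (IG_adj_inl_inr.mpr hab1)
      (.cons (IG_adj_inr_inl.mpr hab2)
        (.cons (IG_adj_inl_inr.mpr hbc1)
          (.cons (IG_adj_inr_inl.mpr hbc2)
            (.cons (IG_adj_inl_inr.mpr hca1)
              (.cons (IG_adj_inr_inl.mpr hca2) .nil))))), ?_, by simp⟩
  rw [SimpleGraph.Walk.isCycle_def]
  refine ⟨?_, by simp, ?_⟩
  · rw [SimpleGraph.Walk.isTrail_def]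
    simp only [SimpleGraph.Walk.edges_cons, SimpleGraph.Walk.edges_nil]
    simp [List.nodup_cons, Sym2.eq_iff, hAB, hBC, hAC, h1, h2, h3, hAB.symm, hBC.symm, hAC.symm,
      h1.symm, h2.symm, h3.symm]
  · simp only [SimpleGraph.Walk.support_cons, SimpleGraph.Walk.support_nil, List.tail_cons]
    simp [List.nodup_cons, hAB, hBC, hAC, h1, h2, h3, hAB.symm, hBC.symm, hAC.symm,
      h1.symm, h2.symm, h3.symm, hAC.symm.symm]

lemma IG_girth : (IG K).girth = 6 := by
  have hle : (IG K).egirth ≤ 6 := by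
    obtain ⟨x, w, hc, hlen⟩ := IG_exists_hexagon (K := K)
    calc (IG K).egirth ≤ (w.length : ℕ∞) := by
          apply iInf_le_of_le x
          apply iInf_le_of_le w
          exact iInf_le_of_le hc le_rfl
      _ = 6 := by rw [hlen]; rfl
  have hge : (6 : ℕ∞) ≤ (IG K).egirth := by
    rw [SimpleGraph.le_egirth]
    intro a w hc
    have h3 : 3 ≤ w.length := hc.three_le_length
    have h4 : w.length ≠ 4 := IG_no_four_cycle w hc
    obtain ⟨k, hk⟩ := IG_closed_even w
    have : 6 ≤ w.length := by omega
    exact_mod_cast Nat.cast_le.mpr this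
  have : (IG K).egirth = 6 := le_antisymm hle hge
  rw [SimpleGraph.girth, this]
  rfl
end Hex

section Chrom2
open SimpleGraph Configuration
variable {K : Type} [Field K] [Fintype K]

lemma power2_mem {p : PPt K} {l : PLn K}
    (h : ((IG K).power 2).Adj (.inl p) (.inr l)) : p ∈ l := by
  obtain ⟨-, w, -, hlen⟩ := h
  exact IG_mem_of_short_walk w hlen

lemma chrom2_eq : ((IG K).power 2).chromaticNumber = (Nat.card (PPt K) : ℕ∞) := by
  classical
  letI : Fintype (PPt K) := Fintype.ofFinite _
  letI : Fintype (PLn K) := Fintype.ofFinite _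
  have hcards : Fintype.card (PPt K) = Fintype.card (PLn K) :=
    Configuration.ProjectivePlane.card_points_eq_card_lines (PPt K) (PLn K)
  obtain ⟨f, hfinj, hfmem⟩ :=
    Configuration.Nondegenerate.exists_injective_of_card_le (P := PPt K) (L := PLn K) hcards.ge
  apply le_antisymm
  · -- coloring with points as colors
    have C : ((IG K).power 2).Coloring (PPt K) := by
      refine SimpleGraph.Coloring.mk (Sum.elim id f) ?_
      rintro (p|l) (p'|l') hadj
      · exact fun hc => hadj.1 (congrArg Sum.inl hc)
      · intro hc
        simp only [Sum.elim_inl, Sum.elim_inr, id] at hc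
        exact hfmem l' (hc ▸ power2_mem hadj)
      · intro hc
        simp only [Sum.elim_inl, Sum.elim_inr, id] at hc
        exact hfmem l (hc ▸ power2_mem hadj.symm)
      · exact fun hc => hadj.1 (congrArg Sum.inr (hfinj hc))
    have := C.colorable.chromaticNumber_le
    rwa [Nat.card_eq_fintype_card]
  · have hclique : ((IG K).power 2).IsClique
        ((Finset.univ : Finset (PPt K)).map ⟨Sum.inl, Sum.inl_injective⟩ : Finset (PPt K ⊕ PLn K)) := by
      intro x hx y hy hxy
      simp only [Finset.coe_map, Set.mem_image, Finset.coe_univ, Set.image_univ,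
        Set.mem_range, Function.Embedding.coeFn_mk] at hx hy
      obtain ⟨p, rfl⟩ := hx
      obtain ⟨p', rfl⟩ := hy
      have hp : p ≠ p' := fun h => hxy (congrArg Sum.inl h)
      have hm := Configuration.HasLines.mkLine_ax (P := PPt K) (L := PLn K) hp
      refine ⟨hxy, .cons (IG_adj_inl_inr.mpr hm.1) (.cons (IG_adj_inr_inl.mpr hm.2) .nil), ?_, by simp⟩
      rw [SimpleGraph.Walk.isPath_def]
      simp [hp]
    have := hclique.card_le_chromaticNumber
    simp only [Finset.card_map, Finset.card_univ] at this
    rwa [Nat.card_eq_fintype_card]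
end Chrom2

section Chrom3
open SimpleGraph Configuration
variable {K : Type} [Field K]

lemma IG_edge_form (e : Sym2 (PPt K ⊕ PLn K)) (he : e ∈ (IG K).edgeSet) :
    ∃ p l, p ∈ l ∧ e = s(.inl p, .inr l) := by
  induction e with
  | _ x y =>
    rw [SimpleGraph.mem_edgeSet] at he
    rcases x with p|l <;> rcases y with p'|l'
    · exact absurd he IG_adj_inl_inl
    · exact ⟨p, l', he, rfl⟩
    · exact ⟨p', l, he, Sym2.eq_swap⟩
    · exact absurd he IG_adj_inr_inr

lemma IG_edge_eq_iff {p p' : PPt K} {l l' : PLn K} :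
    (s(.inl p, .inr l) : Sym2 (PPt K ⊕ PLn K)) = s(.inl p', .inr l') ↔ p = p' ∧ l = l' := by
  rw [Sym2.eq_iff]
  constructor
  · rintro (⟨h1, h2⟩ | ⟨h1, h2⟩)
    · exact ⟨Sum.inl_injective h1, Sum.inr_injective h2⟩
    · exact absurd h1 (by simp)
  · rintro ⟨rfl, rfl⟩
    exact Or.inl ⟨rfl, rfl⟩

lemma lg_adj' {e f : Sym2 (PPt K ⊕ PLn K)} (he : e ∈ (IG K).edgeSet)
    (hf : f ∈ (IG K).edgeSet) (hne : e ≠ f) (v : PPt K ⊕ PLn K)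
    (hv1 : v ∈ e) (hv2 : v ∈ f) : (IG K).lineGraph.Adj ⟨e, he⟩ ⟨f, hf⟩ :=
  SimpleGraph.lineGraph_adj_iff_exists.mpr
    ⟨fun h => hne (congrArg Subtype.val h), v, hv1, hv2⟩

lemma lineGraph_power3_top : ((IG K).lineGraph).power 3 = ⊤ := by
  classical
  apply le_antisymm le_top
  rintro ⟨ev, hev⟩ ⟨fv, hfv⟩ hef
  rw [SimpleGraph.top_adj] at hef
  obtain ⟨p, l, hpl, rfl⟩ := IG_edge_form ev hev
  obtain ⟨p', l', hp'l', rfl⟩ := IG_edge_form fv hfv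
  suffices h : ∃ w : ((IG K).lineGraph).Walk ⟨s(.inl p, .inr l), hev⟩ ⟨s(.inl p', .inr l'), hfv⟩,
      w.length ≤ 3 by
    obtain ⟨w, hw⟩ := h
    exact ⟨hef, w.bypass, w.bypass_isPath, w.length_bypass_le.trans hw⟩
  have hne' : s(Sum.inl p, Sum.inr l) ≠ s(Sum.inl p', Sum.inr l') := by
    intro h; exact (hef (Subtype.ext h)).elim
  by_cases hpp : p = p'
  · subst hpp
    refine ⟨.cons (lg_adj' hev hfv hne' (.inl p) (by simp) (by simp)) .nil, by simp⟩
  have hnep : ∀ (m m' : PLn K) (h1 : p ∈ m) (h2 : p' ∈ m'),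
      s(Sum.inl p, Sum.inr m) ≠ s(Sum.inl p', Sum.inr m') :=
    fun m m' _ _ h => hpp (IG_edge_eq_iff.mp h).1
  by_cases hll : l = l'
  · subst hll
    refine ⟨.cons (lg_adj' hev hfv hne' (.inr l) (by simp) (by simp)) .nil, by simp⟩
  have hnel : ∀ (q q' : PPt K) (m m' : PLn K), m ≠ m' →
      s(Sum.inl q, Sum.inr m) ≠ s(Sum.inl q', Sum.inr m') :=
    fun q q' m m' hm h => hm (IG_edge_eq_iff.mp h).2
  by_cases hpl' : p ∈ l'
  · have hg : s(Sum.inl p, Sum.inr l') ∈ (IG K).edgeSet := ((IG K).mem_edgeSet).mpr hpl'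
    refine ⟨.cons (lg_adj' hev hg (hnel _ _ _ _ hll) (.inl p) (by simp) (by simp))
      (.cons (lg_adj' hg hfv (hnep _ _ hpl' hp'l') (.inr l') (by simp) (by simp)) .nil), by simp⟩
  by_cases hp'l : p' ∈ l
  · have hg : s(Sum.inl p', Sum.inr l) ∈ (IG K).edgeSet := ((IG K).mem_edgeSet).mpr hp'l
    refine ⟨.cons (lg_adj' hev hg (hnep _ _ hpl hp'l) (.inr l) (by simp) (by simp))
      (.cons (lg_adj' hg hfv (hnel _ _ _ _ hll) (.inl p') (by simp) (by simp)) .nil), by simp⟩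
  · have hax := Configuration.HasPoints.mkPoint_ax (P := PPt K) (L := PLn K) (Ne.intro hll)
    set q0 := Configuration.HasPoints.mkPoint (P := PPt K) (L := PLn K) (Ne.intro hll) with hq0
    have hq0p : p ≠ q0 := fun h => hpl' (h ▸ hax.2)
    have hq0p' : q0 ≠ p' := fun h => hp'l (h ▸ hax.1)
    have hg1 : s(Sum.inl q0, Sum.inr l) ∈ (IG K).edgeSet := ((IG K).mem_edgeSet).mpr hax.1
    have hg2 : s(Sum.inl q0, Sum.inr l') ∈ (IG K).edgeSet := ((IG K).mem_edgeSet).mpr hax.2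
    have hne1 : s(Sum.inl p, Sum.inr l) ≠ (s(Sum.inl q0, Sum.inr l) : Sym2 (PPt K ⊕ PLn K)) :=
      fun h => hq0p (IG_edge_eq_iff.mp h).1
    have hne2 : s(Sum.inl q0, Sum.inr l') ≠ (s(Sum.inl p', Sum.inr l') : Sym2 (PPt K ⊕ PLn K)) :=
      fun h => hq0p' (IG_edge_eq_iff.mp h).1
    refine ⟨.cons (lg_adj' hev hg1 hne1 (.inr l) (by simp) (by simp))
      (.cons (lg_adj' hg1 hg2 (hnel _ _ _ _ hll) (.inl q0) (by simp) (by simp))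
      (.cons (lg_adj' hg2 hfv hne2 (.inr l') (by simp) (by simp)) .nil)), by simp⟩

lemma IG_card_edges [Fintype K] :
    Nat.card (IG K).edgeSet = Nat.card (PPt K) * (Fintype.card K + 1) := by
  classical
  letI : Fintype (PPt K) := Fintype.ofFinite _
  letI : Fintype (PLn K) := Fintype.ofFinite _
  have hbij : Function.Bijective
      (fun x : Σ p : PPt K, {l : PLn K // p ∈ l} =>
        (⟨s(.inl x.1, .inr x.2.1), x.2.2⟩ : (IG K).edgeSet)) := by
    constructor
    · rintro ⟨p₁, l₁, h₁⟩ ⟨p₂, l₂, h₂⟩ h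
      simp only [Subtype.mk.injEq, IG_edge_eq_iff] at h
      obtain ⟨rfl, rfl⟩ := IG_edge_eq_iff.mp (congrArg Subtype.val h)
      rfl
    · rintro ⟨e, he⟩
      obtain ⟨p, l, hpl, rfl⟩ := IG_edge_form e he
      exact ⟨⟨p, l, hpl⟩, rfl⟩
  rw [← Nat.card_congr (Equiv.ofBijective _ hbij)]
  letI : ∀ p : PPt K, Fintype {l : PLn K // p ∈ l} := fun p => Fintype.ofFinite _
  have hsum : ∀ p : PPt K, Fintype.card {l : PLn K // p ∈ l} = Fintype.card K + 1 := by
    intro p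
    have h1 : Configuration.lineCount (PLn K) p = Fintype.card K + 1 := by
      rw [Configuration.ProjectivePlane.lineCount_eq, order_eq]
    rw [← h1, Configuration.lineCount, Nat.card_eq_fintype_card]
  rw [Nat.card_eq_fintype_card, Fintype.card_sigma]
  simp only [hsum, Finset.sum_const, smul_eq_mul, Finset.card_univ, Nat.card_eq_fintype_card]

lemma chrom3_eq [Fintype K] : (((IG K).lineGraph).power 3).chromaticNumber
    = (Nat.card (IG K).edgeSet : ℕ∞) := by
  classical
  letI : Fintype (PPt K) := Fintype.ofFinite _
  letI : Fintype (PLn K) := Fintype.ofFinite _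
  letI : Fintype (IG K).edgeSet := Fintype.ofFinite _
  rw [lineGraph_power3_top, SimpleGraph.chromaticNumber_top, Nat.card_eq_fintype_card]
end Chrom3

/-- Proposition 5, first item: if `d - 1` is a prime power, there is a `d`-regular
bipartite graph `P` of girth 6 with `χ_2(P) = d² - d + 1` and `χ'_3(P) = d³ - d² + d`. -/
theorem projective_plane_incidence_graph_distance_colouring
    (d : ℕ) (h : ∃ p k : ℕ, p.Prime ∧ 0 < k ∧ d - 1 = p ^ k) :
    ∃ (V : Type) (_ : Fintype V) (P : SimpleGraph V),
      (∀ v : V, (P.neighborSet v).ncard = d) ∧ BipartiteGraph P ∧ P.girth = 6 ∧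
      (((distChromNum P 2).toNat : ℤ) = (d : ℤ) ^ 2 - d + 1) ∧
      (((distChromIndex P 3).toNat : ℤ) = (d : ℤ) ^ 3 - (d : ℤ) ^ 2 + d) := by
  classical
  obtain ⟨p, k, hp, hk, hd⟩ := h
  haveI : Fact p.Prime := ⟨hp⟩
  set K := GaloisField p k with hK
  haveI : Fintype K := Fintype.ofFinite _
  have hcardK : Fintype.card K = p ^ k := by
    rw [← Nat.card_eq_fintype_card]
    exact GaloisField.card p k hk.ne'
  set q := p ^ k with hq
  have hq2 : 2 ≤ q := le_trans hp.two_le (Nat.le_self_pow hk.ne' p)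
  have hdq : d = q + 1 := by
    rcases Nat.eq_zero_or_pos d with h0 | h0
    · omega
    · omega
  haveI : Fintype (PPt K ⊕ PLn K) := Fintype.ofFinite _
  refine ⟨PPt K ⊕ PLn K, inferInstance, IG K, ?_, ?_, IG_girth, ?_, ?_⟩
  · intro v
    rw [IG_regular v, hcardK]
    omega
  · refine ⟨Set.range Sum.inl, ?_⟩
    rintro (p₁|l₁) (p₂|l₂) hadj
    · exact absurd hadj IG_adj_inl_inl
    · simp
    · simp
    · exact absurd hadj IG_adj_inr_inr
  · rw [distChromNum, chrom2_eq, ENat.toNat_coe, card_ppt, hcardK, hdq]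
    push_cast
    ring
  · rw [distChromIndex, chrom3_eq, ENat.toNat_coe, IG_card_edges, card_ppt, hcardK, hdq]
    push_cast
    ring
end Count
end

section
/- Let d be an integer such that d − 1 is a prime power. Then there exists a d-regular bipartite simple graph Q of girth 8 such that χ'_4(Q) = d⁴ − 2d³ + 2d². -/
open Module LinearMap Submodule

noncomputable section SymGeo

variable (K : Type) [Field K]

abbrev V4 (K : Type) [Field K] := Fin 4 → K

/-- The standard symplectic form on `K^4`. -/
def sB : LinearMap.BilinForm K (V4 K) :=
  LinearMap.mk₂ K (fun x y => x 0 * y 1 - x 1 * y 0 + x 2 * y 3 - x 3 * y 2)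
    (by intros; simp [Pi.add_apply]; ring)
    (by intros; simp [Pi.smul_apply]; ring)
    (by intros; simp [Pi.add_apply]; ring)
    (by intros; simp [Pi.smul_apply]; ring)

variable {K}

lemma sB_apply (x y : V4 K) : sB K x y = x 0 * y 1 - x 1 * y 0 + x 2 * y 3 - x 3 * y 2 := rfl

lemma sB_alt : (sB K).IsAlt := fun x => by simp [sB_apply]; ring

lemma sB_refl : (sB K).IsRefl := sB_alt.isRefl

lemma sB_nondegenerate : (sB K).Nondegenerate := by
  constructor <;>
  · intro x hx
    funext i
    fin_cases i
    · simpa [sB_apply, Pi.single_apply] using hx (Pi.single 1 1)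
    · simpa [sB_apply, Pi.single_apply] using hx (Pi.single 0 1)
    · simpa [sB_apply, Pi.single_apply] using hx (Pi.single 3 1)
    · simpa [sB_apply, Pi.single_apply] using hx (Pi.single 2 1)

/-- Totally isotropic submodule. -/
def TI (W : Submodule K (V4 K)) : Prop := ∀ x ∈ W, ∀ y ∈ W, sB K x y = 0

lemma finrank_V4 : finrank K (V4 K) = 4 := by simp

lemma finrank_orth (W : Submodule K (V4 K)) :
    finrank K ((sB K).orthogonal W) = 4 - finrank K W := by
  rw [LinearMap.BilinForm.finrank_orthogonal sB_nondegenerate, finrank_V4]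

lemma TI.le_orth {W : Submodule K (V4 K)} (h : TI W) : W ≤ (sB K).orthogonal W :=
  fun x hx => by
    intro n hn
    exact h n hn x hx

lemma TI.finrank_le_two {W : Submodule K (V4 K)} (h : TI W) : finrank K W ≤ 2 := by
  have h1 := Submodule.finrank_mono h.le_orth
  have h2 := finrank_orth W
  have h3 : finrank K W ≤ finrank K (V4 K) := Submodule.finrank_le W
  rw [finrank_V4] at h3
  omega

lemma rank_one_exists {W : Submodule K (V4 K)} (h : finrank K W = 1) :
    ∃ u : V4 K, u ≠ 0 ∧ W = K ∙ u := by
  have hp : W.IsPrincipal := W.finrank_le_one_iff_isPrincipal.mp h.le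
  obtain ⟨u, hu⟩ := hp
  refine ⟨u, ?_, hu⟩
  rintro rfl
  rw [hu, Submodule.span_zero_singleton] at h
  simp at h

lemma TI_span_singleton (u : V4 K) : TI (K ∙ u) := by
  intro x hx y hy
  obtain ⟨a, rfl⟩ := Submodule.mem_span_singleton.mp hx
  obtain ⟨b, rfl⟩ := Submodule.mem_span_singleton.mp hy
  simp [sB_alt u]

lemma orth_sup_left {A B C : Submodule K (V4 K)}
    (hA : ∀ x ∈ A, ∀ y ∈ C, sB K x y = 0) (hB : ∀ x ∈ B, ∀ y ∈ C, sB K x y = 0) :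
    ∀ x ∈ A ⊔ B, ∀ y ∈ C, sB K x y = 0 := by
  intro x hx y hy
  obtain ⟨a, ha, b, hb, rfl⟩ := Submodule.mem_sup.mp hx
  simp [hA a ha y hy, hB b hb y hy]

lemma TI.sup {A B : Submodule K (V4 K)} (hA : TI A) (hB : TI B)
    (hAB : ∀ x ∈ A, ∀ y ∈ B, sB K x y = 0) : TI (A ⊔ B) := by
  have hBA : ∀ x ∈ B, ∀ y ∈ A, sB K x y = 0 := fun x hx y hy => sB_refl _ _ (hAB y hy x hx)
  intro x hx y hy
  obtain ⟨a, ha, b, hb, rfl⟩ := Submodule.mem_sup.mp hy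
  have h1 := orth_sup_left hA hBA x hx a ha
  have h2 := orth_sup_left hAB hB x hx b hb
  simp [h1, h2]

end SymGeo

section Part2
variable {K : Type} [Field K]

open Module LinearMap Submodule

lemma inf_eq_bot_of_rank_one_ne {P Q : Submodule K (V4 K)}
    (hP : finrank K P = 1) (hQ : finrank K Q = 1) (hne : P ≠ Q) : P ⊓ Q = ⊥ := by
  by_contra hbot
  have h1 : finrank K (P ⊓ Q : Submodule K (V4 K)) ≠ 0 := by
    rwa [ne_eq, Submodule.finrank_eq_zero]
  have h2 : finrank K (P ⊓ Q : Submodule K (V4 K)) ≤ 1 := hP ▸ Submodule.finrank_mono inf_le_left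
  have h3 : finrank K (P ⊓ Q : Submodule K (V4 K)) = 1 := by omega
  have e1 : P ⊓ Q = P := Submodule.eq_of_le_of_finrank_le inf_le_left (by omega)
  have e2 : P ⊓ Q = Q := Submodule.eq_of_le_of_finrank_le inf_le_right (by omega)
  exact hne (e1 ▸ e2)

lemma rank_sup_two {P Q : Submodule K (V4 K)}
    (hP : finrank K P = 1) (hQ : finrank K Q = 1) (hne : P ≠ Q) :
    finrank K (P ⊔ Q : Submodule K (V4 K)) = 2 := by
  have := Submodule.finrank_sup_add_finrank_inf_eq P Q
  rw [inf_eq_bot_of_rank_one_ne hP hQ hne] at this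
  simp [hP, hQ] at this
  omega

/-- Two distinct rank-1 subspaces lie on at most one rank-2 subspace. -/
lemma line_unique {P Q L M : Submodule K (V4 K)}
    (hP : finrank K P = 1) (hQ : finrank K Q = 1) (hne : P ≠ Q)
    (hL : finrank K L = 2) (hM : finrank K M = 2)
    (hPL : P ≤ L) (hQL : Q ≤ L) (hPM : P ≤ M) (hQM : Q ≤ M) : L = M := by
  have hsup : finrank K (P ⊔ Q : Submodule K (V4 K)) = 2 := rank_sup_two hP hQ hne
  have e1 : P ⊔ Q = L := Submodule.eq_of_le_of_finrank_le (sup_le hPL hQL) (by omega)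
  have e2 : P ⊔ Q = M := Submodule.eq_of_le_of_finrank_le (sup_le hPM hQM) (by omega)
  exact e1 ▸ e2

/-- No triangles: three pairwise "collinear" points must be on one line. -/
lemma no_triangle {P Q R L M : Submodule K (V4 K)}
    (hP : finrank K P = 1) (hQ : finrank K Q = 1) (hR : finrank K R = 1)
    (hPQ : P ≠ Q) (hQR : Q ≠ R)
    (hL : finrank K L = 2) (hM : finrank K M = 2) (hTL : TI L) (hTM : TI M)
    (hPL : P ≤ L) (hQL : Q ≤ L) (hQM : Q ≤ M) (hRM : R ≤ M)
    (hPR : ∀ x ∈ P, ∀ y ∈ R, sB K x y = 0) : L = M := by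
  obtain ⟨p, hp0, rfl⟩ := rank_one_exists hP
  obtain ⟨q, hq0, rfl⟩ := rank_one_exists hQ
  obtain ⟨r, hr0, rfl⟩ := rank_one_exists hR
  have hPQo : ∀ x ∈ (K ∙ p), ∀ y ∈ (K ∙ q), sB K x y = 0 :=
    fun x hx y hy => hTL x (hPL hx) y (hQL hy)
  have hQRo : ∀ x ∈ (K ∙ q), ∀ y ∈ (K ∙ r), sB K x y = 0 :=
    fun x hx y hy => hTM x (hQM hx) y (hRM hy)
  have hTPQ : TI ((K ∙ p) ⊔ (K ∙ q)) := (TI_span_singleton p).sup (TI_span_singleton q) hPQo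
  have hTS : TI (((K ∙ p) ⊔ (K ∙ q)) ⊔ (K ∙ r)) := by
    refine hTPQ.sup (TI_span_singleton r) ?_
    exact orth_sup_left hPR hQRo
  have hrankS := hTS.finrank_le_two
  have h2 : finrank K ((K ∙ p) ⊔ (K ∙ q) : Submodule K (V4 K)) = 2 := rank_sup_two hP hQ hPQ
  have h2' : finrank K ((K ∙ q) ⊔ (K ∙ r) : Submodule K (V4 K)) = 2 := rank_sup_two hQ hR hQR
  have eS : (K ∙ p) ⊔ (K ∙ q) = ((K ∙ p) ⊔ (K ∙ q)) ⊔ (K ∙ r) :=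
    Submodule.eq_of_le_of_finrank_le le_sup_left (by omega)
  have eS' : (K ∙ q) ⊔ (K ∙ r) = ((K ∙ p) ⊔ (K ∙ q)) ⊔ (K ∙ r) :=
    Submodule.eq_of_le_of_finrank_le (sup_le (le_sup_of_le_left le_sup_right) le_sup_right)
      (by omega)
  have e1 : (K ∙ p) ⊔ (K ∙ q) = L :=
    Submodule.eq_of_le_of_finrank_le (sup_le hPL hQL) (by omega)
  have e2 : (K ∙ q) ⊔ (K ∙ r) = M :=
    Submodule.eq_of_le_of_finrank_le (sup_le hQM hRM) (by omega)
  rw [← e1, ← e2, eS, eS']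

/-- A rank-2 subspace between `P` and `P^⊥` is totally isotropic. -/
lemma TI_of_between {P W : Submodule K (V4 K)} (hP : finrank K P = 1)
    (hPW : P ≤ W) (hW : finrank K W = 2) (hWo : W ≤ (sB K).orthogonal P) : TI W := by
  obtain ⟨p, hp0, rfl⟩ := rank_one_exists hP
  obtain ⟨u, huW, huP⟩ := SetLike.exists_of_lt (lt_of_le_of_ne hPW (by rintro rfl; omega))
  have hWe : (K ∙ p) ⊔ (K ∙ u) = W := by
    have hu0 : u ≠ 0 := by rintro rfl; exact huP (Submodule.zero_mem _)
    have : finrank K ((K ∙ p) ⊔ (K ∙ u) : Submodule K (V4 K)) = 2 := by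
      refine rank_sup_two hP (finrank_span_singleton hu0) ?_
      rintro h
      exact huP (h ▸ Submodule.mem_span_singleton_self u)
    exact Submodule.eq_of_le_of_finrank_le
      (sup_le hPW ((Submodule.span_singleton_le_iff_mem _ _).mpr huW)) (by omega)
  rw [← hWe]
  refine (TI_span_singleton p).sup (TI_span_singleton u) ?_
  intro x hx y hy
  obtain ⟨a, rfl⟩ := Submodule.mem_span_singleton.mp hx
  obtain ⟨b, rfl⟩ := Submodule.mem_span_singleton.mp hy
  have h0 : sB K p u = 0 := hWo huW p (Submodule.mem_span_singleton_self p)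
  simp [h0]

/-- A totally isotropic rank-2 subspace containing `P` lies in `P^⊥`. -/
lemma TI.le_orth_point {P W : Submodule K (V4 K)} (hPW : P ≤ W) (hT : TI W) :
    W ≤ (sB K).orthogonal P := fun x hx n hn => hT n (hPW hn) x hx

end Part2

section Counting
variable {K : Type} [Field K] [Fintype K]

open Module LinearMap Submodule Finset

instance : Finite (Submodule K (V4 K)) :=
  Finite.of_injective (fun W => (W : Set (V4 K))) SetLike.coe_injective

omit [Fintype K] in
lemma rank_sup_point {P0 : Submodule K (V4 K)} {u : V4 K} (hu : u ∉ P0) :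
    finrank K (P0 ⊔ (K ∙ u) : Submodule K (V4 K)) = finrank K P0 + 1 := by
  have hu0 : u ≠ 0 := by rintro rfl; exact hu (Submodule.zero_mem _)
  have hinf : P0 ⊓ (K ∙ u) = ⊥ := by
    rw [Submodule.eq_bot_iff]
    rintro x ⟨hxP, hxu⟩
    obtain ⟨c, rfl⟩ := Submodule.mem_span_singleton.mp hxu
    rcases eq_or_ne c 0 with rfl | hc
    · simp
    · exact absurd ((Submodule.smul_mem_iff _ hc).mp hxP) hu
  have := Submodule.finrank_sup_add_finrank_inf_eq P0 (K ∙ u)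
  rw [hinf, finrank_span_singleton hu0] at this
  simp at this
  omega

lemma card_between {A C : Submodule K (V4 K)} (h : A ≤ C) :
    Nat.card {u : V4 K // u ∈ C ∧ u ∉ A} =
      Fintype.card K ^ finrank K C - Fintype.card K ^ finrank K A := by
  classical
  rw [Nat.card_eq_fintype_card, Fintype.card_subtype]
  have heq : univ.filter (fun u : V4 K => u ∈ C ∧ u ∉ A) =
      univ.filter (fun u => u ∈ C) \ univ.filter (fun u => u ∈ A) := by
    ext u; simp
  rw [heq, Finset.card_sdiff_of_subset (by intro u hu; simp at hu ⊢; exact h hu)]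
  rw [← Fintype.card_subtype, ← Fintype.card_subtype]
  rw [show Fintype.card {u : V4 K // u ∈ C} = Fintype.card C from rfl]
  rw [show Fintype.card {u : V4 K // u ∈ A} = Fintype.card A from rfl]
  rw [card_eq_pow_finrank (K := K) (V := C), card_eq_pow_finrank (K := K) (V := A)]

lemma count_main (P0 S : Submodule K (V4 K)) (hle : P0 ≤ S) :
    Nat.card {W : Submodule K (V4 K) // P0 ≤ W ∧ W ≤ S ∧ finrank K W = finrank K P0 + 1} *
      (Fintype.card K ^ (finrank K P0 + 1) - Fintype.card K ^ finrank K P0)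
      = Fintype.card K ^ finrank K S - Fintype.card K ^ finrank K P0 := by
  classical
  haveI : Fintype (Submodule K (V4 K)) := Fintype.ofFinite _
  set q := Fintype.card K
  set m := finrank K P0 with hm
  set Dom : Finset (V4 K) := univ.filter (fun u => u ∈ S ∧ u ∉ P0) with hDom
  set T : Finset (Submodule K (V4 K)) :=
    univ.filter (fun W => P0 ≤ W ∧ W ≤ S ∧ finrank K W = m + 1) with hT
  have hmap : ∀ u ∈ Dom, (P0 ⊔ (K ∙ u) : Submodule K (V4 K)) ∈ T := by
    intro u hu
    rw [hDom, Finset.mem_filter] at hu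
    obtain ⟨-, huS, huP⟩ := hu
    rw [hT, Finset.mem_filter]
    exact ⟨Finset.mem_univ _, le_sup_left,
      sup_le hle ((Submodule.span_singleton_le_iff_mem _ _).mpr huS), rank_sup_point huP⟩
  have hsum := Finset.card_eq_sum_card_fiberwise hmap
  have hfib : ∀ W ∈ T, (Dom.filter (fun u => (P0 ⊔ (K ∙ u) : Submodule K (V4 K)) = W)).card
      = q ^ (m + 1) - q ^ m := by
    intro W hW
    rw [hT, Finset.mem_filter] at hW
    obtain ⟨-, hPW, hWS, hWr⟩ := hW
    have heq : Dom.filter (fun u => (P0 ⊔ (K ∙ u) : Submodule K (V4 K)) = W) =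
        univ.filter (fun u : V4 K => u ∈ W ∧ u ∉ P0) := by
      ext u
      simp only [hDom, Finset.mem_filter, Finset.filter_filter, Finset.mem_univ, true_and]
      constructor
      · rintro ⟨⟨huS, huP⟩, rfl⟩
        exact ⟨Submodule.mem_sup_right (Submodule.mem_span_singleton_self u), huP⟩
      · rintro ⟨huW, huP⟩
        refine ⟨⟨hWS huW, huP⟩, ?_⟩
        exact Submodule.eq_of_le_of_finrank_le
          (sup_le hPW ((Submodule.span_singleton_le_iff_mem _ _).mpr huW))
          (by rw [hWr, rank_sup_point huP])
    rw [heq]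
    have := card_between (K := K) hPW
    rw [Nat.card_eq_fintype_card, Fintype.card_subtype, hWr] at this
    exact this
  rw [Finset.sum_congr rfl hfib, Finset.sum_const, smul_eq_mul] at hsum
  have hDomcard : Dom.card = q ^ finrank K S - q ^ m := by
    have := card_between (K := K) hle
    rw [Nat.card_eq_fintype_card, Fintype.card_subtype] at this
    exact this
  have hTc : Nat.card {W : Submodule K (V4 K) // P0 ≤ W ∧ W ≤ S ∧ finrank K W = m + 1} = T.card := by
    rw [Nat.card_eq_fintype_card, Fintype.card_subtype]
  rw [hTc, ← hsum, hDomcard]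

end Counting

section Graph
open Module LinearMap Submodule

variable (K : Type) [Field K]

/-- Vertices: points (rank-1 subspaces) and lines (totally isotropic rank-2 subspaces). -/
def Vrt := {W : Submodule K (V4 K) // finrank K W = 1 ∨ (finrank K W = 2 ∧ TI W)}



instance [Fintype K] : Finite (Vrt K) := by unfold Vrt; exact Subtype.finite

/-- The incidence graph of the symplectic quadrangle. -/
def QG : SimpleGraph (Vrt K) where
  Adj a b := a ≠ b ∧ (a.1 ≤ b.1 ∨ b.1 ≤ a.1)
  symm := by constructor; rintro a b ⟨h1, h2⟩; exact ⟨h1.symm, h2.symm⟩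
  loopless := by constructor; rintro a ⟨h1, -⟩; exact h1 rfl

variable {K}

lemma TI_of_rank_one {W : Submodule K (V4 K)} (h : finrank K W = 1) : TI W := by
  obtain ⟨u, -, rfl⟩ := rank_one_exists h
  exact TI_span_singleton u

lemma vrt_rank {a : Vrt K} : finrank K a.1 = 1 ∨ finrank K a.1 = 2 :=
  a.2.imp id And.left

lemma vrt_ti {a : Vrt K} : TI a.1 :=
  a.2.elim (fun h => TI_of_rank_one h) And.right

lemma adj_cases {a b : Vrt K} (h : (QG K).Adj a b) :
    (finrank K a.1 = 1 ∧ finrank K b.1 = 2 ∧ a.1 ≤ b.1) ∨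
    (finrank K b.1 = 1 ∧ finrank K a.1 = 2 ∧ b.1 ≤ a.1) := by
  obtain ⟨hne, hle | hle⟩ := h
  · have hlt : a.1 ≠ b.1 := fun e => hne (Subtype.ext e)
    have hr : finrank K a.1 < finrank K b.1 := by
      rcases lt_or_ge (finrank K a.1) (finrank K b.1) with h' | h'
      · exact h'
      · exact absurd (Submodule.eq_of_le_of_finrank_le hle h') hlt
    rcases vrt_rank (a := a) with h1 | h1 <;> rcases vrt_rank (a := b) with h2 | h2 <;>
      first
      | (left; exact ⟨h1, h2, hle⟩)
      | omega
  · have hlt : b.1 ≠ a.1 := fun e => hne (Subtype.ext e.symm)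
    have hr : finrank K b.1 < finrank K a.1 := by
      rcases lt_or_ge (finrank K b.1) (finrank K a.1) with h' | h'
      · exact h'
      · exact absurd (Submodule.eq_of_le_of_finrank_le hle h') hlt
    rcases vrt_rank (a := a) with h1 | h1 <;> rcases vrt_rank (a := b) with h2 | h2 <;>
      first
      | (right; exact ⟨h2, h1, hle⟩)
      | omega

lemma adj_of_le {a b : Vrt K} (h1 : finrank K a.1 = 1) (h2 : finrank K b.1 = 2)
    (hle : a.1 ≤ b.1) : (QG K).Adj a b :=
  ⟨fun e => by rw [e] at h1; omega, Or.inl hle⟩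

end Graph

section Degrees
open Module LinearMap Submodule

variable {K : Type} [Field K] [Fintype K]

/-- Neighbors of a line are the points on it. -/
def lineNbrEquiv (L : Vrt K) (h2 : finrank K L.1 = 2) :
    ((QG K).neighborSet L) ≃
      {W : Submodule K (V4 K) // (⊥ : Submodule K (V4 K)) ≤ W ∧ W ≤ L.1 ∧
        finrank K W = finrank K (⊥ : Submodule K (V4 K)) + 1} where
  toFun u := ⟨u.1.1, bot_le, by
    rcases adj_cases u.2 with ⟨h1, -, -⟩ | ⟨h1, -, hle⟩
    · omega
    · rw [finrank_bot]; exact ⟨hle, h1⟩⟩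
  invFun W := ⟨⟨W.1, Or.inl (by
      have h0 : finrank K (⊥ : Submodule K (V4 K)) = 0 := finrank_bot K _
      have h1 := W.2.2.2; omega)⟩, by
    refine (QG K).adj_symm (adj_of_le ?_ h2 W.2.2.1)
    show finrank K W.1 = 1
    have h0 : finrank K (⊥ : Submodule K (V4 K)) = 0 := finrank_bot K _
    have h1 := W.2.2.2; omega⟩
  left_inv u := Subtype.ext (Subtype.ext rfl)
  right_inv W := Subtype.ext rfl

/-- Neighbors of a point are the t.i. lines through it, i.e. rank-2 subspaces
between `P` and `P^⊥`. -/
def pointNbrEquiv (P : Vrt K) (h1 : finrank K P.1 = 1) :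
    ((QG K).neighborSet P) ≃
      {W : Submodule K (V4 K) // P.1 ≤ W ∧ W ≤ (sB K).orthogonal P.1 ∧
        finrank K W = finrank K P.1 + 1} where
  toFun u := ⟨u.1.1, by
    rcases adj_cases u.2 with ⟨-, hr2, hle⟩ | ⟨hr1, hr2, hle⟩
    · exact ⟨hle, (vrt_ti (a := u.1)).le_orth_point hle, by omega⟩
    · omega⟩
  invFun W := ⟨⟨W.1, Or.inr ⟨by omega, TI_of_between h1 W.2.1 (by omega) W.2.2.1⟩⟩,
    adj_of_le h1 (by show finrank K W.1 = 2; have := W.2.2.2; omega) W.2.1⟩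
  left_inv u := Subtype.ext (Subtype.ext rfl)
  right_inv W := Subtype.ext rfl

/-- Points as a type. -/
def pointEquiv : {v : Vrt K // finrank K v.1 = 1} ≃
    {W : Submodule K (V4 K) // (⊥ : Submodule K (V4 K)) ≤ W ∧ W ≤ (⊤ : Submodule K (V4 K)) ∧
      finrank K W = finrank K (⊥ : Submodule K (V4 K)) + 1} where
  toFun v := ⟨v.1.1, bot_le, le_top, by
    have h0 : finrank K (⊥ : Submodule K (V4 K)) = 0 := finrank_bot K _
    have h1 := v.2; omega⟩
  invFun W := ⟨⟨W.1, Or.inl (by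
      have h0 : finrank K (⊥ : Submodule K (V4 K)) = 0 := finrank_bot K _
      have h1 := W.2.2.2; omega)⟩, by
    show finrank K W.1 = 1
    have h0 : finrank K (⊥ : Submodule K (V4 K)) = 0 := finrank_bot K _
    have h1 := W.2.2.2; omega⟩
  left_inv v := Subtype.ext (Subtype.ext rfl)
  right_inv W := Subtype.ext rfl

end Degrees

section DegreeValues
open Module LinearMap Submodule

variable {K : Type} [Field K] [Fintype K]

lemma cancel_helper {X a b c : ℕ} (ha : 0 < a) (h : X * a = b) (hb : b = c * a) : X = c :=
  Nat.eq_of_mul_eq_mul_right ha (h.trans hb)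

lemma two_le_cardK : 2 ≤ Fintype.card K := Fintype.one_lt_card

lemma deg_line (L : Vrt K) (h2 : finrank K L.1 = 2) :
    ((QG K).neighborSet L).ncard = Fintype.card K + 1 := by
  have e := Nat.card_congr (lineNbrEquiv L h2)
  have hc := count_main (K := K) ⊥ L.1 bot_le
  rw [← Nat.card_coe_set_eq, e]
  simp only [finrank_bot, h2] at hc ⊢
  obtain ⟨r, hr⟩ : ∃ r, Fintype.card K = r + 2 :=
    ⟨Fintype.card K - 2, by have := two_le_cardK (K := K); omega⟩
  rw [hr] at hc ⊢
  have e0 : (r + 2) ^ 0 = 1 := by ring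
  have e1 : (r + 2) ^ (0 + 1) = r + 2 := by ring
  rw [e0, e1] at hc
  have ed : r + 2 - 1 = r + 1 := by omega
  rw [ed] at hc
  have hb : (r + 2) ^ 2 - 1 = (r + 3) * (r + 1) := by
    have ec : (r + 2) ^ 2 = (r + 3) * (r + 1) + 1 := by ring
    omega
  have := cancel_helper (by omega) hc hb
  omega

lemma deg_point (P : Vrt K) (h1 : finrank K P.1 = 1) :
    ((QG K).neighborSet P).ncard = Fintype.card K + 1 := by
  have e := Nat.card_congr (pointNbrEquiv P h1)
  have hle : P.1 ≤ (sB K).orthogonal P.1 := (TI_of_rank_one h1).le_orth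
  have hc := count_main (K := K) P.1 ((sB K).orthogonal P.1) hle
  have h3 : finrank K ((sB K).orthogonal P.1) = 3 := by rw [finrank_orth, h1]
  rw [← Nat.card_coe_set_eq, e]
  simp only [h1, h3] at hc ⊢
  obtain ⟨r, hr⟩ : ∃ r, Fintype.card K = r + 2 :=
    ⟨Fintype.card K - 2, by have := two_le_cardK (K := K); omega⟩
  rw [hr] at hc ⊢
  have e1 : (r + 2) ^ 1 = r + 2 := by ring
  rw [e1] at hc
  have e2 : (r + 2) ^ (1 + 1) = (r + 2) * (r + 1) + (r + 2) := by ring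
  rw [e2] at hc
  have ed : (r + 2) * (r + 1) + (r + 2) - (r + 2) = (r + 2) * (r + 1) := by omega
  rw [ed] at hc
  have hb : (r + 2) ^ 3 - (r + 2) = (r + 3) * ((r + 2) * (r + 1)) := by
    have ec : (r + 2) ^ 3 = (r + 3) * ((r + 2) * (r + 1)) + (r + 2) := by ring
    omega
  have hpos : 0 < (r + 2) * (r + 1) := by positivity
  have := cancel_helper hpos hc hb
  omega

lemma card_points : Nat.card {v : Vrt K // finrank K v.1 = 1} =
    Fintype.card K ^ 3 + Fintype.card K ^ 2 + Fintype.card K + 1 := by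
  have e := Nat.card_congr (pointEquiv (K := K))
  have hc := count_main (K := K) ⊥ ⊤ bot_le
  have h4 : finrank K (⊤ : Submodule K (V4 K)) = 4 := by
    rw [finrank_top]; exact finrank_V4
  rw [e]
  simp only [finrank_bot, h4] at hc ⊢
  obtain ⟨r, hr⟩ : ∃ r, Fintype.card K = r + 2 :=
    ⟨Fintype.card K - 2, by have := two_le_cardK (K := K); omega⟩
  rw [hr] at hc ⊢
  have e0 : (r + 2) ^ 0 = 1 := by ring
  have e1 : (r + 2) ^ (0 + 1) = r + 2 := by ring
  rw [e0, e1] at hc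
  have ed : r + 2 - 1 = r + 1 := by omega
  rw [ed] at hc
  have hb : (r + 2) ^ 4 - 1 =
      ((r + 2) ^ 3 + (r + 2) ^ 2 + (r + 2) + 1) * (r + 1) := by
    have ec : (r + 2) ^ 4 = ((r + 2) ^ 3 + (r + 2) ^ 2 + (r + 2) + 1) * (r + 1) + 1 := by ring
    omega
  exact cancel_helper (by omega) hc hb

end DegreeValues

section Parity
open Module SimpleGraph

variable {K : Type} [Field K]

lemma adj_resolve1 {a b : Vrt K} (h : (QG K).Adj a b) (ha : finrank K a.1 = 1) :
    finrank K b.1 = 2 ∧ a.1 ≤ b.1 := by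
  rcases adj_cases h with ⟨h1, h2, h3⟩ | ⟨h1, h2, h3⟩
  · exact ⟨h2, h3⟩
  · omega

lemma adj_resolve2 {a b : Vrt K} (h : (QG K).Adj a b) (ha : finrank K a.1 = 2) :
    finrank K b.1 = 1 ∧ b.1 ≤ a.1 := by
  rcases adj_cases h with ⟨h1, h2, h3⟩ | ⟨h1, h2, h3⟩
  · omega
  · exact ⟨h1, h3⟩

/-- Parity of a vertex. -/
noncomputable def prt (v : Vrt K) : ZMod 2 := (finrank K v.1 : ZMod 2)

lemma adj_prt {a b : Vrt K} (h : (QG K).Adj a b) : prt a + prt b = 1 := by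
  rcases adj_cases h with ⟨h1, h2, -⟩ | ⟨h1, h2, -⟩ <;>
    · unfold prt; rw [h1, h2]; decide

lemma walk_parity {u v : Vrt K} (p : (QG K).Walk u v) :
    (p.length : ZMod 2) = prt u + prt v := by
  induction p with
  | nil => exact (show ∀ a : ZMod 2, (0 : ZMod 2) = a + a by decide) _
  | cons h q ih =>
    have h2 := adj_prt h
    rw [Walk.length_cons]
    push_cast
    rw [ih]
    revert h2
    exact (show ∀ a b c d : ZMod 2, a + b = 1 → b + c + 1 = a + c by decide) _ _ _ 0

lemma closed_walk_even {v : Vrt K} (p : (QG K).Walk v v) : Even p.length := by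
  have := walk_parity p
  have h0 : ((p.length : ℕ) : ZMod 2) = 0 := by
    rw [this]
    exact (show ∀ a : ZMod 2, a + a = 0 by decide) _
  rw [ZMod.natCast_eq_zero_iff] at h0
  exact (even_iff_two_dvd).mpr h0

lemma bipartite_QG : BipartiteGraph (QG K) := by
  refine ⟨{v : Vrt K | finrank K v.1 = 1}, fun u v h => ?_⟩
  rcases adj_cases h with ⟨h1, h2, -⟩ | ⟨h1, h2, -⟩ <;>
    · constructor
      · intro hu hv
        simp only [Set.mem_setOf_eq] at hu hv
        omega
      · intro hv
        simp only [Set.mem_setOf_eq] at hv ⊢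
        by_contra hu
        rcases vrt_rank (a := u) with h' | h' <;> rcases vrt_rank (a := v) with h'' | h'' <;>
          simp_all <;> omega

end Parity

section CycleExtract
open SimpleGraph

variable {W : Type*} {G : SimpleGraph W}

lemma cycle4_extract {v : W} (p : G.Walk v v) (hc : p.IsCycle) (h4 : p.length = 4) :
    ∃ a b c, G.Adj v a ∧ G.Adj a b ∧ G.Adj b c ∧ G.Adj c v ∧ a ≠ c ∧ v ≠ b := by
  cases p with
  | nil => simp at h4
  | cons h1 q1 =>
  rename_i a
  cases q1 with
  | nil => simp at h4
  | cons h2 q2 =>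
  rename_i b
  cases q2 with
  | nil => simp at h4
  | cons h3 q3 =>
  rename_i c
  cases q3 with
  | nil => simp at h4
  | cons h4' q4 =>
  cases q4 with
  | cons h5 q5 => simp [Walk.length_cons] at h4
  | nil =>
    have hs := hc.support_nodup
    simp only [Walk.support_cons, Walk.support_nil, List.tail_cons] at hs
    simp only [List.nodup_cons, List.mem_cons, List.not_mem_nil, or_false,
      List.mem_singleton, List.nodup_nil, and_true, not_or] at hs
    exact ⟨a, b, c, h1, h2, h3, h4', hs.1.2.1, fun h => hs.2.1.2 h.symm⟩

lemma cycle6_extract {v : W} (p : G.Walk v v) (hc : p.IsCycle) (h6 : p.length = 6) :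
    ∃ a b c d e, G.Adj v a ∧ G.Adj a b ∧ G.Adj b c ∧ G.Adj c d ∧ G.Adj d e ∧ G.Adj e v ∧
      v ≠ b ∧ v ≠ d ∧ b ≠ d ∧ a ≠ c ∧ a ≠ e ∧ c ≠ e := by
  cases p with
  | nil => simp at h6
  | cons h1 q1 =>
  rename_i a
  cases q1 with
  | nil => simp at h6
  | cons h2 q2 =>
  rename_i b
  cases q2 with
  | nil => simp at h6
  | cons h3 q3 =>
  rename_i c
  cases q3 with
  | nil => simp at h6
  | cons h4 q4 =>
  rename_i d
  cases q4 with
  | nil => simp at h6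
  | cons h5 q5 =>
  rename_i e
  cases q5 with
  | nil => simp at h6
  | cons h6' q6 =>
  cases q6 with
  | cons h7 q7 => simp [Walk.length_cons] at h6
  | nil =>
    have hs := hc.support_nodup
    simp only [Walk.support_cons, Walk.support_nil, List.tail_cons] at hs
    simp only [List.nodup_cons, List.mem_cons, List.not_mem_nil, or_false,
      List.mem_singleton, List.nodup_nil, and_true, not_or] at hs
    exact ⟨a, b, c, d, e, h1, h2, h3, h4, h5, h6',
      fun h => hs.2.1.2.2.2 h.symm, fun h => hs.2.2.2.1.2 h.symm,
      hs.2.1.2.1, hs.1.2.1, hs.1.2.2.2.1, hs.2.2.1.2.1⟩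

end CycleExtract

section NoShortCycles
open Module SimpleGraph

variable {K : Type} [Field K]

lemma vrt_ne {a b : Vrt K} (h : a ≠ b) : a.1 ≠ b.1 := fun e => h (Subtype.ext e)

lemma no_cycle4 (v : Vrt K) (p : (QG K).Walk v v) (hc : p.IsCycle) : p.length ≠ 4 := by
  intro h4
  obtain ⟨a, b, c, hva, hab, hbc, hcv, hac, hvb⟩ := cycle4_extract p hc h4
  rcases vrt_rank (a := v) with hv | hv
  · obtain ⟨ha, hle1⟩ := adj_resolve1 hva hv
    obtain ⟨hb, hle2⟩ := adj_resolve2 hab ha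
    obtain ⟨hcr, hle3⟩ := adj_resolve1 hbc hb
    obtain ⟨-, hle4⟩ := adj_resolve2 hcv hcr
    exact hac (Subtype.ext (line_unique hv hb (vrt_ne hvb) ha hcr hle1 hle2 hle4 hle3))
  · obtain ⟨ha, hle1⟩ := adj_resolve2 hva hv
    obtain ⟨hb, hle2⟩ := adj_resolve1 hab ha
    obtain ⟨hcr, hle3⟩ := adj_resolve2 hbc hb
    obtain ⟨-, hle4⟩ := adj_resolve1 hcv hcr
    exact hvb (Subtype.ext (line_unique ha hcr (vrt_ne hac) hv hb hle1 hle4 hle2 hle3))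

lemma no_cycle6 (v : Vrt K) (p : (QG K).Walk v v) (hc : p.IsCycle) : p.length ≠ 6 := by
  intro h6
  obtain ⟨a, b, c, d, e, hva, hab, hbc, hcd, hde, hev, hvb, hvd, hbd, hac, hae, hce⟩ :=
    cycle6_extract p hc h6
  rcases vrt_rank (a := v) with hv | hv
  · -- points v, b, d; lines a, c, e
    obtain ⟨ha, hle1⟩ := adj_resolve1 hva hv      -- v ≤ a
    obtain ⟨hb, hle2⟩ := adj_resolve2 hab ha      -- b ≤ a
    obtain ⟨hcr, hle3⟩ := adj_resolve1 hbc hb     -- b ≤ c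
    obtain ⟨hd, hle4⟩ := adj_resolve2 hcd hcr     -- d ≤ c
    obtain ⟨he, hle5⟩ := adj_resolve1 hde hd      -- d ≤ e
    obtain ⟨-, hle6⟩ := adj_resolve2 hev he       -- v ≤ e
    refine hac (Subtype.ext (no_triangle hv hb hd (vrt_ne hvb) (vrt_ne hbd)
      ha hcr (vrt_ti (a := a)) (vrt_ti (a := c)) hle1 hle2 hle3 hle4 ?_))
    exact fun x hx y hy => (vrt_ti (a := e)) x (hle6 hx) y (hle5 hy)
  · -- lines v, b, d; points a, c, e
    obtain ⟨ha, hle1⟩ := adj_resolve2 hva hv      -- a ≤ v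
    obtain ⟨hb, hle2⟩ := adj_resolve1 hab ha      -- a ≤ b
    obtain ⟨hcr, hle3⟩ := adj_resolve2 hbc hb     -- c ≤ b
    obtain ⟨hd, hle4⟩ := adj_resolve1 hcd hcr     -- c ≤ d
    obtain ⟨he, hle5⟩ := adj_resolve2 hde hd      -- e ≤ d
    obtain ⟨-, hle6⟩ := adj_resolve1 hev he       -- e ≤ v
    refine hbd (Subtype.ext (no_triangle ha hcr he (vrt_ne hac) (vrt_ne hce)
      hb hd (vrt_ti (a := b)) (vrt_ti (a := d)) hle2 hle3 hle4 hle5 ?_))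
    exact fun x hx y hy => (vrt_ti (a := v)) x (hle1 hx) y (hle6 hy)

lemma egirth_lower : 8 ≤ (QG K).egirth := by
  rw [le_egirth]
  intro v w hw
  have h3 := hw.three_le_length
  have heven := closed_walk_even w
  have h4 := no_cycle4 v w hw
  have h6 := no_cycle6 v w hw
  have h8 : 8 ≤ w.length := by
    obtain ⟨m, hm⟩ := heven
    omega
  exact_mod_cast Nat.cast_le.mpr h8

end NoShortCycles

section EightCycle
open Module SimpleGraph Submodule

variable {K : Type} [Field K]

def sv (K : Type) [Field K] (i : Fin 4) : V4 K := Pi.single i 1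

lemma sv_ne_zero {i : Fin 4} : sv K i ≠ 0 := by
  intro h
  have := congrFun h i
  simp [sv] at this

lemma span_orth {u v : V4 K} (h : sB K u v = 0) :
    ∀ x ∈ (K ∙ u), ∀ y ∈ (K ∙ v), sB K x y = 0 := by
  intro x hx y hy
  obtain ⟨a, rfl⟩ := Submodule.mem_span_singleton.mp hx
  obtain ⟨b, rfl⟩ := Submodule.mem_span_singleton.mp hy
  simp [h]

lemma notmem_span_single {i j : Fin 4} (h : i ≠ j) : sv K i ∉ (K ∙ sv K j) := by
  intro hm
  obtain ⟨c, hc⟩ := Submodule.mem_span_singleton.mp hm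
  have := congrFun hc i
  simp [sv, Pi.single_apply, h, Ne.symm h] at this

lemma notmem_span_pair {i j k : Fin 4} (hij : i ≠ j) (hik : i ≠ k) :
    sv K i ∉ ((K ∙ sv K j) ⊔ (K ∙ sv K k)) := by
  intro hm
  obtain ⟨y, hy, z, hz, hyz⟩ := Submodule.mem_sup.mp hm
  obtain ⟨a, rfl⟩ := Submodule.mem_span_singleton.mp hy
  obtain ⟨b, rfl⟩ := Submodule.mem_span_singleton.mp hz
  have := congrFun hyz i
  simp [sv, Pi.single_apply, Ne.symm hij, Ne.symm hik] at this

lemma span_sv_ne {i j : Fin 4} (h : i ≠ j) : (K ∙ sv K i) ≠ (K ∙ sv K j) := fun e =>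
  notmem_span_single h (e ▸ Submodule.mem_span_singleton_self _)

/-- Point vertex. -/
def Pt (K : Type) [Field K] (i : Fin 4) : Vrt K :=
  ⟨K ∙ sv K i, Or.inl (finrank_span_singleton sv_ne_zero)⟩

/-- Line vertex. -/
def Ln (K : Type) [Field K] (i j : Fin 4) (hij : i ≠ j) (h : sB K (sv K i) (sv K j) = 0) :
    Vrt K :=
  ⟨(K ∙ sv K i) ⊔ (K ∙ sv K j),
    Or.inr ⟨rank_sup_two (finrank_span_singleton sv_ne_zero)
        (finrank_span_singleton sv_ne_zero) (span_sv_ne hij),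
      (TI_span_singleton _).sup (TI_span_singleton _) (span_orth h)⟩⟩

lemma rank_Pt {i : Fin 4} : finrank K (Pt K i).1 = 1 := finrank_span_singleton sv_ne_zero

lemma rank_Ln {i j : Fin 4} {hij : i ≠ j} {h : sB K (sv K i) (sv K j) = 0} :
    finrank K (Ln K i j hij h).1 = 2 :=
  rank_sup_two (finrank_span_singleton sv_ne_zero) (finrank_span_singleton sv_ne_zero)
    (span_sv_ne hij)

lemma Pt_ne_Ln {i j k : Fin 4} {hjk : j ≠ k} {h : sB K (sv K j) (sv K k) = 0} :
    Pt K i ≠ Ln K j k hjk h := by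
  intro e
  have := congrArg (fun v : Vrt K => finrank K v.1) e
  simp only [rank_Pt, rank_Ln] at this
  omega

lemma Pt_ne_Pt {i j : Fin 4} (h : i ≠ j) : Pt K i ≠ Pt K j :=
  fun e => span_sv_ne h (congrArg Subtype.val e)

lemma Ln_ne_Ln {i j k l : Fin 4} {hij : i ≠ j} {hkl : k ≠ l}
    {h1 : sB K (sv K i) (sv K j) = 0} {h2 : sB K (sv K k) (sv K l) = 0}
    (hik : i ≠ k) (hil : i ≠ l) : Ln K i j hij h1 ≠ Ln K k l hkl h2 := by
  intro e
  have : sv K i ∈ ((K ∙ sv K k) ⊔ (K ∙ sv K l)) := by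
    have hm : sv K i ∈ (Ln K i j hij h1).1 :=
      Submodule.mem_sup_left (Submodule.mem_span_singleton_self _)
    rwa [e] at hm
  exact notmem_span_pair hik hil this

lemma sB_sv02 : sB K (sv K 0) (sv K 2) = 0 := by simp [sB_apply, sv, Pi.single_apply]
lemma sB_sv21 : sB K (sv K 2) (sv K 1) = 0 := by simp [sB_apply, sv, Pi.single_apply]
lemma sB_sv13 : sB K (sv K 1) (sv K 3) = 0 := by simp [sB_apply, sv, Pi.single_apply]
lemma sB_sv30 : sB K (sv K 3) (sv K 0) = 0 := by simp [sB_apply, sv, Pi.single_apply]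

lemma adj_Pt_Ln_left {i j : Fin 4} {hij : i ≠ j} {h : sB K (sv K i) (sv K j) = 0} :
    (QG K).Adj (Pt K i) (Ln K i j hij h) :=
  adj_of_le rank_Pt rank_Ln le_sup_left

lemma adj_Pt_Ln_right {i j : Fin 4} {hij : i ≠ j} {h : sB K (sv K i) (sv K j) = 0} :
    (QG K).Adj (Pt K j) (Ln K i j hij h) :=
  adj_of_le rank_Pt rank_Ln le_sup_right

def L02 (K : Type) [Field K] : Vrt K := Ln K 0 2 (by decide) sB_sv02
def L21 (K : Type) [Field K] : Vrt K := Ln K 2 1 (by decide) sB_sv21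
def L13 (K : Type) [Field K] : Vrt K := Ln K 1 3 (by decide) sB_sv13
def L30 (K : Type) [Field K] : Vrt K := Ln K 3 0 (by decide) sB_sv30

/-- The explicit 8-cycle. -/
def cyc8 (K : Type) [Field K] : (QG K).Walk (Pt K 0) (Pt K 0) :=
  .cons (adj_Pt_Ln_left : (QG K).Adj (Pt K 0) (L02 K))
    (.cons ((adj_Pt_Ln_right : (QG K).Adj (Pt K 2) (L02 K)).symm)
      (.cons (adj_Pt_Ln_left : (QG K).Adj (Pt K 2) (L21 K))
        (.cons ((adj_Pt_Ln_right : (QG K).Adj (Pt K 1) (L21 K)).symm)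
          (.cons (adj_Pt_Ln_left : (QG K).Adj (Pt K 1) (L13 K))
            (.cons ((adj_Pt_Ln_right : (QG K).Adj (Pt K 3) (L13 K)).symm)
              (.cons (adj_Pt_Ln_left : (QG K).Adj (Pt K 3) (L30 K))
                (.cons ((adj_Pt_Ln_right : (QG K).Adj (Pt K 0) (L30 K)).symm) .nil)))))))

lemma cyc8_length : (cyc8 K).length = 8 := rfl

lemma Ln_ne_Ln' {i j k l : Fin 4} {hij : i ≠ j} {hkl : k ≠ l}
    {h1 : sB K (sv K i) (sv K j) = 0} {h2 : sB K (sv K k) (sv K l) = 0}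
    (hjk : j ≠ k) (hjl : j ≠ l) : Ln K i j hij h1 ≠ Ln K k l hkl h2 := by
  intro e
  have : sv K j ∈ ((K ∙ sv K k) ⊔ (K ∙ sv K l)) := by
    have hm : sv K j ∈ (Ln K i j hij h1).1 :=
      Submodule.mem_sup_right (Submodule.mem_span_singleton_self _)
    rwa [e] at hm
  exact notmem_span_pair hjk hjl this

lemma cyc8_support_tail_nodup : (cyc8 K).support.tail.Nodup := by
  simp only [cyc8, Walk.support_cons, Walk.support_nil, List.tail_cons]
  simp only [List.nodup_cons, List.mem_cons, List.not_mem_nil, or_false,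
    List.mem_singleton, List.nodup_nil, and_true, not_or]
  refine ⟨⟨?_, ?_, ?_, ?_, ?_, ?_, ?_⟩, ⟨?_, ?_, ?_, ?_, ?_, ?_⟩, ⟨?_, ?_, ?_, ?_, ?_⟩,
    ⟨?_, ?_, ?_, ?_⟩, ⟨?_, ?_, ?_⟩, ⟨?_, ?_⟩, ?_, not_false⟩
  · exact (Pt_ne_Ln).symm
  · exact Ln_ne_Ln (by decide) (by decide)
  · exact (Pt_ne_Ln).symm
  · exact Ln_ne_Ln (by decide) (by decide)
  · exact (Pt_ne_Ln).symm
  · exact Ln_ne_Ln' (by decide) (by decide)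
  · exact (Pt_ne_Ln).symm
  · exact Pt_ne_Ln
  · exact Pt_ne_Pt (by decide)
  · exact Pt_ne_Ln
  · exact Pt_ne_Pt (by decide)
  · exact Pt_ne_Ln
  · exact Pt_ne_Pt (by decide)
  · exact (Pt_ne_Ln).symm
  · exact Ln_ne_Ln (by decide) (by decide)
  · exact (Pt_ne_Ln).symm
  · exact Ln_ne_Ln (by decide) (by decide)
  · exact (Pt_ne_Ln).symm
  · exact Pt_ne_Ln
  · exact Pt_ne_Pt (by decide)
  · exact Pt_ne_Ln
  · exact Pt_ne_Pt (by decide)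
  · exact (Pt_ne_Ln).symm
  · exact Ln_ne_Ln (by decide) (by decide)
  · exact (Pt_ne_Ln).symm
  · exact Pt_ne_Ln
  · exact Pt_ne_Pt (by decide)
  · exact (Pt_ne_Ln).symm

lemma cyc8_isCycle : (cyc8 K).IsCycle := by
  rw [show cyc8 K = Walk.cons (adj_Pt_Ln_left : (QG K).Adj (Pt K 0) (L02 K))
    (.cons ((adj_Pt_Ln_right : (QG K).Adj (Pt K 2) (L02 K)).symm)
      (.cons (adj_Pt_Ln_left : (QG K).Adj (Pt K 2) (L21 K))
        (.cons ((adj_Pt_Ln_right : (QG K).Adj (Pt K 1) (L21 K)).symm)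
          (.cons (adj_Pt_Ln_left : (QG K).Adj (Pt K 1) (L13 K))
            (.cons ((adj_Pt_Ln_right : (QG K).Adj (Pt K 3) (L13 K)).symm)
              (.cons (adj_Pt_Ln_left : (QG K).Adj (Pt K 3) (L30 K))
                (.cons ((adj_Pt_Ln_right : (QG K).Adj (Pt K 0) (L30 K)).symm) .nil)))))))
    from rfl]
  rw [Walk.cons_isCycle_iff]
  constructor
  · rw [Walk.isPath_def]
    exact cyc8_support_tail_nodup
  · intro hmem
    have hPL : ∀ (i j k : Fin 4) (hjk : j ≠ k) (h : sB K (sv K j) (sv K k) = 0),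
        ¬ Pt K i = Ln K j k hjk h := fun i j k hjk h => Pt_ne_Ln
    have h02 : ¬ Pt K 0 = Pt K 2 := Pt_ne_Pt (by decide)
    have h01 : ¬ Pt K 0 = Pt K 1 := Pt_ne_Pt (by decide)
    have h03 : ¬ Pt K 0 = Pt K 3 := Pt_ne_Pt (by decide)
    have hl1 : ¬ (L02 K) = (L21 K) := Ln_ne_Ln (by decide) (by decide)
    have hl2 : ¬ (L02 K) = (L13 K) := Ln_ne_Ln (by decide) (by decide)
    have hl3 : ¬ (L02 K) = (L30 K) := Ln_ne_Ln' (by decide) (by decide)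
    simp only [Walk.edges_cons, Walk.edges_nil, List.mem_cons, List.not_mem_nil, or_false,
      Sym2.eq_iff] at hmem
    have hrk : ∀ (a b : Vrt K), finrank K a.1 = 1 → finrank K b.1 = 2 → ¬ a = b :=
      fun a b ha hb e => by rw [e] at ha; omega
    have r02 : finrank K (L02 K).1 = 2 := rank_Ln
    have r21 : finrank K (L21 K).1 = 2 := rank_Ln
    have r13 : finrank K (L13 K).1 = 2 := rank_Ln
    have r30 : finrank K (L30 K).1 = 2 := rank_Ln
    rcases hmem with (⟨h1,h2⟩|⟨h1,h2⟩)|(⟨h1,h2⟩|⟨h1,h2⟩)|(⟨h1,h2⟩|⟨h1,h2⟩)|(⟨h1,h2⟩|⟨h1,h2⟩)|(⟨h1,h2⟩|⟨h1,h2⟩)|(⟨h1,h2⟩|⟨h1,h2⟩)|(⟨h1,h2⟩|⟨h1,h2⟩)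
    · exact hrk _ _ rank_Pt r02 h1
    · exact h02 h1
    · exact h02 h1
    · exact hrk _ _ rank_Pt r21 h1
    · exact hrk _ _ rank_Pt r21 h1
    · exact h01 h1
    · exact h01 h1
    · exact hrk _ _ rank_Pt r13 h1
    · exact hrk _ _ rank_Pt r13 h1
    · exact h03 h1
    · exact h03 h1
    · exact hrk _ _ rank_Pt r30 h1
    · exact hrk _ _ rank_Pt r30 h1
    · exact hl3 h2

lemma egirth_upper : (QG K).egirth ≤ 8 := by
  have := cyc8_isCycle (K := K)
  calc (QG K).egirth ≤ ((cyc8 K).length : ℕ∞) := by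
        rw [SimpleGraph.egirth]
        exact iInf_le_of_le (Pt K 0) (iInf_le_of_le (cyc8 K) (iInf_le_of_le this le_rfl))
    _ = 8 := by rw [cyc8_length]; rfl

lemma girth_QG : (QG K).girth = 8 := by
  have h1 := egirth_lower (K := K)
  have h2 := egirth_upper (K := K)
  have : (QG K).egirth = 8 := le_antisymm h2 h1
  rw [SimpleGraph.girth, this]
  rfl

end EightCycle

section Completeness
open Module SimpleGraph Submodule

variable {K : Type} [Field K]

lemma edge_repr (e : (QG K).edgeSet) : ∃ (P L : Vrt K), finrank K P.1 = 1 ∧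
    finrank K L.1 = 2 ∧ (QG K).Adj P L ∧ (e : Sym2 (Vrt K)) = s(P, L) := by
  obtain ⟨val, he⟩ := e
  induction val with
  | _ a b =>
    rw [SimpleGraph.mem_edgeSet] at he
    rcases adj_cases he with ⟨h1, h2, -⟩ | ⟨h1, h2, -⟩
    · exact ⟨a, b, h1, h2, he, rfl⟩
    · exact ⟨b, a, h1, h2, he.symm, Sym2.eq_swap⟩

lemma walk_extend {V : Type*} {G : SimpleGraph V} {u v w : V} {n : ℕ}
    (h : G.Adj u v ∨ u = v) (hp : ∃ p : G.Walk v w, p.length ≤ n) :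
    ∃ p : G.Walk u w, p.length ≤ n + 1 := by
  obtain ⟨p, hl⟩ := hp
  rcases h with h | rfl
  · exact ⟨.cons h p, by simp [Walk.length_cons]; omega⟩
  · exact ⟨p, by omega⟩

lemma chain4 {V : Type*} [DecidableEq V] {G : SimpleGraph V} {x0 x1 x2 x3 x4 : V}
    (h1 : G.Adj x0 x1 ∨ x0 = x1) (h2 : G.Adj x1 x2 ∨ x1 = x2)
    (h3 : G.Adj x2 x3 ∨ x2 = x3) (h4 : G.Adj x3 x4 ∨ x3 = x4) (hne : x0 ≠ x4) :
    (G.power 4).Adj x0 x4 := by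
  have w0 : ∃ p : G.Walk x4 x4, p.length ≤ 0 := ⟨.nil, le_rfl⟩
  have w1 := walk_extend h4 w0
  have w2 := walk_extend h3 w1
  have w3 := walk_extend h2 w2
  have w4 := walk_extend h1 w3
  obtain ⟨p, hl⟩ := w4
  exact ⟨hne, p.bypass, p.bypass_isPath, p.length_bypass_le.trans hl⟩

lemma lg_adj_or_eq {e f : (QG K).edgeSet} (v : Vrt K)
    (hv1 : v ∈ (e : Sym2 (Vrt K))) (hv2 : v ∈ (f : Sym2 (Vrt K))) :
    (QG K).lineGraph.Adj e f ∨ e = f := by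
  by_cases h : e = f
  · exact Or.inr h
  · exact Or.inl (lineGraph_adj_iff_exists.mpr ⟨h, v, hv1, hv2⟩)

lemma power4_top : ((QG K).lineGraph.power 4) = (⊤ : SimpleGraph (QG K).edgeSet) := by
  classical
  ext e f
  rw [top_adj]
  constructor
  · exact fun h => h.1
  · intro hne
    obtain ⟨P, L, hP, hL, hadj, he⟩ := edge_repr e
    obtain ⟨P', L', hP', hL', hadj', hf⟩ := edge_repr f
    have hPe : P ∈ (e : Sym2 (Vrt K)) := by rw [he]; exact Sym2.mem_mk_left _ _
    have hLe : L ∈ (e : Sym2 (Vrt K)) := by rw [he]; exact Sym2.mem_mk_right _ _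
    have hP'f : P' ∈ (f : Sym2 (Vrt K)) := by rw [hf]; exact Sym2.mem_mk_left _ _
    have hL'f : L' ∈ (f : Sym2 (Vrt K)) := by rw [hf]; exact Sym2.mem_mk_right _ _
    by_cases hPL' : P.1 ≤ L'.1
    · -- middle edge {P, L'}
      set g : (QG K).edgeSet := ⟨s(P, L'), ((QG K).mem_edgeSet).mpr (adj_of_le hP hL' hPL')⟩
        with hg
      have m1 : P ∈ (g : Sym2 (Vrt K)) := Sym2.mem_mk_left _ _
      have m2 : L' ∈ (g : Sym2 (Vrt K)) := Sym2.mem_mk_right _ _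
      exact chain4 (lg_adj_or_eq P hPe m1) (lg_adj_or_eq L' m2 hL'f)
        (Or.inr rfl) (Or.inr rfl) hne
    · -- generic case via the quadrangle axiom
      obtain ⟨p, hp0, hPsp⟩ := rank_one_exists hP
      have hinf : ((sB K).orthogonal P.1 ⊓ L'.1) ≠ ⊥ := by
        intro hbot
        have h1 := Submodule.finrank_sup_add_finrank_inf_eq ((sB K).orthogonal P.1) L'.1
        rw [hbot, finrank_bot] at h1
        have h2 : finrank K ((sB K).orthogonal P.1) = 3 := by rw [finrank_orth, hP]
        have h3 : finrank K ((sB K).orthogonal P.1 ⊔ L'.1 : Submodule K (V4 K)) ≤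
            finrank K (V4 K) := Submodule.finrank_le _
        rw [finrank_V4] at h3
        omega
      obtain ⟨u, hu, hu0⟩ := Submodule.ne_bot_iff _ |>.mp hinf
      have huO : u ∈ (sB K).orthogonal P.1 := hu.1
      have huL' : u ∈ L'.1 := hu.2
      have huP : u ∉ P.1 := by
        intro hmem
        have hsp : (K ∙ u) ≤ P.1 := (Submodule.span_singleton_le_iff_mem _ _).mpr hmem
        have : (K ∙ u) = P.1 := Submodule.eq_of_le_of_finrank_le hsp
          (by rw [hP, finrank_span_singleton hu0])
        exact hPL' (this ▸ (Submodule.span_singleton_le_iff_mem _ _).mpr huL')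
      have hrankM : finrank K (P.1 ⊔ (K ∙ u) : Submodule K (V4 K)) = 2 := by
        rw [rank_sup_point huP, hP]
      have hTIM : TI (P.1 ⊔ (K ∙ u)) := by
        rw [hPsp]
        refine (TI_span_singleton p).sup (TI_span_singleton u) (span_orth ?_)
        exact huO p (hPsp ▸ Submodule.mem_span_singleton_self p)
      set Q0 : Vrt K := ⟨K ∙ u, Or.inl (finrank_span_singleton hu0)⟩ with hQ0
      set Mv : Vrt K := ⟨P.1 ⊔ (K ∙ u), Or.inr ⟨hrankM, hTIM⟩⟩ with hMv
      have ha : (QG K).Adj P Mv := adj_of_le hP hrankM le_sup_left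
      have hb : (QG K).Adj Q0 Mv := adj_of_le (finrank_span_singleton hu0) hrankM le_sup_right
      have hc : (QG K).Adj Q0 L' := adj_of_le (finrank_span_singleton hu0) hL'
        ((Submodule.span_singleton_le_iff_mem _ _).mpr huL')
      set ea : (QG K).edgeSet := ⟨s(P, Mv), ((QG K).mem_edgeSet).mpr ha⟩
      set eb : (QG K).edgeSet := ⟨s(Q0, Mv), ((QG K).mem_edgeSet).mpr hb⟩
      set ec : (QG K).edgeSet := ⟨s(Q0, L'), ((QG K).mem_edgeSet).mpr hc⟩
      refine chain4 (x1 := ea) (x2 := eb) (x3 := ec)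
        (lg_adj_or_eq P hPe (Sym2.mem_mk_left _ _))
        (lg_adj_or_eq Mv (Sym2.mem_mk_right _ _) (Sym2.mem_mk_right _ _))
        (lg_adj_or_eq Q0 (Sym2.mem_mk_left _ _) (Sym2.mem_mk_left _ _))
        (lg_adj_or_eq L' (Sym2.mem_mk_right _ _) hL'f) hne

end Completeness

section EdgeCount
open Module SimpleGraph Submodule

variable {K : Type} [Field K] [Fintype K]

lemma flag_bij : Function.Bijective
    (fun x : Σ P : {v : Vrt K // finrank K v.1 = 1}, ((QG K).neighborSet P.1) =>
      (⟨s(x.1.1, x.2.1), ((QG K).mem_edgeSet).mpr x.2.2⟩ : (QG K).edgeSet)) := by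
  constructor
  · rintro ⟨P, u⟩ ⟨P', u'⟩ h
    have h' := congrArg Subtype.val h
    simp only at h'
    rcases Sym2.eq_iff.mp h' with ⟨h1, h2⟩ | ⟨h1, h2⟩
    · have hP : P = P' := Subtype.ext h1
      subst hP
      have : u = u' := Subtype.ext h2
      rw [this]
    · -- P.1 = u'.1 : a point equals a line, contradiction
      exfalso
      have hr := (adj_resolve1 u'.2 P'.2).1
      have := P.2
      rw [h1] at this
      omega
  · rintro ⟨val, he⟩
    obtain ⟨P, L, hP, hL, hadj, heq⟩ := edge_repr ⟨val, he⟩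
    exact ⟨⟨⟨P, hP⟩, ⟨L, hadj⟩⟩, Subtype.ext heq.symm⟩

lemma card_edges : Nat.card (QG K).edgeSet =
    (Fintype.card K ^ 3 + Fintype.card K ^ 2 + Fintype.card K + 1) * (Fintype.card K + 1) := by
  classical
  haveI : Fintype (Vrt K) := Fintype.ofFinite _
  rw [← Nat.card_congr (Equiv.ofBijective _ (flag_bij (K := K)))]
  haveI : ∀ P : {v : Vrt K // finrank K v.1 = 1}, Fintype ((QG K).neighborSet P.1) :=
    fun P => Fintype.ofFinite _
  rw [Nat.card_eq_fintype_card, Fintype.card_sigma]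
  have hdeg : ∀ P : {v : Vrt K // finrank K v.1 = 1},
      Fintype.card ((QG K).neighborSet P.1) = Fintype.card K + 1 := by
    intro P
    rw [← Nat.card_eq_fintype_card, Nat.card_coe_set_eq]
    exact deg_point P.1 P.2
  rw [Finset.sum_congr rfl (fun P _ => hdeg P), Finset.sum_const, Finset.card_univ, smul_eq_mul]
  congr 1
  rw [← Nat.card_eq_fintype_card]
  exact card_points

end EdgeCount


/-- Proposition 5, second item: if `d - 1` is a prime power, there is a `d`-regular
bipartite graph `Q` of girth 8 with `χ'_4(Q) = d⁴ - 2d³ + 2d²`. -/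
theorem symplectic_quadrangle_incidence_graph_distance_colouring
    (d : ℕ) (h : ∃ p k : ℕ, p.Prime ∧ 0 < k ∧ d - 1 = p ^ k) :
    ∃ (V : Type) (_ : Fintype V) (Q : SimpleGraph V),
      (∀ v : V, (Q.neighborSet v).ncard = d) ∧ BipartiteGraph Q ∧ Q.girth = 8 ∧
      ((distChromIndex Q 4).toNat : ℤ) = (d : ℤ) ^ 4 - 2 * (d : ℤ) ^ 3 + 2 * (d : ℤ) ^ 2 := by
  classical
  obtain ⟨p, k, hp, hk, hd⟩ := h
  haveI : Fact p.Prime := ⟨hp⟩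
  set K := GaloisField p k with hK
  haveI : Fintype K := Fintype.ofFinite _
  have hcard : Fintype.card K = p ^ k := by
    rw [← Nat.card_eq_fintype_card]
    exact GaloisField.card p k (by omega)
  set q := Fintype.card K with hq
  have hq2 : 2 ≤ q := two_le_cardK
  have hdq : d = q + 1 := by
    have h1 : 1 < p ^ k := Nat.one_lt_pow (by omega) hp.one_lt
    omega
  haveI : Fintype (Vrt K) := Fintype.ofFinite _
  refine ⟨Vrt K, inferInstance, QG K, ?_, bipartite_QG, girth_QG, ?_⟩
  · intro v
    rcases vrt_rank (a := v) with hv | hv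
    · rw [deg_point v hv, hdq]
    · rw [deg_line v hv, hdq]
  · have hpow := power4_top (K := K)
    haveI : Fintype ((QG K).edgeSet) := Fintype.ofFinite _
    have hchrom : distChromIndex (QG K) 4 = (Fintype.card (QG K).edgeSet : ℕ∞) := by
      rw [distChromIndex, hpow, SimpleGraph.chromaticNumber_top]
    rw [hchrom]
    have hc : Fintype.card (QG K).edgeSet = (q ^ 3 + q ^ 2 + q + 1) * (q + 1) := by
      rw [← Nat.card_eq_fintype_card]
      exact card_edges
    rw [ENat.toNat_coe, hc, hdq]
    push_cast
    ring
end
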